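/- arXiv:2009.05733 — 3 statements merged into one kernel-verified Lean document; each statement's English description precedes it below -/
import Mathlib

section
/- Let a < b be real numbers and let y₀ ∈ [a,b]. Let φ : [a,b] → ℝ be such that there exists φ' ∈ L²(a,b) with φ(x) = φ(a) + ∫_a^x φ'(t) dt for all x ∈ [a,b], and assume φ(y₀) = 0. Then ∫_a^b φ(y)²/(y−y₀)² dy + (1/max(b−y₀, y₀−a)) · ∫_a^b φ(y)²/|y−y₀| dy ≤ 4 ∫_a^b φ'(y)² dy; in particular both integrals on the left are finite. -/
open MeasureTheory Set ENNReal

namespace HardyAux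

lemma ofReal_integral_le {α : Type*} {m : MeasurableSpace α} (μ : Measure α) (f : α → ℝ)
    (hf : 0 ≤ᵐ[μ] f) :
    ENNReal.ofReal (∫ x, f x ∂μ) ≤ ∫⁻ x, ENNReal.ofReal (f x) ∂μ := by
  by_cases hi : Integrable f μ
  · exact le_of_eq (ofReal_integral_eq_lintegral_ofReal hi hf)
  · rw [integral_undef hi]; simp

lemma lint_rpow {c d : ℝ} (r : ℝ) (hc : 0 ≤ c) (hcd : c ≤ d)
    (h : -1 < r ∨ (r ≠ -1 ∧ 0 < c)) :
    ∫⁻ y in Ioo c d, ENNReal.ofReal (y ^ r) =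
      ENNReal.ofReal ((d ^ (r + 1) - c ^ (r + 1)) / (r + 1)) := by
  have h' : -1 < r ∨ (r ≠ -1 ∧ (0:ℝ) ∉ Set.uIcc c d) := by
    rcases h with h | ⟨h1, h2⟩
    · exact Or.inl h
    · refine Or.inr ⟨h1, ?_⟩
      rw [Set.uIcc_of_le hcd]
      intro hmem
      exact absurd hmem.1 (by linarith)
  have hii : IntervalIntegrable (fun y : ℝ => y ^ r) volume c d := by
    rcases h' with h | ⟨h1, h2⟩
    · exact intervalIntegral.intervalIntegrable_rpow' h
    · exact intervalIntegral.intervalIntegrable_rpow (Or.inr (by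
        intro hx; exact h2 (by rwa [Set.mem_uIcc] at hx ⊢)))
  have hint : IntegrableOn (fun y : ℝ => y ^ r) (Ioo c d) volume := by
    have := intervalIntegrable_iff.mp hii
    rw [Set.uIoc_of_le hcd] at this
    exact this.mono_set Ioo_subset_Ioc_self
  rw [← ofReal_integral_eq_lintegral_ofReal hint ?_]
  · congr 1
    rw [← MeasureTheory.integral_Ioc_eq_integral_Ioo,
      ← intervalIntegral.integral_of_le hcd, integral_rpow h']
  · filter_upwards [ae_restrict_mem measurableSet_Ioo] with y hy
    exact Real.rpow_nonneg (le_of_lt (lt_of_le_of_lt hc hy.1)) r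



lemma lint1 {y : ℝ} (hy : 0 < y) :
    ∫⁻ t in Ioo 0 y, ENNReal.ofReal (t ^ (-(1:ℝ)/2)) = ENNReal.ofReal (2 * y ^ ((1:ℝ)/2)) := by
  rw [lint_rpow (-(1:ℝ)/2) le_rfl hy.le (Or.inl (by norm_num))]
  congr 1
  rw [show (-(1:ℝ)/2 + 1) = 1/2 by norm_num, Real.zero_rpow (by norm_num)]
  ring_nf

lemma lint2 {t ℓ : ℝ} (ht : 0 < t) (htl : t ≤ ℓ) :
    ∫⁻ y in Ioo t ℓ, ENNReal.ofReal (2 * y ^ (-(3:ℝ)/2)) =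
      ENNReal.ofReal (4 * (t ^ (-(1:ℝ)/2) - ℓ ^ (-(1:ℝ)/2))) := by
  have : ∀ y : ℝ, ENNReal.ofReal (2 * y ^ (-(3:ℝ)/2)) =
      ENNReal.ofReal 2 * ENNReal.ofReal (y ^ (-(3:ℝ)/2)) := fun y => by
    rw [← ENNReal.ofReal_mul (by norm_num)]
  simp_rw [this]
  rw [lintegral_const_mul' _ _ ENNReal.ofReal_ne_top,
    lint_rpow (-(3:ℝ)/2) ht.le htl (Or.inr ⟨by norm_num, ht⟩),
    ← ENNReal.ofReal_mul (by norm_num)]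
  congr 1
  rw [show (-(3:ℝ)/2 + 1) = -(1/2) by norm_num]
  rw [show (-(1:ℝ)/2) = -(1/2) by norm_num]
  ring_nf

lemma lint3 {t ℓ : ℝ} (ht : 0 ≤ t) (hℓ : 0 < ℓ) :
    ∫⁻ y in Ioo t ℓ, ENNReal.ofReal (2 * y ^ (-(1:ℝ)/2)) ≤
      ENNReal.ofReal (4 * ℓ ^ ((1:ℝ)/2)) := by
  have hsub : Ioo t ℓ ⊆ Ioo 0 ℓ := fun x hx => ⟨lt_of_le_of_lt ht hx.1, hx.2⟩
  refine le_trans (lintegral_mono_set hsub) ?_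
  have : ∀ y : ℝ, ENNReal.ofReal (2 * y ^ (-(1:ℝ)/2)) =
      ENNReal.ofReal 2 * ENNReal.ofReal (y ^ (-(1:ℝ)/2)) := fun y => by
    rw [← ENNReal.ofReal_mul (by norm_num)]
  simp_rw [this]
  rw [lintegral_const_mul' _ _ ENNReal.ofReal_ne_top, lint1 hℓ,
    ← ENNReal.ofReal_mul (by norm_num)]
  apply ENNReal.ofReal_le_ofReal
  nlinarith [Real.rpow_nonneg hℓ.le ((1:ℝ)/2)]





lemma cs {f : ℝ → ℝ} (hf : Measurable f) {y : ℝ} (hy : 0 < y) :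
    ENNReal.ofReal ((∫ t in (0:ℝ)..y, f t) ^ 2) ≤
      ENNReal.ofReal (2 * y ^ ((1:ℝ)/2)) *
        ∫⁻ t in Ioo 0 y, ENNReal.ofReal (t ^ ((1:ℝ)/2) * f t ^ 2) := by
  set μ := volume.restrict (Ioo 0 y) with hμ
  have h1 : |∫ t in (0:ℝ)..y, f t| ≤ ∫ t in Ioo 0 y, |f t| := by
    rw [intervalIntegral.integral_of_le hy.le]
    calc |∫ t in Ioc 0 y, f t| ≤ ∫ t in Ioc 0 y, |f t| := by
          simpa [Real.norm_eq_abs] using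
            norm_integral_le_integral_norm (μ := volume.restrict (Ioc 0 y)) f
      _ = ∫ t in Ioo 0 y, |f t| := by rw [MeasureTheory.integral_Ioc_eq_integral_Ioo]
  have h2 : ENNReal.ofReal ((∫ t in (0:ℝ)..y, f t) ^ 2) ≤
      (∫⁻ t, ENNReal.ofReal |f t| ∂μ) ^ 2 := by
    have hsq : (∫ t in (0:ℝ)..y, f t) ^ 2 ≤ (∫ t in Ioo 0 y, |f t|) ^ 2 := by
      rw [← sq_abs]
      exact pow_le_pow_left₀ (abs_nonneg _) h1 2
    refine le_trans (ENNReal.ofReal_le_ofReal hsq) ?_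
    rw [ENNReal.ofReal_pow (integral_nonneg (fun t => abs_nonneg _))]
    exact pow_le_pow_left' (ofReal_integral_le μ _ (ae_of_all _ fun t => abs_nonneg _)) 2
  set u := fun t : ℝ => ENNReal.ofReal (t ^ (-(1:ℝ)/4)) with hu_def
  set v := fun t : ℝ => ENNReal.ofReal (t ^ ((1:ℝ)/4) * |f t|) with hv_def
  have hsplit : ∫⁻ t, ENNReal.ofReal |f t| ∂μ = ∫⁻ t, (u * v) t ∂μ := by
    apply lintegral_congr_ae
    filter_upwards [ae_restrict_mem measurableSet_Ioo] with t ht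
    have ht0 : 0 < t := ht.1
    simp only [Pi.mul_apply, hu_def, hv_def]
    rw [← ENNReal.ofReal_mul (Real.rpow_nonneg ht0.le _)]
    congr 1
    rw [← mul_assoc, ← Real.rpow_add ht0]
    norm_num
  have hum : AEMeasurable u μ := by rw [hu_def]; fun_prop
  have hvm : AEMeasurable v μ := by rw [hv_def]; fun_prop
  have holder := ENNReal.lintegral_mul_le_Lp_mul_Lq μ (p := 2) (q := 2)
    ⟨by norm_num, by norm_num, by norm_num⟩ hum hvm
  have hA : ∫⁻ t, u t ^ (2:ℝ) ∂μ = ENNReal.ofReal (2 * y ^ ((1:ℝ)/2)) := by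
    have hc : ∀ᵐ t ∂μ, u t ^ (2:ℝ) = ENNReal.ofReal (t ^ (-(1:ℝ)/2)) := by
      filter_upwards [ae_restrict_mem measurableSet_Ioo] with t ht
      have ht0 : 0 < t := ht.1
      rw [hu_def, ENNReal.ofReal_rpow_of_nonneg (Real.rpow_nonneg ht0.le _) (by norm_num),
        ← Real.rpow_mul ht0.le]
      norm_num
    rw [lintegral_congr_ae hc, hμ, lint1 hy]
  have hB : ∫⁻ t, v t ^ (2:ℝ) ∂μ = ∫⁻ t in Ioo 0 y, ENNReal.ofReal (t ^ ((1:ℝ)/2) * f t ^ 2) := by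
    rw [← hμ]
    apply lintegral_congr_ae
    filter_upwards [ae_restrict_mem measurableSet_Ioo] with t ht
    have ht0 : 0 < t := ht.1
    rw [hv_def, ENNReal.ofReal_rpow_of_nonneg (mul_nonneg (Real.rpow_nonneg ht0.le _)
      (abs_nonneg _)) (by norm_num)]
    congr 1
    rw [Real.mul_rpow (Real.rpow_nonneg ht0.le _) (abs_nonneg _),
      ← Real.rpow_mul ht0.le]
    have habs : |f t| ^ (2:ℝ) = f t ^ 2 := by
      rw [show (2:ℝ) = ((2:ℕ):ℝ) from by norm_num, Real.rpow_natCast, sq_abs]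
    rw [habs]
    norm_num
  have hX : ∫⁻ t, ENNReal.ofReal |f t| ∂μ ≤
      (ENNReal.ofReal (2 * y ^ ((1:ℝ)/2))) ^ ((1:ℝ)/2) *
        (∫⁻ t in Ioo 0 y, ENNReal.ofReal (t ^ ((1:ℝ)/2) * f t ^ 2)) ^ ((1:ℝ)/2) := by
    rw [hsplit]
    calc ∫⁻ t, (u * v) t ∂μ ≤ (∫⁻ t, u t ^ (2:ℝ) ∂μ) ^ (1/(2:ℝ)) *
          (∫⁻ t, v t ^ (2:ℝ) ∂μ) ^ (1/(2:ℝ)) := holder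
      _ = _ := by rw [hA, hB]
  refine le_trans h2 ?_
  calc (∫⁻ t, ENNReal.ofReal |f t| ∂μ) ^ 2
      ≤ ((ENNReal.ofReal (2 * y ^ ((1:ℝ)/2))) ^ ((1:ℝ)/2) *
        (∫⁻ t in Ioo 0 y, ENNReal.ofReal (t ^ ((1:ℝ)/2) * f t ^ 2)) ^ ((1:ℝ)/2)) ^ 2 :=
        pow_le_pow_left' hX 2
    _ = _ := by
        rw [mul_pow, ← ENNReal.rpow_natCast (_ ^ ((1:ℝ)/2)) 2, ← ENNReal.rpow_natCast
          ((∫⁻ t in Ioo 0 y, ENNReal.ofReal (t ^ ((1:ℝ)/2) * f t ^ 2)) ^ ((1:ℝ)/2)) 2,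
          ← ENNReal.rpow_mul, ← ENNReal.rpow_mul]
        norm_num [ENNReal.rpow_one]
        rfl

lemma swap_lemma {ℓ : ℝ} (g K : ℝ → ℝ≥0∞) (hg : Measurable g) (hK : Measurable K) :
    ∫⁻ y in Ioo 0 ℓ, K y * ∫⁻ t in Ioo 0 y, g t =
      ∫⁻ t in Ioo 0 ℓ, g t * ∫⁻ y in Ioo t ℓ, K y := by
  have key1 : ∀ y ∈ Ioo (0:ℝ) ℓ,
      K y * ∫⁻ t in Ioo 0 y, g t =
        ∫⁻ t in Ioo 0 ℓ, (if t < y then K y * g t else 0) := by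
    intro y hy
    have : ∀ t : ℝ, (if t < y then K y * g t else 0) =
        (Iio y).indicator (fun t => K y * g t) t := fun t => by
      simp [Set.indicator_apply, Set.mem_Iio]
    simp_rw [this]
    rw [lintegral_indicator measurableSet_Iio, Measure.restrict_restrict measurableSet_Iio]
    rw [show Iio y ∩ Ioo 0 ℓ = Ioo 0 y by
      rw [Set.inter_comm, Set.Ioo_inter_Iio, min_eq_right hy.2.le]]
    rw [lintegral_const_mul _ hg]
  have key2 : ∀ t ∈ Ioo (0:ℝ) ℓ,
      g t * ∫⁻ y in Ioo t ℓ, K y =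
        ∫⁻ y in Ioo 0 ℓ, (if t < y then K y * g t else 0) := by
    intro t ht
    have : ∀ y : ℝ, (if t < y then K y * g t else 0) =
        (Ioi t).indicator (fun y => g t * K y) y := fun y => by
      simp [Set.indicator_apply, Set.mem_Ioi, mul_comm]
    simp_rw [this]
    rw [lintegral_indicator measurableSet_Ioi, Measure.restrict_restrict measurableSet_Ioi]
    rw [show Ioi t ∩ Ioo 0 ℓ = Ioo t ℓ by
      rw [Set.inter_comm, Set.Ioo_inter_Ioi, max_eq_right ht.1.le]]
    rw [lintegral_const_mul _ hK]
  rw [setLIntegral_congr_fun measurableSet_Ioo key1,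
    setLIntegral_congr_fun measurableSet_Ioo key2]
  exact lintegral_lintegral_swap (Measurable.aemeasurable (by
    exact Measurable.ite (measurableSet_lt measurable_snd measurable_fst)
      ((hK.comp measurable_fst).mul (hg.comp measurable_snd)) measurable_const))









lemma hardy_core {ℓ M : ℝ} (hℓ : 0 < ℓ) (hM : ℓ ≤ M) {f : ℝ → ℝ} (hf : Measurable f) :
    (∫⁻ y in Ioo 0 ℓ, ENNReal.ofReal ((∫ t in (0:ℝ)..y, f t) ^ 2 / y ^ 2)) +
      ENNReal.ofReal (1 / M) *
        (∫⁻ y in Ioo 0 ℓ, ENNReal.ofReal ((∫ t in (0:ℝ)..y, f t) ^ 2 / y)) ≤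
      4 * ∫⁻ t in Ioo 0 ℓ, ENNReal.ofReal (f t ^ 2) := by
  have hM0 : 0 < M := lt_of_lt_of_le hℓ hM
  set g : ℝ → ℝ≥0∞ := fun t => ENNReal.ofReal (t ^ ((1:ℝ)/2) * f t ^ 2) with hg_def
  have hgm : Measurable g := by rw [hg_def]; fun_prop
  set K₁ : ℝ → ℝ≥0∞ := fun y => ENNReal.ofReal (2 * y ^ (-(3:ℝ)/2)) with hK1_def
  set K₂ : ℝ → ℝ≥0∞ := fun y => ENNReal.ofReal (2 * y ^ (-(1:ℝ)/2)) with hK2_def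
  have hK1m : Measurable K₁ := by rw [hK1_def]; fun_prop
  have hK2m : Measurable K₂ := by rw [hK2_def]; fun_prop
  -- pointwise bounds
  have stepA : ∀ y ∈ Ioo (0:ℝ) ℓ,
      ENNReal.ofReal ((∫ t in (0:ℝ)..y, f t) ^ 2 / y ^ 2) ≤ K₁ y * ∫⁻ t in Ioo 0 y, g t := by
    intro y hy
    have hy0 : 0 < y := hy.1
    have h1 : ((∫ t in (0:ℝ)..y, f t) ^ 2 / y ^ 2) =
        ((∫ t in (0:ℝ)..y, f t) ^ 2) * (y ^ 2)⁻¹ := by ring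
    rw [h1, ENNReal.ofReal_mul (sq_nonneg _)]
    calc ENNReal.ofReal ((∫ t in (0:ℝ)..y, f t) ^ 2) * ENNReal.ofReal ((y ^ 2)⁻¹)
        ≤ (ENNReal.ofReal (2 * y ^ ((1:ℝ)/2)) * ∫⁻ t in Ioo 0 y, g t) *
            ENNReal.ofReal ((y ^ 2)⁻¹) := by
          exact mul_le_mul_left (cs hf hy0) _
      _ = K₁ y * ∫⁻ t in Ioo 0 y, g t := by
          rw [mul_right_comm]
          congr 1
          rw [hK1_def, ← ENNReal.ofReal_mul (by positivity)]
          congr 1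
          have : (y:ℝ) ^ (2:ℕ) = y ^ ((2:ℕ):ℝ) := (Real.rpow_natCast y 2).symm
          rw [this, ← Real.rpow_neg hy0.le, mul_comm (2 * _), ← mul_assoc,
            mul_comm (y ^ (-((2:ℕ):ℝ))), mul_assoc, ← Real.rpow_add hy0]
          norm_num
  have stepB : ∀ y ∈ Ioo (0:ℝ) ℓ,
      ENNReal.ofReal ((∫ t in (0:ℝ)..y, f t) ^ 2 / y) ≤ K₂ y * ∫⁻ t in Ioo 0 y, g t := by
    intro y hy
    have hy0 : 0 < y := hy.1
    have h1 : ((∫ t in (0:ℝ)..y, f t) ^ 2 / y) =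
        ((∫ t in (0:ℝ)..y, f t) ^ 2) * y⁻¹ := by ring
    rw [h1, ENNReal.ofReal_mul (sq_nonneg _)]
    calc ENNReal.ofReal ((∫ t in (0:ℝ)..y, f t) ^ 2) * ENNReal.ofReal (y⁻¹)
        ≤ (ENNReal.ofReal (2 * y ^ ((1:ℝ)/2)) * ∫⁻ t in Ioo 0 y, g t) *
            ENNReal.ofReal (y⁻¹) := mul_le_mul_left (cs hf hy0) _
      _ = K₂ y * ∫⁻ t in Ioo 0 y, g t := by
          rw [mul_right_comm]
          congr 1
          rw [hK2_def, ← ENNReal.ofReal_mul (by positivity)]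
          congr 1
          have : (y:ℝ)⁻¹ = y ^ (-(1:ℝ)) := by
            rw [Real.rpow_neg hy0.le, Real.rpow_one]
          rw [this, mul_assoc, ← Real.rpow_add hy0]
          norm_num
  -- integrate
  have estA : (∫⁻ y in Ioo 0 ℓ, ENNReal.ofReal ((∫ t in (0:ℝ)..y, f t) ^ 2 / y ^ 2)) ≤
      ∫⁻ t in Ioo 0 ℓ, g t * ENNReal.ofReal (4 * (t ^ (-(1:ℝ)/2) - ℓ ^ (-(1:ℝ)/2))) := by
    calc (∫⁻ y in Ioo 0 ℓ, ENNReal.ofReal ((∫ t in (0:ℝ)..y, f t) ^ 2 / y ^ 2))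
        ≤ ∫⁻ y in Ioo 0 ℓ, K₁ y * ∫⁻ t in Ioo 0 y, g t := by
          refine lintegral_mono_ae ?_
          exact (ae_restrict_iff' measurableSet_Ioo).2 (ae_of_all _ stepA)
      _ = ∫⁻ t in Ioo 0 ℓ, g t * ∫⁻ y in Ioo t ℓ, K₁ y := swap_lemma g K₁ hgm hK1m
      _ = ∫⁻ t in Ioo 0 ℓ, g t * ENNReal.ofReal (4 * (t ^ (-(1:ℝ)/2) - ℓ ^ (-(1:ℝ)/2))) := by
          refine setLIntegral_congr_fun measurableSet_Ioo (fun t ht => ?_)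
          rw [hK1_def, lint2 ht.1 ht.2.le]
  have estB : (∫⁻ y in Ioo 0 ℓ, ENNReal.ofReal ((∫ t in (0:ℝ)..y, f t) ^ 2 / y)) ≤
      ∫⁻ t in Ioo 0 ℓ, g t * ENNReal.ofReal (4 * ℓ ^ ((1:ℝ)/2)) := by
    calc (∫⁻ y in Ioo 0 ℓ, ENNReal.ofReal ((∫ t in (0:ℝ)..y, f t) ^ 2 / y))
        ≤ ∫⁻ y in Ioo 0 ℓ, K₂ y * ∫⁻ t in Ioo 0 y, g t := by
          refine lintegral_mono_ae ?_
          exact (ae_restrict_iff' measurableSet_Ioo).2 (ae_of_all _ stepB)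
      _ = ∫⁻ t in Ioo 0 ℓ, g t * ∫⁻ y in Ioo t ℓ, K₂ y := swap_lemma g K₂ hgm hK2m
      _ ≤ ∫⁻ t in Ioo 0 ℓ, g t * ENNReal.ofReal (4 * ℓ ^ ((1:ℝ)/2)) := by
          refine lintegral_mono_ae ((ae_restrict_iff' measurableSet_Ioo).2
            (ae_of_all _ fun t ht => ?_))
          exact mul_le_mul_right (hK2_def ▸ lint3 ht.1.le hℓ) _
  -- combine
  calc (∫⁻ y in Ioo 0 ℓ, ENNReal.ofReal ((∫ t in (0:ℝ)..y, f t) ^ 2 / y ^ 2)) +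
        ENNReal.ofReal (1 / M) *
          (∫⁻ y in Ioo 0 ℓ, ENNReal.ofReal ((∫ t in (0:ℝ)..y, f t) ^ 2 / y))
      ≤ (∫⁻ t in Ioo 0 ℓ, g t * ENNReal.ofReal (4 * (t ^ (-(1:ℝ)/2) - ℓ ^ (-(1:ℝ)/2)))) +
          ENNReal.ofReal (1 / M) * ∫⁻ t in Ioo 0 ℓ, g t * ENNReal.ofReal (4 * ℓ ^ ((1:ℝ)/2)) :=
        add_le_add estA (mul_le_mul_right estB _)
    _ = ∫⁻ t in Ioo 0 ℓ, (g t * ENNReal.ofReal (4 * (t ^ (-(1:ℝ)/2) - ℓ ^ (-(1:ℝ)/2))) +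
          ENNReal.ofReal (1 / M) * (g t * ENNReal.ofReal (4 * ℓ ^ ((1:ℝ)/2)))) := by
        rw [← lintegral_const_mul' _ _ ENNReal.ofReal_ne_top,
          ← lintegral_add_left (f := fun t : ℝ => g t * ENNReal.ofReal (4 * (t ^ (-(1:ℝ)/2) -
            ℓ ^ (-(1:ℝ)/2)))) (hgm.mul (by fun_prop :
            Measurable fun t : ℝ => ENNReal.ofReal (4 * (t ^ (-(1:ℝ)/2) - ℓ ^ (-(1:ℝ)/2)))))]
    _ ≤ ∫⁻ t in Ioo 0 ℓ, 4 * ENNReal.ofReal (f t ^ 2) := by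
        refine lintegral_mono_ae ((ae_restrict_iff' measurableSet_Ioo).2
          (ae_of_all _ fun t ht => ?_))
        have ht0 : 0 < t := ht.1
        have htl : t ≤ ℓ := ht.2.le
        have hc1 : (0:ℝ) ≤ 4 * (t ^ (-(1:ℝ)/2) - ℓ ^ (-(1:ℝ)/2)) := by
          have h := Real.rpow_le_rpow_of_nonpos ht0 htl (by norm_num : -(1:ℝ)/2 ≤ 0)
          linarith
        have key : ENNReal.ofReal (4 * (t ^ (-(1:ℝ)/2) - ℓ ^ (-(1:ℝ)/2))) +
            ENNReal.ofReal (1 / M) * ENNReal.ofReal (4 * ℓ ^ ((1:ℝ)/2)) ≤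
            ENNReal.ofReal (4 * t ^ (-(1:ℝ)/2)) := by
          rw [← ENNReal.ofReal_mul (by positivity), ← ENNReal.ofReal_add hc1 (by positivity)]
          apply ENNReal.ofReal_le_ofReal
          have hs : (0:ℝ) < ℓ ^ ((1:ℝ)/2) := Real.rpow_pos_of_pos hℓ _
          have hss : ℓ ^ ((1:ℝ)/2) * ℓ ^ ((1:ℝ)/2) = ℓ := by
            rw [← Real.rpow_add hℓ]; norm_num
          have hinv : ℓ ^ (-(1:ℝ)/2) * ℓ ^ ((1:ℝ)/2) = 1 := by
            rw [← Real.rpow_add hℓ]; norm_num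
          have hsi : ℓ ^ (-(1:ℝ)/2) = (ℓ ^ ((1:ℝ)/2))⁻¹ := eq_inv_of_mul_eq_one_left hinv
          have hkey : 1 / M * (4 * ℓ ^ ((1:ℝ)/2)) ≤ 4 * ℓ ^ (-(1:ℝ)/2) := by
            rw [hsi, show 1 / M * (4 * ℓ ^ ((1:ℝ)/2)) = (4 * ℓ ^ ((1:ℝ)/2)) / M by ring,
              show 4 * (ℓ ^ ((1:ℝ)/2))⁻¹ = 4 / ℓ ^ ((1:ℝ)/2) by ring,
              div_le_div_iff₀ hM0 hs]
            nlinarith [hss, hM]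
          linarith
        calc g t * ENNReal.ofReal (4 * (t ^ (-(1:ℝ)/2) - ℓ ^ (-(1:ℝ)/2))) +
              ENNReal.ofReal (1 / M) * (g t * ENNReal.ofReal (4 * ℓ ^ ((1:ℝ)/2)))
            = g t * (ENNReal.ofReal (4 * (t ^ (-(1:ℝ)/2) - ℓ ^ (-(1:ℝ)/2))) +
              ENNReal.ofReal (1 / M) * ENNReal.ofReal (4 * ℓ ^ ((1:ℝ)/2))) := by ring
          _ ≤ g t * ENNReal.ofReal (4 * t ^ (-(1:ℝ)/2)) := mul_le_mul_right key _
          _ = 4 * ENNReal.ofReal (f t ^ 2) := by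
              rw [hg_def, ← ENNReal.ofReal_mul (by positivity)]
              rw [show t ^ ((1:ℝ)/2) * f t ^ 2 * (4 * t ^ (-(1:ℝ)/2)) =
                4 * (t ^ ((1:ℝ)/2) * t ^ (-(1:ℝ)/2)) * f t ^ 2 by ring, ← Real.rpow_add ht0]
              norm_num
    _ = 4 * ∫⁻ t in Ioo 0 ℓ, ENNReal.ofReal (f t ^ 2) :=
        lintegral_const_mul' _ _ (by norm_num)

lemma mp_sub_left (g : ℝ) : MeasurePreserving (fun t : ℝ => g - t) volume volume := by
  have h1 : MeasurePreserving (fun t : ℝ => -t) volume volume :=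
    Measure.measurePreserving_neg volume
  have h2 : MeasurePreserving (fun t : ℝ => g + t) volume volume :=
    measurePreserving_add_left volume g
  have := h2.comp h1
  simpa [Function.comp_def, sub_eq_add_neg] using this

end HardyAux
/-- **Hardy type inequality** (Lemma 3.1).  If `φ ∈ H¹(a,b)` (i.e. `φ` is the primitive of an
`L²` function `φ'`) vanishes at some `y₀ ∈ [a,b]`, then
`‖φ/(y−y₀)‖²_{L²} + (max(b−y₀,y₀−a))⁻¹ ∫ φ²/|y−y₀| ≤ 4‖φ'‖²_{L²}`;
in particular both integrals on the left-hand side are finite. -/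
theorem hardy_type_inequality
    (a b y₀ : ℝ) (hab : a < b) (hy₀ : y₀ ∈ Set.Icc a b)
    (φ φ' : ℝ → ℝ)
    (hφ'L2 : MeasureTheory.MemLp φ' 2 (volume.restrict (Set.Ioo a b)))
    (hφ : ∀ x ∈ Set.Icc a b, φ x = φ a + ∫ t in a..x, φ' t)
    (hzero : φ y₀ = 0) :
    IntegrableOn (fun y => (φ y) ^ 2 / (y - y₀) ^ 2) (Set.Ioo a b) ∧
    IntegrableOn (fun y => (φ y) ^ 2 / |y - y₀|) (Set.Ioo a b) ∧
    (∫ y in Set.Ioo a b, (φ y) ^ 2 / (y - y₀) ^ 2) +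
        (1 / max (b - y₀) (y₀ - a)) * (∫ y in Set.Ioo a b, (φ y) ^ 2 / |y - y₀|)
      ≤ 4 * ∫ y in Set.Ioo a b, (φ' y) ^ 2 := by
  obtain ⟨hay, hyb⟩ := hy₀
  set M := max (b - y₀) (y₀ - a) with hM_def
  have hM0 : 0 < M := by
    rcases lt_or_ge y₀ b with h | h
    · exact lt_max_of_lt_left (by linarith)
    · have : y₀ = b := le_antisymm hyb h
      exact lt_max_of_lt_right (by linarith)
  have hsm : AEStronglyMeasurable φ' (volume.restrict (Ioo a b)) := hφ'L2.aestronglyMeasurable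
  set f₀ : ℝ → ℝ := hsm.aemeasurable.mk φ' with hf₀_def
  have hf₀m : Measurable f₀ := hsm.aemeasurable.measurable_mk
  have hae : φ' =ᵐ[volume.restrict (Ioo a b)] f₀ := hsm.aemeasurable.ae_eq_mk
  haveI hfinm : IsFiniteMeasure (volume.restrict (Ioo a b)) := by
    constructor
    rw [Measure.restrict_apply_univ, Real.volume_Ioo]
    exact ENNReal.ofReal_lt_top
  have hφ'Ioo : IntegrableOn φ' (Ioo a b) volume := hφ'L2.integrable one_le_two
  have hφ'int : IntegrableOn φ' (Icc a b) volume := by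
    rwa [IntegrableOn, Measure.restrict_congr_set Ioo_ae_eq_Icc] at hφ'Ioo
  have hsub : ∀ {u v : ℝ}, u ∈ Icc a b → v ∈ Icc a b → IntervalIntegrable φ' volume u v := by
    intro u v hu hv
    rw [intervalIntegrable_iff]
    apply hφ'int.mono_set
    intro t ht
    rw [Set.mem_uIoc] at ht
    rcases ht with ⟨h1, h2⟩ | ⟨h1, h2⟩ <;>
      exact ⟨by linarith [hu.1, hv.1], by linarith [hu.2, hv.2]⟩
  have hrep : ∀ x ∈ Icc a b, ∀ z ∈ Icc a b, φ z - φ x = ∫ t in x..z, φ' t := by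
    intro x hx z hz
    rw [hφ x hx, hφ z hz]
    have h := intervalIntegral.integral_interval_sub_left
      (hsub (left_mem_Icc.2 hab.le) hz) (hsub (left_mem_Icc.2 hab.le) hx)
    linarith [h]
  -- ===== right half =====
  set ℓr := b - y₀ with hℓr_def
  set fr : ℝ → ℝ := fun t => if t ∈ Ioo (0:ℝ) ℓr then f₀ (y₀ + t) else 0 with hfr_def
  have hfrm : Measurable fr := by
    rw [hfr_def]
    exact Measurable.ite measurableSet_Ioo (hf₀m.comp (measurable_const_add y₀)) measurable_const
  have hφr : ∀ x ∈ Ioo (0:ℝ) ℓr, φ (y₀ + x) = ∫ t in (0:ℝ)..x, fr t := by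
    intro x hx
    have hyIoo : y₀ + x ∈ Ioo y₀ b := ⟨by linarith [hx.1], by linarith [hx.2]⟩
    have h1 : φ (y₀ + x) = ∫ t in y₀..(y₀ + x), φ' t := by
      have := hrep y₀ ⟨hay, hyb⟩ (y₀ + x) ⟨by linarith [hx.1], by linarith [hx.2]⟩
      rw [hzero] at this; linarith
    have h2 : ∫ t in y₀..(y₀ + x), φ' t = ∫ t in y₀..(y₀ + x), f₀ t := by
      apply intervalIntegral.integral_congr_ae
      have hss : Ioo y₀ (y₀ + x) ⊆ Ioo a b :=
        fun t ht => ⟨lt_of_le_of_lt hay ht.1, lt_trans ht.2 hyIoo.2⟩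
      have hres : φ' =ᵐ[volume.restrict (Set.uIoc y₀ (y₀ + x))] f₀ := by
        rw [Set.uIoc_of_le (by linarith [hx.1] : y₀ ≤ y₀ + x),
          ← Measure.restrict_congr_set Ioo_ae_eq_Ioc]
        exact ae_restrict_of_ae_restrict_of_subset hss hae
      exact ae_imp_of_ae_restrict hres
    have h3 : ∫ t in (0:ℝ)..x, fr t = ∫ t in (0:ℝ)..x, f₀ (y₀ + t) := by
      apply intervalIntegral.integral_congr_ae
      refine ae_of_all _ fun t ht => ?_
      rw [Set.uIoc_of_le hx.1.le] at ht
      rw [hfr_def]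
      simp only []
      rw [if_pos (show t ∈ Ioo (0:ℝ) ℓr from ⟨ht.1, lt_of_le_of_lt ht.2 hx.2⟩)]
    have h4 : ∫ t in (0:ℝ)..x, f₀ (y₀ + t) = ∫ t in y₀..(y₀ + x), f₀ t := by
      have := intervalIntegral.integral_comp_add_left (a := (0:ℝ)) (b := x) f₀ y₀
      simpa using this
    rw [h1, h2, ← h4, ← h3]
  have hAr : (∫⁻ y in Ioo y₀ b, ENNReal.ofReal (φ y ^ 2 / (y - y₀) ^ 2)) =
      ∫⁻ x in Ioo 0 ℓr, ENNReal.ofReal ((∫ t in (0:ℝ)..x, fr t) ^ 2 / x ^ 2) := by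
    have himg : (fun x => y₀ + x) '' Ioo 0 ℓr = Ioo y₀ b := by
      rw [image_const_add_Ioo]; norm_num [hℓr_def]
    rw [← himg, ← MeasurePreserving.setLIntegral_comp_emb
      (measurePreserving_add_left volume y₀) (MeasurableEquiv.addLeft y₀).measurableEmbedding
      _ (Ioo 0 ℓr)]
    refine setLIntegral_congr_fun measurableSet_Ioo (fun x hx => ?_)
    rw [hφr x hx]
    norm_num
  have hBr : (∫⁻ y in Ioo y₀ b, ENNReal.ofReal (φ y ^ 2 / |y - y₀|)) =
      ∫⁻ x in Ioo 0 ℓr, ENNReal.ofReal ((∫ t in (0:ℝ)..x, fr t) ^ 2 / x) := by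
    have himg : (fun x => y₀ + x) '' Ioo 0 ℓr = Ioo y₀ b := by
      rw [image_const_add_Ioo]; norm_num [hℓr_def]
    rw [← himg, ← MeasurePreserving.setLIntegral_comp_emb
      (measurePreserving_add_left volume y₀) (MeasurableEquiv.addLeft y₀).measurableEmbedding
      _ (Ioo 0 ℓr)]
    refine setLIntegral_congr_fun measurableSet_Ioo (fun x hx => ?_)
    rw [hφr x hx]
    rw [show y₀ + x - y₀ = x by ring, abs_of_pos hx.1]
  have hCr : (∫⁻ t in Ioo y₀ b, ENNReal.ofReal (f₀ t ^ 2)) =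
      ∫⁻ x in Ioo 0 ℓr, ENNReal.ofReal (fr x ^ 2) := by
    have himg : (fun x => y₀ + x) '' Ioo 0 ℓr = Ioo y₀ b := by
      rw [image_const_add_Ioo]; norm_num [hℓr_def]
    rw [← himg, ← MeasurePreserving.setLIntegral_comp_emb
      (measurePreserving_add_left volume y₀) (MeasurableEquiv.addLeft y₀).measurableEmbedding
      _ (Ioo 0 ℓr)]
    refine setLIntegral_congr_fun measurableSet_Ioo (fun x hx => ?_)
    rw [hfr_def]
    simp only []
    rw [if_pos hx]
  have hRight : (∫⁻ y in Ioo y₀ b, ENNReal.ofReal (φ y ^ 2 / (y - y₀) ^ 2)) +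
      ENNReal.ofReal (1 / M) * (∫⁻ y in Ioo y₀ b, ENNReal.ofReal (φ y ^ 2 / |y - y₀|)) ≤
      4 * ∫⁻ t in Ioo y₀ b, ENNReal.ofReal (f₀ t ^ 2) := by
    rcases eq_or_lt_of_le hyb with heq | hlt
    · rw [heq]
      simp
    · rw [hAr, hBr, hCr]
      exact HardyAux.hardy_core (by rw [hℓr_def]; linarith) (le_max_left _ _) hfrm
  -- ===== left half =====
  set ℓl := y₀ - a with hℓl_def
  set fl : ℝ → ℝ := fun t => if t ∈ Ioo (0:ℝ) ℓl then f₀ (y₀ - t) else 0 with hfl_def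
  have hflm : Measurable fl := by
    rw [hfl_def]
    exact Measurable.ite measurableSet_Ioo (hf₀m.comp (measurable_const_sub y₀)) measurable_const
  have hφl : ∀ x ∈ Ioo (0:ℝ) ℓl, φ (y₀ - x) ^ 2 = (∫ t in (0:ℝ)..x, fl t) ^ 2 := by
    intro x hx
    have hyIoo : y₀ - x ∈ Ioo a y₀ := ⟨by linarith [hx.2], by linarith [hx.1]⟩
    have h1 : φ (y₀ - x) = -∫ t in (y₀ - x)..y₀, φ' t := by
      have := hrep (y₀ - x) ⟨by linarith [hx.2], by linarith [hx.1]⟩ y₀ ⟨hay, hyb⟩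
      rw [hzero] at this; linarith
    have h2 : ∫ t in (y₀ - x)..y₀, φ' t = ∫ t in (y₀ - x)..y₀, f₀ t := by
      apply intervalIntegral.integral_congr_ae
      have hss : Ioo (y₀ - x) y₀ ⊆ Ioo a b :=
        fun t ht => ⟨lt_trans hyIoo.1 ht.1, lt_of_lt_of_le ht.2 hyb⟩
      have hres : φ' =ᵐ[volume.restrict (Set.uIoc (y₀ - x) y₀)] f₀ := by
        rw [Set.uIoc_of_le (by linarith [hx.1] : y₀ - x ≤ y₀),
          ← Measure.restrict_congr_set Ioo_ae_eq_Ioc]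
        exact ae_restrict_of_ae_restrict_of_subset hss hae
      exact ae_imp_of_ae_restrict hres
    have h3 : ∫ t in (0:ℝ)..x, fl t = ∫ t in (0:ℝ)..x, f₀ (y₀ - t) := by
      apply intervalIntegral.integral_congr_ae
      refine ae_of_all _ fun t ht => ?_
      rw [Set.uIoc_of_le hx.1.le] at ht
      rw [hfl_def]
      simp only []
      rw [if_pos (show t ∈ Ioo (0:ℝ) ℓl from ⟨ht.1, lt_of_le_of_lt ht.2 hx.2⟩)]
    have h4 : ∫ t in (0:ℝ)..x, f₀ (y₀ - t) = ∫ t in (y₀ - x)..y₀, f₀ t := by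
      have := intervalIntegral.integral_comp_sub_left (a := (0:ℝ)) (b := x) f₀ y₀
      simpa using this
    rw [h1, h3, h4, ← h2]
    ring
  have hAl : (∫⁻ y in Ioo a y₀, ENNReal.ofReal (φ y ^ 2 / (y - y₀) ^ 2)) =
      ∫⁻ x in Ioo 0 ℓl, ENNReal.ofReal ((∫ t in (0:ℝ)..x, fl t) ^ 2 / x ^ 2) := by
    have himg : (fun x => y₀ - x) '' Ioo 0 ℓl = Ioo a y₀ := by
      rw [image_const_sub_Ioo]; norm_num [hℓl_def]
    have hemb : MeasurableEmbedding (fun x : ℝ => y₀ - x) :=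
      (MeasurableEquiv.subLeft y₀).measurableEmbedding
    rw [← himg, ← MeasurePreserving.setLIntegral_comp_emb
      (HardyAux.mp_sub_left y₀) hemb _ (Ioo 0 ℓl)]
    refine setLIntegral_congr_fun measurableSet_Ioo (fun x hx => ?_)
    rw [show y₀ - x - y₀ = -x by ring, neg_pow, ← hφl x hx]
    norm_num
  have hBl : (∫⁻ y in Ioo a y₀, ENNReal.ofReal (φ y ^ 2 / |y - y₀|)) =
      ∫⁻ x in Ioo 0 ℓl, ENNReal.ofReal ((∫ t in (0:ℝ)..x, fl t) ^ 2 / x) := by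
    have himg : (fun x => y₀ - x) '' Ioo 0 ℓl = Ioo a y₀ := by
      rw [image_const_sub_Ioo]; norm_num [hℓl_def]
    have hemb : MeasurableEmbedding (fun x : ℝ => y₀ - x) :=
      (MeasurableEquiv.subLeft y₀).measurableEmbedding
    rw [← himg, ← MeasurePreserving.setLIntegral_comp_emb
      (HardyAux.mp_sub_left y₀) hemb _ (Ioo 0 ℓl)]
    refine setLIntegral_congr_fun measurableSet_Ioo (fun x hx => ?_)
    rw [show y₀ - x - y₀ = -x by ring, abs_neg, abs_of_pos hx.1, ← hφl x hx]
  have hCl : (∫⁻ t in Ioo a y₀, ENNReal.ofReal (f₀ t ^ 2)) =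
      ∫⁻ x in Ioo 0 ℓl, ENNReal.ofReal (fl x ^ 2) := by
    have himg : (fun x => y₀ - x) '' Ioo 0 ℓl = Ioo a y₀ := by
      rw [image_const_sub_Ioo]; norm_num [hℓl_def]
    have hemb : MeasurableEmbedding (fun x : ℝ => y₀ - x) :=
      (MeasurableEquiv.subLeft y₀).measurableEmbedding
    rw [← himg, ← MeasurePreserving.setLIntegral_comp_emb
      (HardyAux.mp_sub_left y₀) hemb _ (Ioo 0 ℓl)]
    refine setLIntegral_congr_fun measurableSet_Ioo (fun x hx => ?_)
    rw [hfl_def]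
    simp only []
    rw [if_pos hx]
  have hLeft : (∫⁻ y in Ioo a y₀, ENNReal.ofReal (φ y ^ 2 / (y - y₀) ^ 2)) +
      ENNReal.ofReal (1 / M) * (∫⁻ y in Ioo a y₀, ENNReal.ofReal (φ y ^ 2 / |y - y₀|)) ≤
      4 * ∫⁻ t in Ioo a y₀, ENNReal.ofReal (f₀ t ^ 2) := by
    rcases eq_or_lt_of_le hay with heq | hlt
    · rw [← heq]
      simp
    · rw [hAl, hBl, hCl]
      exact HardyAux.hardy_core (by rw [hℓl_def]; linarith) (le_max_right _ _) hflm
  -- ===== splitting =====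
  have hdisj : Disjoint (Ioo a y₀) (Ioo y₀ b) := by
    rw [Set.disjoint_left]
    intro x h1 h2
    linarith [h1.2, h2.1]
  have hsplit : ∀ F : ℝ → ℝ≥0∞, (∫⁻ y in Ioo a b, F y) =
      (∫⁻ y in Ioo a y₀, F y) + ∫⁻ y in Ioo y₀ b, F y := by
    intro F
    have hU : (Ioo a y₀ ∪ Ioo y₀ b : Set ℝ) =ᵐ[volume] Ioo a b := by
      rw [MeasureTheory.ae_eq_set]
      constructor
      · have hss : (Ioo a y₀ ∪ Ioo y₀ b : Set ℝ) ⊆ Ioo a b := by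
          refine Set.union_subset ?_ ?_
          · exact fun t ht => ⟨ht.1, lt_of_lt_of_le ht.2 hyb⟩
          · exact fun t ht => ⟨lt_of_le_of_lt hay ht.1, ht.2⟩
        rw [Set.diff_eq_empty.2 hss]
        exact measure_empty
      · refine measure_mono_null (fun t ht => ?_) (Real.volume_singleton (a := y₀))
        simp only [Set.mem_diff, Set.mem_union, Set.mem_Ioo, not_or, not_and_or, not_lt] at ht
        obtain ⟨⟨h1, h2⟩, hn1, hn2⟩ := ht
        have : t = y₀ := by
          rcases hn1 with h | h
          · linarith
          · rcases hn2 with h' | h'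
            · linarith
            · linarith
        simp [this]
    rw [← setLIntegral_congr hU, lintegral_union measurableSet_Ioo hdisj]
  -- ===== combination =====
  have hC : (∫⁻ t in Ioo a b, ENNReal.ofReal (f₀ t ^ 2)) =
      ENNReal.ofReal (∫ t in Ioo a b, φ' t ^ 2) := by
    have h1 : (∫⁻ t in Ioo a b, ENNReal.ofReal (f₀ t ^ 2)) =
        ∫⁻ t in Ioo a b, ENNReal.ofReal (φ' t ^ 2) := by
      refine lintegral_congr_ae ?_
      filter_upwards [hae] with t ht
      rw [ht]
    rw [h1, ← ofReal_integral_eq_lintegral_ofReal hφ'L2.integrable_sq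
      (ae_of_all _ fun t => sq_nonneg _)]
  have hmain : (∫⁻ y in Ioo a b, ENNReal.ofReal (φ y ^ 2 / (y - y₀) ^ 2)) +
      ENNReal.ofReal (1 / M) * (∫⁻ y in Ioo a b, ENNReal.ofReal (φ y ^ 2 / |y - y₀|)) ≤
      4 * ENNReal.ofReal (∫ t in Ioo a b, φ' t ^ 2) := by
    rw [hsplit (fun y => ENNReal.ofReal (φ y ^ 2 / (y - y₀) ^ 2)),
      hsplit (fun y => ENNReal.ofReal (φ y ^ 2 / |y - y₀|)), ← hC,
      hsplit (fun t => ENNReal.ofReal (f₀ t ^ 2))]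
    calc (∫⁻ y in Ioo a y₀, ENNReal.ofReal (φ y ^ 2 / (y - y₀) ^ 2)) +
          (∫⁻ y in Ioo y₀ b, ENNReal.ofReal (φ y ^ 2 / (y - y₀) ^ 2)) +
          ENNReal.ofReal (1 / M) *
            ((∫⁻ y in Ioo a y₀, ENNReal.ofReal (φ y ^ 2 / |y - y₀|)) +
              ∫⁻ y in Ioo y₀ b, ENNReal.ofReal (φ y ^ 2 / |y - y₀|))
        = ((∫⁻ y in Ioo a y₀, ENNReal.ofReal (φ y ^ 2 / (y - y₀) ^ 2)) +
            ENNReal.ofReal (1 / M) * (∫⁻ y in Ioo a y₀, ENNReal.ofReal (φ y ^ 2 / |y - y₀|))) +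
          ((∫⁻ y in Ioo y₀ b, ENNReal.ofReal (φ y ^ 2 / (y - y₀) ^ 2)) +
            ENNReal.ofReal (1 / M) * (∫⁻ y in Ioo y₀ b, ENNReal.ofReal (φ y ^ 2 / |y - y₀|))) := by
          ring
      _ ≤ (4 * ∫⁻ t in Ioo a y₀, ENNReal.ofReal (f₀ t ^ 2)) +
            (4 * ∫⁻ t in Ioo y₀ b, ENNReal.ofReal (f₀ t ^ 2)) := add_le_add hLeft hRight
      _ = 4 * ((∫⁻ t in Ioo a y₀, ENNReal.ofReal (f₀ t ^ 2)) +
            ∫⁻ t in Ioo y₀ b, ENNReal.ofReal (f₀ t ^ 2)) := by ring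
  -- ===== conversions =====
  have hRHSfin : (4 : ℝ≥0∞) * ENNReal.ofReal (∫ t in Ioo a b, φ' t ^ 2) ≠ ⊤ :=
    ENNReal.mul_ne_top (by norm_num) ENNReal.ofReal_ne_top
  have hAfin : (∫⁻ y in Ioo a b, ENNReal.ofReal (φ y ^ 2 / (y - y₀) ^ 2)) ≠ ⊤ :=
    ne_top_of_le_ne_top hRHSfin (le_trans le_self_add hmain)
  have hMne : ENNReal.ofReal (1 / M) ≠ 0 := by
    rw [Ne, ENNReal.ofReal_eq_zero, not_le]
    positivity
  have hBfin : (∫⁻ y in Ioo a b, ENNReal.ofReal (φ y ^ 2 / |y - y₀|)) ≠ ⊤ := by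
    intro hB
    rw [hB, ENNReal.mul_top hMne, add_top] at hmain
    exact hRHSfin (top_le_iff.mp hmain)
  -- measurability
  set φ'' : ℝ → ℝ := (Ioo a b).indicator f₀ with hφ''_def
  have hφ''int : Integrable φ'' volume := by
    have : IntegrableOn f₀ (Ioo a b) volume := hφ'Ioo.congr hae
    exact this.integrable_indicator measurableSet_Ioo
  have hΦcont : Continuous (fun y : ℝ => φ a + ∫ t in a..y, φ'' t) :=
    continuous_const.add (hφ''int.continuous_primitive a)
  have hφeq : ∀ y ∈ Ioo a b, φ y = φ a + ∫ t in a..y, φ'' t := by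
    intro y hy
    rw [hφ y ⟨hy.1.le, hy.2.le⟩]
    congr 1
    apply intervalIntegral.integral_congr_ae
    have hss : Ioo a y ⊆ Ioo a b := fun t ht => ⟨ht.1, lt_trans ht.2 hy.2⟩
    have hres : φ' =ᵐ[volume.restrict (Set.uIoc a y)] φ'' := by
      rw [Set.uIoc_of_le hy.1.le, ← Measure.restrict_congr_set Ioo_ae_eq_Ioc]
      filter_upwards [ae_restrict_of_ae_restrict_of_subset hss hae,
        ae_restrict_mem measurableSet_Ioo] with t h1 h2
      rw [h1, hφ''_def, Set.indicator_of_mem (hss h2)]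
    exact ae_imp_of_ae_restrict hres
  have hAESM1 : AEStronglyMeasurable (fun y => φ y ^ 2 / (y - y₀) ^ 2)
      (volume.restrict (Ioo a b)) := by
    refine AEStronglyMeasurable.congr
      (f := fun y => (φ a + ∫ t in a..y, φ'' t) ^ 2 / (y - y₀) ^ 2) ?_ ?_
    · exact (((hΦcont.pow 2).measurable).div
        ((measurable_id.sub_const y₀).pow_const 2)).aestronglyMeasurable
    · filter_upwards [ae_restrict_mem measurableSet_Ioo] with y hy
      rw [hφeq y hy]
  have hAESM2 : AEStronglyMeasurable (fun y => φ y ^ 2 / |y - y₀|)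
      (volume.restrict (Ioo a b)) := by
    refine AEStronglyMeasurable.congr
      (f := fun y => (φ a + ∫ t in a..y, φ'' t) ^ 2 / |y - y₀|) ?_ ?_
    · exact (((hΦcont.pow 2).measurable).div
        ((measurable_id.sub_const y₀).abs)).aestronglyMeasurable
    · filter_upwards [ae_restrict_mem measurableSet_Ioo] with y hy
      rw [hφeq y hy]
  have hnn1 : 0 ≤ᵐ[volume.restrict (Ioo a b)] fun y => φ y ^ 2 / (y - y₀) ^ 2 :=
    ae_of_all _ fun y => by positivity
  have hnn2 : 0 ≤ᵐ[volume.restrict (Ioo a b)] fun y => φ y ^ 2 / |y - y₀| :=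
    ae_of_all _ fun y => by positivity
  have hint1 : IntegrableOn (fun y => φ y ^ 2 / (y - y₀) ^ 2) (Ioo a b) volume := by
    refine ⟨hAESM1, ?_⟩
    rw [hasFiniteIntegral_iff_ofReal hnn1]
    exact lt_top_iff_ne_top.2 hAfin
  have hint2 : IntegrableOn (fun y => φ y ^ 2 / |y - y₀|) (Ioo a b) volume := by
    refine ⟨hAESM2, ?_⟩
    rw [hasFiniteIntegral_iff_ofReal hnn2]
    exact lt_top_iff_ne_top.2 hBfin
  refine ⟨hint1, hint2, ?_⟩
  have heq1 : ∫ y in Ioo a b, φ y ^ 2 / (y - y₀) ^ 2 =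
      (∫⁻ y in Ioo a b, ENNReal.ofReal (φ y ^ 2 / (y - y₀) ^ 2)).toReal :=
    integral_eq_lintegral_of_nonneg_ae hnn1 hAESM1
  have heq2 : ∫ y in Ioo a b, φ y ^ 2 / |y - y₀| =
      (∫⁻ y in Ioo a b, ENNReal.ofReal (φ y ^ 2 / |y - y₀|)).toReal :=
    integral_eq_lintegral_of_nonneg_ae hnn2 hAESM2
  have hfinal := ENNReal.toReal_mono hRHSfin hmain
  rw [ENNReal.toReal_add hAfin (ENNReal.mul_ne_top ENNReal.ofReal_ne_top hBfin),
    ENNReal.toReal_mul, ENNReal.toReal_ofReal (by positivity : (0:ℝ) ≤ 1 / M),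
    ENNReal.toReal_mul, ENNReal.toReal_ofNat, ENNReal.toReal_ofReal
      (integral_nonneg fun t => sq_nonneg _)] at hfinal
  rw [heq1, heq2]
  exact hfinal
end

section
/- Let y₁ < y₂, let u ∈ H⁴(y₁,y₂), let a ∈ (y₁,y₂) with u(a) = u_min (hence u'(a) = 0), and let β be a real with 0 < β ≤ u''(a). Then there exists δ₀ > 0 such that for every δ ∈ (0,δ₀] there is a constant C_δ > 0 (depending only on u, a and δ) with the property that for every real c < u_min and every φ ∈ H¹₀(y₁,y₂): ∫_{a−δ}^{a+δ} ( φ'(y)² + ((u''(y)−β)/(u(y)−c)) φ(y)² ) dy ≥ −C_δ ∫_{a−δ}^{a+δ} φ(y)² dy. -/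
open MeasureTheory Set Filter Topology

noncomputable section

/-- The second derivative `u''` of `u` within `[y₁, y₂]`. -/
def D2 (y₁ y₂ : ℝ) (u : ℝ → ℝ) : ℝ → ℝ := iteratedDerivWithin 2 u (Set.Icc y₁ y₂)

/-- The first derivative `u'` of `u` within `[y₁, y₂]`. -/
def D1 (y₁ y₂ : ℝ) (u : ℝ → ℝ) : ℝ → ℝ := derivWithin u (Set.Icc y₁ y₂)

/-- `u_min`, the minimum of `u` on `[y₁, y₂]`. -/
def umin (y₁ y₂ : ℝ) (u : ℝ → ℝ) : ℝ := sInf (u '' Set.Icc y₁ y₂)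

/-- `u_max`, the maximum of `u` on `[y₁, y₂]`. -/
def umax (y₁ y₂ : ℝ) (u : ℝ → ℝ) : ℝ := sSup (u '' Set.Icc y₁ y₂)

/-- `u ∈ H⁴(y₁,y₂)`: `u` is three times continuously differentiable on `[y₁,y₂]` and `u'''`
is the primitive of an `L²` function. -/
def MemH4 (y₁ y₂ : ℝ) (u : ℝ → ℝ) : Prop :=
  ContDiffOn ℝ 3 u (Set.Icc y₁ y₂) ∧
  ∃ g : ℝ → ℝ, MeasureTheory.MemLp g 2 (volume.restrict (Set.Ioo y₁ y₂)) ∧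
    ∀ x ∈ Set.Icc y₁ y₂,
      iteratedDerivWithin 3 u (Set.Icc y₁ y₂) x
        = iteratedDerivWithin 3 u (Set.Icc y₁ y₂) y₁ + ∫ t in y₁..x, g t

/-- Hypothesis (H1): `u ∈ H⁴(y₁,y₂)` and `u'' ≠ 0` on the critical level `{u' = 0}`. -/
def HypH1 (y₁ y₂ : ℝ) (u : ℝ → ℝ) : Prop :=
  MemH4 y₁ y₂ u ∧
  ∀ y ∈ Set.Icc y₁ y₂, D1 y₁ y₂ u y = 0 → D2 y₁ y₂ u y ≠ 0

/-- `φ ∈ H¹₀(y₁,y₂)` with (weak) derivative `φ'`: `φ'` is `L²`, `φ` is its primitive starting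
from `φ(y₁) = 0`, and `φ(y₂) = 0`. -/
def IsH10 (y₁ y₂ : ℝ) (φ φ' : ℝ → ℝ) : Prop :=
  MeasureTheory.MemLp φ' 2 (volume.restrict (Set.Ioo y₁ y₂)) ∧
  (∀ x ∈ Set.Icc y₁ y₂, φ x = ∫ t in y₁..x, φ' t) ∧
  φ y₂ = 0

/-- The space `H¹₀(y₁,y₂)`, as a set of functions. -/
def H10 (y₁ y₂ : ℝ) : Set (ℝ → ℝ) := {φ | ∃ φ', IsH10 y₁ y₂ φ φ'}

/-- The Rayleigh–Kuo energy `∫ (φ'² + ((u''−β)/(u−c)) φ²)`. -/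
def energy (y₁ y₂ : ℝ) (u : ℝ → ℝ) (β c : ℝ) (φ φ' : ℝ → ℝ) : ℝ :=
  ∫ y in y₁..y₂, ((φ' y) ^ 2 + ((D2 y₁ y₂ u y - β) / (u y - c)) * (φ y) ^ 2)

/-- The `n`-th eigenvalue `λ_n(c)` of the Rayleigh–Kuo boundary value problem, defined by the
variational (min-max) formula: the infimum, over all `n`-dimensional subspaces `V` of
`H¹₀(y₁,y₂)`, of the supremum of the energy over `L²`-normalized elements of `V`. -/
def lambdaRK (y₁ y₂ : ℝ) (u : ℝ → ℝ) (β c : ℝ) (n : ℕ) : ℝ :=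
  sInf { M : ℝ | ∃ V : Submodule ℝ (ℝ → ℝ),
    (V : Set (ℝ → ℝ)) ⊆ H10 y₁ y₂ ∧ Module.finrank ℝ V = n ∧
    M = sSup { E : ℝ | ∃ φ φ' : ℝ → ℝ, φ ∈ V ∧ IsH10 y₁ y₂ φ φ' ∧
        (∫ y in y₁..y₂, (φ y) ^ 2) = 1 ∧ E = energy y₁ y₂ u β c φ φ' } }

/-- `m_β` for `β > 0`: the number of points `a ∈ (y₁,y₂)` with `u(a) = u_min` and `u''(a) < β`. -/
def mBetaMin (y₁ y₂ : ℝ) (u : ℝ → ℝ) (β : ℝ) : ℕ :=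
  Set.ncard {a ∈ Set.Ioo y₁ y₂ | u a = umin y₁ y₂ u ∧ D2 y₁ y₂ u a < β}

/-- `m_β` for `β < 0`: the number of points `a ∈ (y₁,y₂)` with `u(a) = u_max` and `u''(a) > β`. -/
def mBetaMax (y₁ y₂ : ℝ) (u : ℝ → ℝ) (β : ℝ) : ℕ :=
  Set.ncard {a ∈ Set.Ioo y₁ y₂ | u a = umax y₁ y₂ u ∧ β < D2 y₁ y₂ u a}

private lemma cs_sq_bound {J : Set ℝ} (hvol : volume J ≠ ⊤) {f : ℝ → ℝ}
    (h1 : MeasureTheory.IntegrableOn f J volume)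
    (h2 : MeasureTheory.IntegrableOn (fun x => f x ^ 2) J volume) :
    (∫ x in J, |f x|) ^ 2 ≤ (volume J).toReal * ∫ x in J, f x ^ 2 := by
  haveI : IsFiniteMeasure (volume.restrict J) :=
    ⟨by rw [Measure.restrict_apply_univ]; exact lt_top_iff_ne_top.2 hvol⟩
  set T := (volume J).toReal with hT
  set A := ∫ x in J, |f x| with hA
  have hTnn : 0 ≤ T := ENNReal.toReal_nonneg
  rcases eq_or_lt_of_le hTnn with h0 | hTpos
  · have hJ0 : volume J = 0 := by
      rcases (ENNReal.toReal_eq_zero_iff (volume J)).1 h0.symm with h | h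
      · exact h
      · exact absurd h hvol
    have hzero : ∀ F : ℝ → ℝ, (∫ x in J, F x) = 0 := fun F => by
      rw [Measure.restrict_eq_zero.2 hJ0, integral_zero_measure]
    have hA0 : A = 0 := by rw [hA]; exact hzero _
    rw [hA0, ← h0]
    norm_num
  · set m := A / T with hm
    have habs : Integrable (fun x => |f x|) (volume.restrict J) := h1.abs
    have key : 0 ≤ ∫ x in J, (|f x| - m) ^ 2 := integral_nonneg fun x => sq_nonneg _
    have expand : ∫ x in J, (|f x| - m) ^ 2
        = (∫ x in J, f x ^ 2) - 2 * m * A + m ^ 2 * T := by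
      have heq : (fun x => (|f x| - m) ^ 2)
          = fun x => (f x ^ 2 - 2 * m * |f x|) + m ^ 2 := by
        funext x; rw [sub_sq, sq_abs]; ring
      have i1 : Integrable (fun x => f x ^ 2 - 2 * m * |f x|) (volume.restrict J) :=
        h2.sub (habs.const_mul (2 * m))
      have i2 : Integrable (fun x => 2 * m * |f x|) (volume.restrict J) :=
        habs.const_mul (2 * m)
      rw [heq, integral_add i1 (integrable_const _),
        integral_sub h2 i2, integral_const_mul, integral_const,
        measureReal_restrict_apply_univ, measureReal_def, smul_eq_mul, ← hA, ← hT]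
      ring
    have hAmT : A = m * T := by rw [hm]; field_simp
    rw [hAmT] at expand
    have h3 : m ^ 2 * T ≤ ∫ x in J, f x ^ 2 := by nlinarith [key, expand]
    calc A ^ 2 = (m ^ 2 * T) * T := by rw [hAmT]; ring
      _ ≤ (∫ x in J, f x ^ 2) * T := mul_le_mul_of_nonneg_right h3 hTnn
      _ = T * ∫ x in J, f x ^ 2 := by ring

private lemma cs_abs_bound {J : Set ℝ} (hvol : volume J ≠ ⊤) {f : ℝ → ℝ}
    (h1 : MeasureTheory.IntegrableOn f J volume)
    (h2 : MeasureTheory.IntegrableOn (fun x => f x ^ 2) J volume) :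
    ∫ x in J, |f x| ≤ Real.sqrt ((volume J).toReal * ∫ x in J, f x ^ 2) := by
  have hAnn : 0 ≤ ∫ x in J, |f x| := integral_nonneg fun x => abs_nonneg _
  have hInn : 0 ≤ ∫ x in J, f x ^ 2 := integral_nonneg fun x => sq_nonneg _
  exact (Real.le_sqrt hAnn (mul_nonneg ENNReal.toReal_nonneg hInn)).2
    (cs_sq_bound hvol h1 h2)

private lemma sqrt_two_le : Real.sqrt 2 ≤ 1.5 := by
  have h : Real.sqrt 2 ≤ Real.sqrt 2.25 := Real.sqrt_le_sqrt (by norm_num)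
  rwa [show (2.25 : ℝ) = 1.5 ^ 2 by norm_num, Real.sqrt_sq (by norm_num)] at h

set_option maxHeartbeats 4000000 in
/-- **Lemma 3.2 (2)**: let `u ∈ H⁴(y₁,y₂)`, `a ∈ (y₁,y₂)` with `u(a) = u_min`, and
`0 < β ≤ u''(a)`.  Then there is `δ₀ > 0` such that for every `δ ∈ (0,δ₀]` there is a
constant `C_δ > 0` (depending only on `u`, `a`, `δ`) such that for all `c < u_min` and all
`φ ∈ H¹₀(y₁,y₂)` the localized energy on `[a−δ,a+δ]` is bounded below by
`−C_δ ∫_{a−δ}^{a+δ} φ²`. -/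
theorem localized_energy_lower_bound
    (y₁ y₂ : ℝ) (hy : y₁ < y₂) (u : ℝ → ℝ) (hu : MemH4 y₁ y₂ u)
    (a : ℝ) (ha : a ∈ Set.Ioo y₁ y₂) (hamin : u a = umin y₁ y₂ u)
    (β : ℝ) (hβpos : 0 < β) (hβ : β ≤ D2 y₁ y₂ u a) :
    ∃ δ₀ : ℝ, 0 < δ₀ ∧ Set.Icc (a - δ₀) (a + δ₀) ⊆ Set.Icc y₁ y₂ ∧
      ∀ δ ∈ Set.Ioc (0 : ℝ) δ₀, ∃ C : ℝ, 0 < C ∧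
        ∀ c : ℝ, c < umin y₁ y₂ u →
        ∀ φ φ' : ℝ → ℝ, IsH10 y₁ y₂ φ φ' →
          -(C * ∫ y in Set.Icc (a - δ) (a + δ), (φ y) ^ 2)
            ≤ ∫ y in Set.Icc (a - δ) (a + δ),
                ((φ' y) ^ 2 + ((D2 y₁ y₂ u y - β) / (u y - c)) * (φ y) ^ 2) := by
  classical
  obtain ⟨hC3, g, hg2, hgrep⟩ := hu
  have haI : a ∈ Set.Icc y₁ y₂ := Set.Ioo_subset_Icc_self ha
  have hudo : UniqueDiffOn ℝ (Set.Icc y₁ y₂) := uniqueDiffOn_Icc hy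
  have habs3 : ∀ p q : ℝ, |p - q| ≤ |p| + |q| := fun p q => by
    rw [sub_eq_add_neg]
    exact (abs_add_le _ _).trans_eq (by rw [abs_neg])
  set V1 : ℝ → ℝ := derivWithin u (Set.Icc y₁ y₂) with hV1def
  set V2 : ℝ → ℝ := derivWithin V1 (Set.Icc y₁ y₂) with hV2def
  set V3 : ℝ → ℝ := derivWithin V2 (Set.Icc y₁ y₂) with hV3def
  have hD2V2 : ∀ x ∈ Set.Icc y₁ y₂, D2 y₁ y₂ u x = V2 x := by
    intro x hx
    have e1 : Set.EqOn (iteratedDerivWithin 1 u (Set.Icc y₁ y₂)) V1 (Set.Icc y₁ y₂) := by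
      intro z hz
      rw [hV1def]
      exact congrFun iteratedDerivWithin_one z
    rw [hV2def]
    show iteratedDerivWithin (1 + 1) u (Set.Icc y₁ y₂) x = _
    rw [iteratedDerivWithin_succ]
    exact derivWithin_congr e1 (e1 hx)
  have hD3V3 : ∀ x ∈ Set.Icc y₁ y₂, iteratedDerivWithin 3 u (Set.Icc y₁ y₂) x = V3 x := by
    intro x hx
    have e2 : Set.EqOn (iteratedDerivWithin 2 u (Set.Icc y₁ y₂)) V2 (Set.Icc y₁ y₂) :=
      fun z hz => hD2V2 z hz
    rw [hV3def]
    show iteratedDerivWithin (2 + 1) u (Set.Icc y₁ y₂) x = _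
    rw [iteratedDerivWithin_succ]
    exact derivWithin_congr e2 (e2 hx)
  have hC2V1 : ContDiffOn ℝ 2 V1 (Set.Icc y₁ y₂) := hC3.derivWithin hudo (by norm_num)
  have hC1V2 : ContDiffOn ℝ 1 V2 (Set.Icc y₁ y₂) := hC2V1.derivWithin hudo (by norm_num)
  have hucont : ContinuousOn u (Set.Icc y₁ y₂) := hC3.continuousOn
  have hV1cont : ContinuousOn V1 (Set.Icc y₁ y₂) := hC2V1.continuousOn
  have hV2cont : ContinuousOn V2 (Set.Icc y₁ y₂) := hC1V2.continuousOn
  have hV3cont : ContinuousOn V3 (Set.Icc y₁ y₂) := by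
    rw [hV3def]; exact hC1V2.continuousOn_derivWithin hudo (le_refl _)
  have hudiff : DifferentiableOn ℝ u (Set.Icc y₁ y₂) := hC3.differentiableOn (by norm_num)
  have hV1diff : DifferentiableOn ℝ V1 (Set.Icc y₁ y₂) := hC2V1.differentiableOn (by norm_num)
  have hV2diff : DifferentiableOn ℝ V2 (Set.Icc y₁ y₂) := hC1V2.differentiableOn (by norm_num)
  have hnhds : ∀ x ∈ Set.Ioo y₁ y₂, Set.Icc y₁ y₂ ∈ nhds x := fun x hx => Icc_mem_nhds hx.1 hx.2
  have hder : ∀ f : ℝ → ℝ, DifferentiableOn ℝ f (Set.Icc y₁ y₂) →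
      ∀ x ∈ Set.Ioo y₁ y₂, HasDerivAt f (derivWithin f (Set.Icc y₁ y₂) x) x := by
    intro f hf x hx
    rw [derivWithin_of_mem_nhds (hnhds x hx)]
    exact ((hf x (Set.Ioo_subset_Icc_self hx)).differentiableAt (hnhds x hx)).hasDerivAt
  have hderu : ∀ x ∈ Set.Ioo y₁ y₂, HasDerivAt u (V1 x) x := by
    intro x hx; rw [hV1def]; exact hder u hudiff x hx
  have hderV1 : ∀ x ∈ Set.Ioo y₁ y₂, HasDerivAt V1 (V2 x) x := by
    intro x hx; rw [hV2def]; exact hder V1 hV1diff x hx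
  have hderV2 : ∀ x ∈ Set.Ioo y₁ y₂, HasDerivAt V2 (V3 x) x := by
    intro x hx; rw [hV3def]; exact hder V2 hV2diff x hx
  set γ := D2 y₁ y₂ u a with hγdef
  have hγV2 : γ = V2 a := by rw [hγdef]; exact hD2V2 a haI
  have hγpos : 0 < γ := lt_of_lt_of_le hβpos hβ
  -- minimum facts
  have humin : ∀ z ∈ Set.Icc y₁ y₂, u a ≤ u z := by
    intro z hz
    rw [hamin]
    show sInf (u '' Set.Icc y₁ y₂) ≤ u z
    exact csInf_le (isCompact_Icc.image_of_continuousOn hucont).bddBelow ⟨z, hz, rfl⟩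
  have hV1a : V1 a = 0 := by
    have hmin : IsMinOn u (Set.Icc y₁ y₂) a := isMinOn_iff.2 humin
    have h0 : deriv u a = 0 := (hmin.isLocalMin (hnhds a ha)).deriv_eq_zero
    rw [hV1def, derivWithin_of_mem_nhds (hnhds a ha), h0]
  -- bound on third derivative
  obtain ⟨L₀, hL₀⟩ := isCompact_Icc.exists_bound_of_continuousOn hV3cont
  set L := max L₀ 0 with hLdef
  have hLnn : 0 ≤ L := le_max_right _ _
  have hL : ∀ x ∈ Set.Icc y₁ y₂, |V3 x| ≤ L := fun x hx =>
    le_trans (by simpa using hL₀ x hx) (le_max_left _ _)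
  -- integrability of g
  haveI hfinIoo : IsFiniteMeasure (volume.restrict (Set.Ioo y₁ y₂)) :=
    ⟨by rw [Measure.restrict_apply_univ, Real.volume_Ioo]; exact ENNReal.ofReal_lt_top⟩
  have hgInt : MeasureTheory.IntegrableOn g (Set.Ioo y₁ y₂) volume :=
    memLp_one_iff_integrable.1 (hg2.mono_exponent (by norm_num))
  have hgsq : MeasureTheory.IntegrableOn (fun x => g x ^ 2) (Set.Ioo y₁ y₂) volume :=
    hg2.integrable_sq
  set G2 := ∫ x in Set.Ioo y₁ y₂, g x ^ 2 with hG2def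
  have hG2nn : 0 ≤ G2 := by rw [hG2def]; exact integral_nonneg fun x => sq_nonneg _
  set Kg := Real.sqrt G2 with hKgdef
  have hKgnn : 0 ≤ Kg := Real.sqrt_nonneg _
  -- constants
  set A1 := 12 * L / γ with hA1def
  set A2 := 8 * Kg / γ with hA2def
  set A3 := 32 * L ^ 2 / γ ^ 2 with hA3def
  have hA1nn : 0 ≤ A1 := by rw [hA1def]; exact div_nonneg (by linarith only [hLnn]) hγpos.le
  have hA2nn : 0 ≤ A2 := by rw [hA2def]; exact div_nonneg (by linarith only [hKgnn]) hγpos.le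
  have hA3nn : 0 ≤ A3 := by
    rw [hA3def]; exact div_nonneg (by nlinarith only [sq_nonneg L]) (by positivity)
  set K2 := 2 * A1 ^ 2 + 2 * A2 + A3 with hK2def
  have hK2nn : 0 ≤ K2 := by rw [hK2def]; nlinarith only [sq_nonneg A1, hA2nn, hA3nn]
  -- choice of δ₀
  have hay₁ : 0 < a - y₁ := sub_pos.2 ha.1
  have hy₂a : 0 < y₂ - a := sub_pos.2 ha.2
  set δ₀ := min (min ((a - y₁) / 2) ((y₂ - a) / 2))
      (min (γ / (2 * (L + 1))) (min 1 (1 / (8 * (K2 + 1))))) with hδ₀def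
  have hδ₀pos : 0 < δ₀ := by
    rw [hδ₀def]
    refine lt_min (lt_min (by linarith only [hay₁]) (by linarith only [hy₂a]))
      (lt_min (div_pos hγpos (by linarith only [hLnn]))
        (lt_min one_pos (div_pos one_pos (by linarith only [hK2nn]))))
  have hδ₀1 : δ₀ ≤ (a - y₁) / 2 := by
    rw [hδ₀def]; exact le_trans (min_le_left _ _) (min_le_left _ _)
  have hδ₀2 : δ₀ ≤ (y₂ - a) / 2 := by
    rw [hδ₀def]; exact le_trans (min_le_left _ _) (min_le_right _ _)
  have hδ₀3 : δ₀ ≤ γ / (2 * (L + 1)) := by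
    rw [hδ₀def]; exact le_trans (min_le_right _ _) (min_le_left _ _)
  have hδ₀4 : δ₀ ≤ 1 := by
    rw [hδ₀def]; exact le_trans (min_le_right _ _) (le_trans (min_le_right _ _) (min_le_left _ _))
  have hδ₀5 : δ₀ ≤ 1 / (8 * (K2 + 1)) := by
    rw [hδ₀def]; exact le_trans (min_le_right _ _) (le_trans (min_le_right _ _) (min_le_right _ _))
  set I₀ := Set.Icc (a - δ₀) (a + δ₀) with hI₀def
  have hI₀Ioo : I₀ ⊆ Set.Ioo y₁ y₂ := by
    rw [hI₀def]
    intro x hx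
    rw [Set.mem_Icc] at hx
    exact ⟨by linarith only [hx.1, hδ₀1, hay₁], by linarith only [hx.2, hδ₀2, hy₂a]⟩
  have hI₀Icc : I₀ ⊆ Set.Icc y₁ y₂ := hI₀Ioo.trans Set.Ioo_subset_Icc_self
  have haI₀ : a ∈ I₀ := by
    rw [hI₀def]
    exact Set.mem_Icc.2 ⟨by linarith only [hδ₀pos], by linarith only [hδ₀pos]⟩
  have hoc : Set.OrdConnected I₀ := by rw [hI₀def]; exact Set.ordConnected_Icc
  have hmemp : ∀ t ∈ Set.Icc (0:ℝ) δ₀, a + t ∈ I₀ := by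
    intro t ht
    rw [hI₀def]
    exact Set.mem_Icc.2 ⟨by linarith only [ht.1, ht.2, hδ₀pos], by linarith only [ht.1, ht.2]⟩
  have hmemm : ∀ t ∈ Set.Icc (0:ℝ) δ₀, a - t ∈ I₀ := by
    intro t ht
    rw [hI₀def]
    exact Set.mem_Icc.2 ⟨by linarith only [ht.1, ht.2], by linarith only [ht.1, ht.2, hδ₀pos]⟩
  clear_value I₀ δ₀ K2 A3 A2 A1 Kg G2 L γ V3 V2 V1
  -- FTC
  have hftc : ∀ f fd : ℝ → ℝ, (∀ w ∈ Set.Ioo y₁ y₂, HasDerivAt f (fd w) w) →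
      ContinuousOn fd (Set.Icc y₁ y₂) →
      ∀ p ∈ I₀, ∀ q ∈ I₀, ∫ w in p..q, fd w = f q - f p := by
    intro f fd hd hc p hp q hq
    have hsub : Set.uIcc p q ⊆ I₀ := hoc.uIcc_subset hp hq
    exact intervalIntegral.integral_eq_sub_of_hasDerivAt
      (fun w hw => hd w (hI₀Ioo (hsub hw)))
      ((hc.mono (hsub.trans hI₀Icc)).intervalIntegrable)
  have hV1rep : ∀ x ∈ I₀, V1 x = ∫ w in a..x, V2 w := by
    intro x hx
    rw [hftc V1 V2 hderV1 hV2cont a haI₀ x hx, hV1a, sub_zero]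
  have hurep : ∀ x ∈ I₀, u x - u a = ∫ w in a..x, V1 w := fun x hx =>
    (hftc u V1 hderu hV1cont a haI₀ x hx).symm
  have hV2rep : ∀ x ∈ I₀, V2 x - γ = ∫ w in a..x, V3 w := by
    intro x hx
    rw [hγV2, hftc V2 V3 hderV2 hV3cont a haI₀ x hx]
  -- (P1)
  have hP1 : ∀ x ∈ I₀, |V2 x - γ| ≤ L * |x - a| := by
    intro x hx
    rw [hV2rep x hx]
    have hb := intervalIntegral.norm_integral_le_of_norm_le_const (C := L)
      (f := V3) (a := a) (b := x) ?_
    · simpa using hb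
    · intro w hw
      have hwI : w ∈ I₀ := hoc.uIcc_subset haI₀ hx (Set.uIoc_subset_uIcc hw)
      simpa using hL w (hI₀Icc hwI)
  have hV2lb : ∀ x ∈ I₀, γ / 2 ≤ V2 x := by
    intro x hx
    have hx' := hx
    rw [hI₀def, Set.mem_Icc] at hx'
    have h2 : |x - a| ≤ δ₀ := abs_le.2 ⟨by linarith only [hx'.1], by linarith only [hx'.2]⟩
    have hQpos : 0 < γ / (2 * (L + 1)) := div_pos hγpos (by linarith only [hLnn])
    have hq : γ / (2 * (L + 1)) * (2 * (L + 1)) = γ := by field_simp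
    have f1 : L * δ₀ ≤ L * (γ / (2 * (L + 1))) := mul_le_mul_of_nonneg_left hδ₀3 hLnn
    have h3 : L * δ₀ ≤ γ / 2 := by nlinarith only [f1, hq, hQpos.le]
    have h4 : |V2 x - γ| ≤ γ / 2 :=
      (hP1 x hx).trans (le_trans (mul_le_mul_of_nonneg_left h2 hLnn) h3)
    have := abs_le.1 h4
    linarith only [this.1]
  -- quadratic gap of u at a
  have hugap : ∀ x ∈ I₀, γ / 4 * (x - a) ^ 2 ≤ u x - u a := by
    intro x hx
    rcases le_total a x with hax | hxa
    · have hsub1 : Set.Icc a x ⊆ I₀ := by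
        rw [← Set.uIcc_of_le hax]; exact hoc.uIcc_subset haI₀ hx
      have hlb : ∀ w ∈ Set.Icc a x, γ / 2 * (w - a) ≤ V1 w := by
        intro w hw
        have hwI : w ∈ I₀ := hsub1 hw
        rw [hV1rep w hwI]
        have hconst : ∫ τ in a..w, (γ / 2 : ℝ) = γ / 2 * (w - a) := by
          rw [intervalIntegral.integral_const, smul_eq_mul]; ring
        rw [← hconst]
        refine intervalIntegral.integral_mono_on hw.1 intervalIntegrable_const
          ((hV2cont.mono ((hoc.uIcc_subset haI₀ hwI).trans hI₀Icc)).intervalIntegrable) ?_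
        intro τ hτ
        refine hV2lb τ (hsub1 ⟨hτ.1, hτ.2.trans hw.2⟩)
      have hint : ∫ w in a..x, γ / 2 * (w - a) = γ / 4 * (x - a) ^ 2 := by
        rw [intervalIntegral.integral_const_mul]
        rw [intervalIntegral.integral_comp_sub_right (fun w => w) a, integral_id]
        ring
      calc γ / 4 * (x - a) ^ 2 = ∫ w in a..x, γ / 2 * (w - a) := hint.symm
        _ ≤ ∫ w in a..x, V1 w := by
            refine intervalIntegral.integral_mono_on hax
              ((continuous_const.mul (continuous_id.sub continuous_const)).intervalIntegrable _ _)
              ((hV1cont.mono ((hoc.uIcc_subset haI₀ hx).trans hI₀Icc)).intervalIntegrable) hlb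
        _ = u x - u a := (hurep x hx).symm
    · have hsub1 : Set.Icc x a ⊆ I₀ := by
        rw [← Set.uIcc_of_ge hxa]; exact hoc.uIcc_subset haI₀ hx
      have hub : ∀ w ∈ Set.Icc x a, V1 w ≤ γ / 2 * (w - a) := by
        intro w hw
        have hwI : w ∈ I₀ := hsub1 hw
        rw [hV1rep w hwI, intervalIntegral.integral_symm w a]
        have hconst : ∫ τ in w..a, (γ / 2 : ℝ) = γ / 2 * (a - w) := by
          rw [intervalIntegral.integral_const, smul_eq_mul]; ring
        have hlow : γ / 2 * (a - w) ≤ ∫ τ in w..a, V2 τ := by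
          rw [← hconst]
          refine intervalIntegral.integral_mono_on hw.2 intervalIntegrable_const
            ((hV2cont.mono ((hoc.uIcc_subset hwI haI₀).trans hI₀Icc)).intervalIntegrable) ?_
          intro τ hτ
          exact hV2lb τ (hsub1 ⟨hw.1.trans hτ.1, hτ.2⟩)
        linarith only [hlow]
      have hint : ∫ w in x..a, γ / 2 * (w - a) = -(γ / 4 * (x - a) ^ 2) := by
        rw [intervalIntegral.integral_const_mul]
        rw [intervalIntegral.integral_comp_sub_right (fun w => w) a, integral_id]
        ring
      have hle : ∫ w in x..a, V1 w ≤ ∫ w in x..a, γ / 2 * (w - a) := by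
        refine intervalIntegral.integral_mono_on hxa
          ((hV1cont.mono ((hoc.uIcc_subset hx haI₀).trans hI₀Icc)).intervalIntegrable)
          ((continuous_const.mul (continuous_id.sub continuous_const)).intervalIntegrable _ _) hub
      have hux : u x - u a = -∫ w in x..a, V1 w := by
        rw [hurep x hx, intervalIntegral.integral_symm x a]
      rw [hux]
      linarith only [hle, hint]
  -- integrability of reflected compositions
  have hiip : ∀ f : ℝ → ℝ, ContinuousOn f (Set.Icc y₁ y₂) →
      ∀ s ∈ Set.Icc (0:ℝ) δ₀, IntervalIntegrable (fun w => f (a + w)) volume 0 s := by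
    intro f hf s hs
    apply ContinuousOn.intervalIntegrable
    rw [Set.uIcc_of_le hs.1]
    refine ((hf.mono hI₀Icc).comp ((continuous_const.add continuous_id).continuousOn) ?_)
    intro w hw
    exact hmemp w ⟨hw.1, hw.2.trans hs.2⟩
  have hiim : ∀ f : ℝ → ℝ, ContinuousOn f (Set.Icc y₁ y₂) →
      ∀ s ∈ Set.Icc (0:ℝ) δ₀, IntervalIntegrable (fun w => f (a - w)) volume 0 s := by
    intro f hf s hs
    apply ContinuousOn.intervalIntegrable
    rw [Set.uIcc_of_le hs.1]
    refine ((hf.mono hI₀Icc).comp ((continuous_const.sub continuous_id).continuousOn) ?_)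
    intro w hw
    exact hmemm w ⟨hw.1, hw.2.trans hs.2⟩
  -- symmetrized first derivative bound
  have hsum1 : ∀ s ∈ Set.Icc (0:ℝ) δ₀,
      V1 (a + s) + V1 (a - s) = ∫ w in (0:ℝ)..s, (V2 (a + w) - V2 (a - w)) := by
    intro s hs
    have hp : V1 (a + s) = ∫ w in (0:ℝ)..s, V2 (a + w) := by
      rw [intervalIntegral.integral_comp_add_left V2 a, add_zero]
      exact hV1rep (a + s) (hmemp s hs)
    have hm : V1 (a - s) = -∫ w in (0:ℝ)..s, V2 (a - w) := by
      rw [hV1rep (a - s) (hmemm s hs), intervalIntegral.integral_symm (a - s) a]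
      congr 1
      rw [intervalIntegral.integral_comp_sub_left V2 a, sub_zero]
    rw [hp, hm, intervalIntegral.integral_sub (hiip V2 hV2cont s hs) (hiim V2 hV2cont s hs)]
    ring
  have hsum1b : ∀ s ∈ Set.Icc (0:ℝ) δ₀, |V1 (a + s) + V1 (a - s)| ≤ 2 * L * s ^ 2 := by
    intro s hs
    rw [hsum1 s hs]
    have hb := intervalIntegral.norm_integral_le_of_norm_le_const (C := 2 * L * s)
      (f := fun w => V2 (a + w) - V2 (a - w)) (a := 0) (b := s) ?_
    · rw [Real.norm_eq_abs, sub_zero, abs_of_nonneg hs.1] at hb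
      exact le_of_le_of_eq hb (by ring)
    · intro w hw
      rw [Set.uIoc_of_le hs.1] at hw
      have hwI : w ∈ Set.Icc (0:ℝ) δ₀ := ⟨hw.1.le, hw.2.trans hs.2⟩
      have h1 := hP1 (a + w) (hmemp w hwI)
      have h2 := hP1 (a - w) (hmemm w hwI)
      rw [show a + w - a = w by ring, abs_of_nonneg hw.1.le] at h1
      rw [show a - w - a = -w by ring, abs_neg, abs_of_nonneg hw.1.le] at h2
      show |V2 (a + w) - V2 (a - w)| ≤ 2 * L * s
      rw [show V2 (a + w) - V2 (a - w) = (V2 (a + w) - γ) - (V2 (a - w) - γ) by ring]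
      calc |(V2 (a + w) - γ) - (V2 (a - w) - γ)| ≤ |V2 (a + w) - γ| + |V2 (a - w) - γ| :=
            habs3 _ _
        _ ≤ 2 * L * s := by linarith only [h1, h2, mul_le_mul_of_nonneg_left hw.2 hLnn]
  have husym : ∀ s ∈ Set.Icc (0:ℝ) δ₀, |u (a + s) - u (a - s)| ≤ 2 * L * s ^ 3 := by
    intro s hs
    have hp : u (a + s) - u a = ∫ w in (0:ℝ)..s, V1 (a + w) := by
      rw [intervalIntegral.integral_comp_add_left V1 a, add_zero]
      exact hurep (a + s) (hmemp s hs)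
    have hm : u (a - s) - u a = -∫ w in (0:ℝ)..s, V1 (a - w) := by
      rw [hurep (a - s) (hmemm s hs), intervalIntegral.integral_symm (a - s) a]
      congr 1
      rw [intervalIntegral.integral_comp_sub_left V1 a, sub_zero]
    have hrw : u (a + s) - u (a - s) = ∫ w in (0:ℝ)..s, (V1 (a + w) + V1 (a - w)) := by
      rw [intervalIntegral.integral_add (hiip V1 hV1cont s hs) (hiim V1 hV1cont s hs)]
      linarith only [hp, hm]
    rw [hrw]
    have hb := intervalIntegral.norm_integral_le_of_norm_le_const (C := 2 * L * s ^ 2)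
      (f := fun w => V1 (a + w) + V1 (a - w)) (a := 0) (b := s) ?_
    · rw [Real.norm_eq_abs, sub_zero, abs_of_nonneg hs.1] at hb
      exact le_of_le_of_eq hb (by ring)
    · intro w hw
      rw [Set.uIoc_of_le hs.1] at hw
      have hwI : w ∈ Set.Icc (0:ℝ) δ₀ := ⟨hw.1.le, hw.2.trans hs.2⟩
      show |V1 (a + w) + V1 (a - w)| ≤ 2 * L * s ^ 2
      have hw2 : w ^ 2 ≤ s ^ 2 := by nlinarith only [hw.2, hw.1.le]
      calc |V1 (a + w) + V1 (a - w)| ≤ 2 * L * w ^ 2 := hsum1b w hwI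
        _ ≤ 2 * L * s ^ 2 := by linarith only [mul_le_mul_of_nonneg_left hw2 hLnn]
  -- symmetrized second derivative bound (uses g ∈ L²)
  have hiig : ∀ x ∈ I₀, IntervalIntegrable g volume y₁ x := by
    intro x hx
    rw [intervalIntegrable_iff, Set.uIoc_of_le (hI₀Ioo hx).1.le]
    exact hgInt.mono_set (fun w hw => ⟨hw.1, lt_of_le_of_lt hw.2 (hI₀Ioo hx).2⟩)
  have hgdiff : ∀ w ∈ Set.Icc (0:ℝ) δ₀,
      V3 (a + w) - V3 (a - w) = ∫ r in (a - w)..(a + w), g r := by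
    intro w hw
    have ep := hgrep (a + w) (hI₀Icc (hmemp w hw))
    have em := hgrep (a - w) (hI₀Icc (hmemm w hw))
    rw [hD3V3 _ (hI₀Icc (hmemp w hw))] at ep
    rw [hD3V3 _ (hI₀Icc (hmemm w hw))] at em
    rw [ep, em, add_sub_add_left_eq_sub]
    exact intervalIntegral.integral_interval_sub_left (hiig (a + w) (hmemp w hw))
      (hiig (a - w) (hmemm w hw))
  have hV2sum : ∀ s ∈ Set.Icc (0:ℝ) δ₀,
      |V2 (a + s) + V2 (a - s) - 2 * γ| ≤ 2 * Kg * s * Real.sqrt s := by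
    intro s hs
    have hp : V2 (a + s) - γ = ∫ w in (0:ℝ)..s, V3 (a + w) := by
      rw [intervalIntegral.integral_comp_add_left V3 a, add_zero]
      exact hV2rep (a + s) (hmemp s hs)
    have hm : V2 (a - s) - γ = -∫ w in (0:ℝ)..s, V3 (a - w) := by
      rw [hV2rep (a - s) (hmemm s hs), intervalIntegral.integral_symm (a - s) a]
      congr 1
      rw [intervalIntegral.integral_comp_sub_left V3 a, sub_zero]
    have hrw : V2 (a + s) + V2 (a - s) - 2 * γ
        = ∫ w in (0:ℝ)..s, (V3 (a + w) - V3 (a - w)) := by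
      rw [intervalIntegral.integral_sub (hiip V3 hV3cont s hs) (hiim V3 hV3cont s hs)]
      linarith only [hp, hm]
    rw [hrw]
    have hb := intervalIntegral.norm_integral_le_of_norm_le_const
      (C := 1.5 * Kg * Real.sqrt s)
      (f := fun w => V3 (a + w) - V3 (a - w)) (a := 0) (b := s) ?_
    · rw [Real.norm_eq_abs, sub_zero, abs_of_nonneg hs.1] at hb
      refine hb.trans ?_
      linarith only [hb, mul_nonneg (mul_nonneg hKgnn hs.1) (Real.sqrt_nonneg s)]
    · intro w hw
      rw [Set.uIoc_of_le hs.1] at hw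
      have hwI : w ∈ Set.Icc (0:ℝ) δ₀ := ⟨hw.1.le, hw.2.trans hs.2⟩
      have hle : a - w ≤ a + w := by linarith only [hw.1.le]
      have hIocsub : Set.Ioc (a - w) (a + w) ⊆ Set.Ioo y₁ y₂ := by
        intro r hr
        exact ⟨lt_of_lt_of_le (hI₀Ioo (hmemm w hwI)).1 hr.1.le,
          lt_of_le_of_lt hr.2 (hI₀Ioo (hmemp w hwI)).2⟩
      show |V3 (a + w) - V3 (a - w)| ≤ 1.5 * Kg * Real.sqrt s
      rw [hgdiff w hwI]
      have h1 : |∫ r in (a - w)..(a + w), g r| ≤ ∫ r in Set.Ioc (a - w) (a + w), |g r| := by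
        rw [intervalIntegral.integral_of_le hle]
        simpa [Real.norm_eq_abs] using
          norm_integral_le_integral_norm (μ := volume.restrict (Set.Ioc (a - w) (a + w))) g
      have h2 := cs_abs_bound (J := Set.Ioc (a - w) (a + w))
        (by rw [Real.volume_Ioc]; exact ENNReal.ofReal_ne_top)
        (hgInt.mono_set hIocsub) (hgsq.mono_set hIocsub)
      have h3 : (volume (Set.Ioc (a - w) (a + w))).toReal = 2 * w := by
        rw [Real.volume_Ioc, show a + w - (a - w) = 2 * w by ring,
          ENNReal.toReal_ofReal (by linarith only [hw.1.le])]
      have h4 : ∫ r in Set.Ioc (a - w) (a + w), g r ^ 2 ≤ G2 := by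
        rw [hG2def]
        exact setIntegral_mono_set hgsq (ae_of_all _ fun r => sq_nonneg _)
          (HasSubset.Subset.eventuallyLE hIocsub)
      have h5 : 0 ≤ ∫ r in Set.Ioc (a - w) (a + w), g r ^ 2 :=
        integral_nonneg fun r => sq_nonneg _
      rw [h3] at h2
      have h6 : Real.sqrt (2 * w * ∫ r in Set.Ioc (a - w) (a + w), g r ^ 2)
          ≤ Real.sqrt (2 * s * G2) := by
        apply Real.sqrt_le_sqrt
        nlinarith only [h4, hw.2, hw.1.le, hG2nn, h5, hs.1]
      have h7 : Real.sqrt (2 * s * G2) = Real.sqrt 2 * Real.sqrt s * Kg := by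
        rw [hKgdef, show 2 * s * G2 = 2 * (s * G2) by ring, Real.sqrt_mul (by norm_num),
          Real.sqrt_mul hs.1]
        ring
      calc |∫ r in (a - w)..(a + w), g r| ≤ _ := h1
        _ ≤ Real.sqrt (2 * w * ∫ r in Set.Ioc (a - w) (a + w), g r ^ 2) := h2
        _ ≤ Real.sqrt (2 * s * G2) := h6
        _ = Real.sqrt 2 * Real.sqrt s * Kg := h7
        _ ≤ 1.5 * Kg * Real.sqrt s := by
            nlinarith only [sqrt_two_le, hKgnn, Real.sqrt_nonneg s,
              mul_nonneg hKgnn (Real.sqrt_nonneg s)]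
  -- produce δ₀
  refine ⟨δ₀, hδ₀pos, by rw [← hI₀def]; exact hI₀Icc, ?_⟩
  intro δ hδmem
  have hδpos : 0 < δ := hδmem.1
  have hδle : δ ≤ δ₀ := hδmem.2
  have hδIcc : δ ∈ Set.Icc (0:ℝ) δ₀ := Set.mem_Icc.2 ⟨hδpos.le, hδle⟩
  set t := Real.sqrt δ with htdef
  have htpos : 0 < t := Real.sqrt_pos.2 hδpos
  have ht2 : t ^ 2 = δ := Real.sq_sqrt hδpos.le
  have htle1 : t ≤ 1 := Real.sqrt_le_one.2 (hδle.trans hδ₀4)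
  refine ⟨K2 / t + 1, add_pos_of_nonneg_of_pos (div_nonneg hK2nn htpos.le) one_pos, ?_⟩
  intro c hc φ φ' hφ10
  obtain ⟨hφ'2, hφrep, -⟩ := hφ10
  have hca : 0 < u a - c := by rw [hamin]; linarith only [hc]
  have hdpos : ∀ x ∈ Set.Icc y₁ y₂, 0 < u x - c := fun x hx =>
    lt_of_lt_of_le hca (by linarith only [humin x hx])
  -- φ' integrability and φ continuity
  have hφ'Ioo : IntegrableOn φ' (Set.Ioo y₁ y₂) volume :=
    memLp_one_iff_integrable.1 (hφ'2.mono_exponent (by norm_num))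
  have hφ'Icc : IntegrableOn φ' (Set.Icc y₁ y₂) volume :=
    (integrableOn_Icc_iff_integrableOn_Ioo).2 hφ'Ioo
  have hφ'sqIoo : IntegrableOn (fun x => φ' x ^ 2) (Set.Ioo y₁ y₂) volume :=
    hφ'2.integrable_sq
  have hiiφ' : ∀ x ∈ Set.Icc y₁ y₂, IntervalIntegrable φ' volume y₁ x := by
    intro x hx
    rw [intervalIntegrable_iff, Set.uIoc_of_le hx.1]
    exact hφ'Icc.mono_set (fun w hw => ⟨hw.1.le, hw.2.trans hx.2⟩)
  have hφsub : ∀ p ∈ Set.Icc y₁ y₂, ∀ q ∈ Set.Icc y₁ y₂, φ q - φ p = ∫ w in p..q, φ' w := by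
    intro p hp q hq
    rw [hφrep q hq, hφrep p hp,
      intervalIntegral.integral_interval_sub_left (hiiφ' q hq) (hiiφ' p hp)]
  have hφcont : ContinuousOn φ (Set.Icc y₁ y₂) := by
    refine (intervalIntegral.continuousOn_primitive (f := φ') (a := y₁) (b := y₂)
      ((integrableOn_Icc_iff_integrableOn_Ioo).2 hφ'Ioo)).congr ?_
    intro x hx
    rw [hφrep x hx, intervalIntegral.integral_of_le hx.1]
  -- per-δ interval
  set I := Set.Icc (a - δ) (a + δ) with hIdef
  have hImem : ∀ w : ℝ, a - δ ≤ w → w ≤ a + δ → w ∈ I := by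
    intro w h1 h2; rw [hIdef]; exact Set.mem_Icc.2 ⟨h1, h2⟩
  have hImemIcc : ∀ w ∈ I, a - δ ≤ w ∧ w ≤ a + δ := by
    intro w hw; rw [hIdef, Set.mem_Icc] at hw; exact hw
  have hIsubI₀ : I ⊆ I₀ := by
    rw [hIdef, hI₀def]
    exact Set.Icc_subset_Icc (by linarith only [hδle]) (by linarith only [hδle])
  have hIIcc : I ⊆ Set.Icc y₁ y₂ := hIsubI₀.trans hI₀Icc
  have hIcomp : IsCompact I := by rw [hIdef]; exact isCompact_Icc
  have hImeas : MeasurableSet I := by rw [hIdef]; exact measurableSet_Icc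
  set N2 := ∫ y in I, φ y ^ 2 with hN2def
  set P2 := ∫ y in I, φ' y ^ 2 with hP2def
  have hN2nn : 0 ≤ N2 := by rw [hN2def]; exact integral_nonneg fun y => sq_nonneg _
  have hP2nn : 0 ≤ P2 := by rw [hP2def]; exact integral_nonneg fun y => sq_nonneg _
  have hφ'sqI : IntegrableOn (fun y => φ' y ^ 2) I volume :=
    hφ'sqIoo.mono_set (hIsubI₀.trans hI₀Ioo)
  have hφcontI : ContinuousOn φ I := hφcont.mono hIIcc
  set D := Real.sqrt P2 with hDdef
  have hDnn : 0 ≤ D := Real.sqrt_nonneg _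
  have hD2 : D ^ 2 = P2 := Real.sq_sqrt hP2nn
  clear_value D P2 N2 I t
  have hIvol : (volume I).toReal = 2 * δ := by
    rw [hIdef, Real.volume_Icc, show a + δ - (a - δ) = 2 * δ by ring,
      ENNReal.toReal_ofReal (by linarith only [hδpos])]
  have hφsqIint : IntegrableOn (fun y => φ y ^ 2) I volume :=
    (hφcontI.pow 2).integrableOn_compact hIcomp
  -- a point where φ² is at most its mean
  have hzex : ∃ z ∈ I, φ z ^ 2 ≤ N2 / (2 * δ) := by
    by_contra hcon
    push_neg at hcon
    have hne : I.Nonempty := by rw [hIdef]; exact Set.nonempty_Icc.2 (by linarith only [hδpos])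
    obtain ⟨z₀, hz₀, hminz⟩ := hIcomp.exists_isMinOn hne (hφcontI.pow 2)
    have hlow : N2 / (2 * δ) < φ z₀ ^ 2 := hcon z₀ hz₀
    have hint : ∫ _ in I, φ z₀ ^ 2 ≤ ∫ y in I, φ y ^ 2 := by
      refine setIntegral_mono_on ((integrableOn_const_iff (C := φ z₀ ^ 2)).2 (Or.inr ?_)) hφsqIint hImeas ?_
      · rw [hIdef, Real.volume_Icc]; exact ENNReal.ofReal_lt_top
      · exact fun y hy => isMinOn_iff.1 hminz y hy
    rw [setIntegral_const, measureReal_def, hIvol, smul_eq_mul, ← hN2def] at hint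
    have hlt : N2 < φ z₀ ^ 2 * (2 * δ) := (div_lt_iff₀ (show (0:ℝ) < 2 * δ by linarith only [hδpos])).1 hlow
    linarith only [hint, hlt]
  obtain ⟨z, hzI, hzsm⟩ := hzex
  -- uniform bound S on |φ| over I
  set S := Real.sqrt (N2 / δ + 4 * δ * P2) with hSdef
  have hSnn : 0 ≤ S := Real.sqrt_nonneg _
  have hS2 : S ^ 2 = N2 / δ + 4 * δ * P2 := by
    rw [hSdef]
    exact Real.sq_sqrt (by positivity)
  have hφdiffI : ∀ p ∈ I, ∀ q ∈ I, p ≤ q → |φ q - φ p| ≤ Real.sqrt ((q - p) * P2) := by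
    intro p hp q hq hpq
    have hpI := hImemIcc p hp
    have hqI := hImemIcc q hq
    have hsubI : Set.Ioc p q ⊆ I := fun w hw =>
      hImem w (le_trans hpI.1 hw.1.le) (hw.2.trans hqI.2)
    rw [hφsub p (hIIcc hp) q (hIIcc hq)]
    have h1 : |∫ w in p..q, φ' w| ≤ ∫ w in Set.Ioc p q, |φ' w| := by
      rw [intervalIntegral.integral_of_le hpq]
      simpa [Real.norm_eq_abs] using
        norm_integral_le_integral_norm (μ := volume.restrict (Set.Ioc p q)) φ'
    have h2 := cs_abs_bound (J := Set.Ioc p q)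
      (by rw [Real.volume_Ioc]; exact ENNReal.ofReal_ne_top)
      (hφ'Icc.mono_set (hsubI.trans hIIcc)) (hφ'sqI.mono_set hsubI)
    have h3 : (volume (Set.Ioc p q)).toReal = q - p := by
      rw [Real.volume_Ioc, ENNReal.toReal_ofReal (by linarith only [hpq])]
    have h4 : ∫ w in Set.Ioc p q, φ' w ^ 2 ≤ P2 := by
      rw [hP2def]
      exact setIntegral_mono_set hφ'sqI (ae_of_all _ fun w => sq_nonneg _)
        (HasSubset.Subset.eventuallyLE hsubI)
    rw [h3] at h2
    refine (h1.trans h2).trans (Real.sqrt_le_sqrt ?_)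
    exact mul_le_mul_of_nonneg_left h4 (by linarith only [hpq])
  have hSbound : ∀ x ∈ I, |φ x| ≤ S := by
    intro x hx
    have hzabs : |φ z| ≤ Real.sqrt (N2 / (2 * δ)) := by
      rw [← Real.sqrt_sq_eq_abs]
      exact Real.sqrt_le_sqrt hzsm
    have hxI := hImemIcc x hx
    have hzI' := hImemIcc z hzI
    have hdiff : |φ x - φ z| ≤ Real.sqrt (2 * δ * P2) := by
      rcases le_total z x with h | h
      · refine (hφdiffI z hzI x hx h).trans (Real.sqrt_le_sqrt ?_)
        nlinarith only [hP2nn, hxI.2, hzI'.1, sub_nonneg.2 h]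
      · have hh := hφdiffI x hx z hzI h
        rw [abs_sub_comm] at hh
        refine hh.trans (Real.sqrt_le_sqrt ?_)
        nlinarith only [hP2nn, hzI'.2, hxI.1, sub_nonneg.2 h]
    have h1 : |φ x| ≤ Real.sqrt (N2 / (2 * δ)) + Real.sqrt (2 * δ * P2) := by
      calc |φ x| = |φ z + (φ x - φ z)| := by rw [show φ z + (φ x - φ z) = φ x by ring]
        _ ≤ |φ z| + |φ x - φ z| := abs_add_le _ _
        _ ≤ _ := add_le_add hzabs hdiff
    refine h1.trans ?_
    rw [hSdef]
    have hx1 : 0 ≤ Real.sqrt (N2 / (2 * δ)) := Real.sqrt_nonneg _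
    have hx2 : 0 ≤ Real.sqrt (2 * δ * P2) := Real.sqrt_nonneg _
    refine (Real.le_sqrt (by positivity) ?_).2 ?_
    · have : 0 ≤ N2 / δ := div_nonneg hN2nn hδpos.le
      nlinarith only [hP2nn, hδpos, div_nonneg hN2nn hδpos.le]
    · have e1 : Real.sqrt (N2 / (2 * δ)) ^ 2 = N2 / (2 * δ) :=
        Real.sq_sqrt (div_nonneg hN2nn (by linarith only [hδpos]))
      have e2 : Real.sqrt (2 * δ * P2) ^ 2 = 2 * δ * P2 :=
        Real.sq_sqrt (by nlinarith only [hP2nn, hδpos])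
      have e3 : N2 / (2 * δ) + N2 / (2 * δ) = N2 / δ := by field_simp; ring
      nlinarith only [sq_nonneg (Real.sqrt (N2 / (2 * δ)) - Real.sqrt (2 * δ * P2)), e1, e2,
        e3, hδpos, hP2nn]
  -- the comparison potential F and integrability
  set F : ℝ → ℝ := fun y => (V2 y - γ) / (u y - c) * φ y ^ 2 with hFdef
  have hFcont : ContinuousOn F (Set.Icc y₁ y₂) := by
    rw [hFdef]
    exact ((hV2cont.sub continuousOn_const).div (hucont.sub continuousOn_const)
      (fun x hx => ne_of_gt (hdpos x hx))).mul (hφcont.pow 2)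
  have hFI : IntegrableOn F I volume := (hFcont.mono hIIcc).integrableOn_compact hIcomp
  have hQcont0 : ContinuousOn (fun y => (V2 y - β) / (u y - c) * φ y ^ 2) I :=
    (((hV2cont.mono hIIcc).sub continuousOn_const).div
      ((hucont.mono hIIcc).sub continuousOn_const)
      (fun x hx => ne_of_gt (hdpos x (hIIcc hx)))).mul ((hφcont.mono hIIcc).pow 2)
  have hQcontI : ContinuousOn (fun y => (D2 y₁ y₂ u y - β) / (u y - c) * φ y ^ 2) I := by
    refine ContinuousOn.congr hQcont0 ?_
    intro x hx
    show (D2 y₁ y₂ u x - β) / (u x - c) * φ x ^ 2 = (V2 x - β) / (u x - c) * φ x ^ 2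
    rw [hD2V2 x (hIIcc hx)]
  have hQI : IntegrableOn (fun y => (D2 y₁ y₂ u y - β) / (u y - c) * φ y ^ 2) I volume :=
    hQcontI.integrableOn_compact hIcomp
  have hsplit : ∫ y in I, ((φ' y) ^ 2 + ((D2 y₁ y₂ u y - β) / (u y - c)) * (φ y) ^ 2)
      = P2 + ∫ y in I, (D2 y₁ y₂ u y - β) / (u y - c) * φ y ^ 2 := by
    rw [hP2def]
    exact integral_add hφ'sqI hQI
  have hQgeF : ∫ y in I, F y ≤ ∫ y in I, (D2 y₁ y₂ u y - β) / (u y - c) * φ y ^ 2 := by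
    refine setIntegral_mono_on hFI hQI hImeas ?_
    intro x hx
    rw [hFdef]
    simp only
    rw [hD2V2 x (hIIcc hx)]
    have hd := hdpos x (hIIcc hx)
    have hquot : (V2 x - γ) / (u x - c) ≤ (V2 x - β) / (u x - c) := by
      rw [div_le_div_iff₀ hd hd]
      linarith only [mul_nonneg (sub_nonneg.2 hβ) hd.le]
    exact mul_le_mul_of_nonneg_right hquot (sq_nonneg _)
  -- reflection of the integral of F
  have hrefl : ∫ y in I, F y = ∫ s in (0:ℝ)..δ, (F (a + s) + F (a - s)) := by
    have hF1 : IntervalIntegrable F volume (a - δ) a := by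
      apply ContinuousOn.intervalIntegrable
      apply hFcont.mono
      rw [Set.uIcc_of_le (show a - δ ≤ a by linarith only [hδpos])]
      intro w hw
      exact hIIcc (hImem w hw.1 (by linarith only [hw.2, hδpos]))
    have hF2 : IntervalIntegrable F volume a (a + δ) := by
      apply ContinuousOn.intervalIntegrable
      apply hFcont.mono
      rw [Set.uIcc_of_le (show a ≤ a + δ by linarith only [hδpos])]
      intro w hw
      exact hIIcc (hImem w (by linarith only [hw.1, hδpos]) hw.2)
    have e0 : ∫ y in I, F y = ∫ y in (a - δ)..(a + δ), F y := by
      rw [hIdef, MeasureTheory.integral_Icc_eq_integral_Ioc,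
        intervalIntegral.integral_of_le (show a - δ ≤ a + δ by linarith only [hδpos])]
    have e1 : ∫ y in (a - δ)..(a + δ), F y
        = (∫ y in (a - δ)..a, F y) + ∫ y in a..(a + δ), F y :=
      (intervalIntegral.integral_add_adjacent_intervals hF1 hF2).symm
    have e2 : ∫ s in (0:ℝ)..δ, F (a + s) = ∫ y in a..(a + δ), F y := by
      rw [intervalIntegral.integral_comp_add_left F a, add_zero]
    have e3 : ∫ s in (0:ℝ)..δ, F (a - s) = ∫ y in (a - δ)..a, F y := by
      rw [intervalIntegral.integral_comp_sub_left F a, sub_zero]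
    have e4 : ∫ s in (0:ℝ)..δ, (F (a + s) + F (a - s))
        = (∫ s in (0:ℝ)..δ, F (a + s)) + ∫ s in (0:ℝ)..δ, F (a - s) :=
      intervalIntegral.integral_add (hiip F hFcont δ hδIcc) (hiim F hFcont δ hδIcc)
    rw [e0, e1, e4, e2, e3]
    ring
  -- the comparison function ψ and the pointwise estimate
  set W := A1 * S * D + A2 * S ^ 2 with hWdef
  set ψ : ℝ → ℝ := fun s => -(W * s ^ (-(1/2) : ℝ) + A3 * S ^ 2) with hψdef
  have hrpowii : IntervalIntegrable (fun s : ℝ => s ^ (-(1/2) : ℝ)) volume 0 δ :=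
    intervalIntegral.intervalIntegrable_rpow' (by norm_num)
  have hψii : IntervalIntegrable ψ volume 0 δ := by
    rw [hψdef]
    exact ((hrpowii.const_mul W).add intervalIntegrable_const).neg
  have hGii : IntervalIntegrable (fun s => F (a + s) + F (a - s)) volume 0 δ :=
    (hiip F hFcont δ hδIcc).add (hiim F hFcont δ hδIcc)
  have hclaim : ∀ s ∈ Set.Ioc (0:ℝ) δ, ψ s ≤ F (a + s) + F (a - s) := by
    intro s hs
    have hspos : 0 < s := hs.1
    have hsδ₀ : s ∈ Set.Icc (0:ℝ) δ₀ := ⟨hspos.le, hs.2.trans hδle⟩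
    set v := Real.sqrt s with hvdef
    have hvpos : 0 < v := Real.sqrt_pos.2 hspos
    have hv2 : v ^ 2 = s := Real.sq_sqrt hspos.le
    have hxp : a + s ∈ I := hImem _ (by linarith only [hspos, hδpos])
      (by linarith only [hs.2])
    have hxm : a - s ∈ I := hImem _ (by linarith only [hs.2])
      (by linarith only [hspos, hδpos])
    have hxp0 : a + s ∈ I₀ := hmemp s hsδ₀
    have hxm0 : a - s ∈ I₀ := hmemm s hsδ₀
    have hdp : 0 < u (a + s) - c := hdpos _ (hIIcc hxp)
    have hdm : 0 < u (a - s) - c := hdpos _ (hIIcc hxm)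
    have hγ4s : 0 < γ / 4 * s ^ 2 := mul_pos (by linarith only [hγpos]) (pow_pos hspos 2)
    have hgapp : γ / 4 * s ^ 2 ≤ u (a + s) - c := by
      have h3 := hugap (a + s) hxp0
      rw [show a + s - a = s by ring] at h3
      linarith only [hca, h3]
    have hgapm : γ / 4 * s ^ 2 ≤ u (a - s) - c := by
      have h3 := hugap (a - s) hxm0
      rw [show a - s - a = -s by ring, neg_sq] at h3
      linarith only [hca, h3]
    have hrp : |V2 (a + s) - γ| ≤ L * s := by
      have h := hP1 _ hxp0
      rwa [show a + s - a = s by ring, abs_of_nonneg hspos.le] at h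
    have hrsum : |(V2 (a + s) - γ) + (V2 (a - s) - γ)| ≤ 2 * Kg * s * v := by
      have h := hV2sum s hsδ₀
      rw [show V2 (a + s) + V2 (a - s) - 2 * γ
        = (V2 (a + s) - γ) + (V2 (a - s) - γ) by ring] at h
      rw [hvdef]
      exact h
    have hdd : |(u (a - s) - c) - (u (a + s) - c)| ≤ 2 * L * s ^ 3 := by
      rw [show (u (a - s) - c) - (u (a + s) - c) = -(u (a + s) - u (a - s)) by ring, abs_neg]
      exact husym s hsδ₀
    have hφp : |φ (a + s)| ≤ S := hSbound _ hxp
    have hφm : |φ (a - s)| ≤ S := hSbound _ hxm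
    have hφd : |φ (a + s) - φ (a - s)| ≤ Real.sqrt 2 * v * D := by
      have h := hφdiffI (a - s) hxm (a + s) hxp (by linarith only [hspos])
      rw [show (a + s - (a - s)) * P2 = 2 * (s * P2) by ring] at h
      refine h.trans (le_of_eq ?_)
      rw [hDdef, hvdef, Real.sqrt_mul (by norm_num), Real.sqrt_mul hspos.le]
      ring
    have hid : F (a + s) + F (a - s) =
        (V2 (a + s) - γ) / (u (a + s) - c) * (φ (a + s) ^ 2 - φ (a - s) ^ 2)
        + φ (a - s) ^ 2 * (((V2 (a + s) - γ) + (V2 (a - s) - γ)) / (u (a - s) - c))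
        + φ (a - s) ^ 2 * ((V2 (a + s) - γ) * ((u (a - s) - c) - (u (a + s) - c))
            / ((u (a + s) - c) * (u (a - s) - c))) := by
      rw [hFdef]
      simp only
      field_simp
      ring
    have hφmsq : |φ (a - s) ^ 2| ≤ S ^ 2 := by
      rw [abs_of_nonneg (sq_nonneg _)]
      nlinarith only [hφm, abs_nonneg (φ (a - s)), sq_abs (φ (a - s)), hSnn]
    have hb1 : |(V2 (a + s) - γ) / (u (a + s) - c) * (φ (a + s) ^ 2 - φ (a - s) ^ 2)|
        ≤ A1 * S * D * v⁻¹ := by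
      have h1 : |(V2 (a + s) - γ) / (u (a + s) - c)| ≤ (L * s) / (γ / 4 * s ^ 2) := by
        rw [abs_div, abs_of_pos hdp]
        exact div_le_div₀ (mul_nonneg hLnn hspos.le) hrp hγ4s hgapp
      have h2 : |φ (a + s) ^ 2 - φ (a - s) ^ 2| ≤ Real.sqrt 2 * v * D * (2 * S) := by
        rw [show φ (a + s) ^ 2 - φ (a - s) ^ 2
          = (φ (a + s) - φ (a - s)) * (φ (a + s) + φ (a - s)) by ring, abs_mul]
        refine mul_le_mul hφd ((abs_add_le _ _).trans (by linarith only [hφp, hφm])) (abs_nonneg _) ?_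
        exact mul_nonneg (mul_nonneg (Real.sqrt_nonneg 2) hvpos.le) hDnn
      calc |(V2 (a + s) - γ) / (u (a + s) - c) * (φ (a + s) ^ 2 - φ (a - s) ^ 2)|
          = |(V2 (a + s) - γ) / (u (a + s) - c)| * |φ (a + s) ^ 2 - φ (a - s) ^ 2| :=
            abs_mul _ _
        _ ≤ (L * s) / (γ / 4 * s ^ 2) * (Real.sqrt 2 * v * D * (2 * S)) := by
            refine mul_le_mul h1 h2 (abs_nonneg _) ?_
            exact div_nonneg (mul_nonneg hLnn hspos.le) hγ4s.le
        _ ≤ A1 * S * D * v⁻¹ := by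
            rw [hA1def, ← hv2]
            have hrw : L * v ^ 2 / (γ / 4 * (v ^ 2) ^ 2) * (Real.sqrt 2 * v * D * (2 * S))
                = 8 * Real.sqrt 2 * L / γ * (S * (D * v⁻¹)) := by
              field_simp
              ring
            rw [hrw]
            have h8 : 8 * Real.sqrt 2 * L ≤ 12 * L := by nlinarith only [sqrt_two_le, hLnn]
            have h9 : 8 * Real.sqrt 2 * L / γ ≤ 12 * L / γ := by
              rw [div_le_div_iff₀ hγpos hγpos]
              nlinarith only [h8, hγpos]
            calc 8 * Real.sqrt 2 * L / γ * (S * (D * v⁻¹))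
                ≤ 12 * L / γ * (S * (D * v⁻¹)) := by
                  refine mul_le_mul_of_nonneg_right h9 ?_
                  exact mul_nonneg hSnn (mul_nonneg hDnn (inv_nonneg.2 hvpos.le))
              _ = 12 * L / γ * S * D * v⁻¹ := by ring
    have hb2 : |φ (a - s) ^ 2 * (((V2 (a + s) - γ) + (V2 (a - s) - γ)) / (u (a - s) - c))|
        ≤ A2 * S ^ 2 * v⁻¹ := by
      have h1 : |((V2 (a + s) - γ) + (V2 (a - s) - γ)) / (u (a - s) - c)|
          ≤ 2 * Kg * s * v / (γ / 4 * s ^ 2) := by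
        rw [abs_div, abs_of_pos hdm]
        refine div_le_div₀ ?_ hrsum hγ4s hgapm
        exact mul_nonneg (mul_nonneg (mul_nonneg (by norm_num) hKgnn) hspos.le) hvpos.le
      calc |φ (a - s) ^ 2 * (((V2 (a + s) - γ) + (V2 (a - s) - γ)) / (u (a - s) - c))|
          = |φ (a - s) ^ 2| * |((V2 (a + s) - γ) + (V2 (a - s) - γ)) / (u (a - s) - c)| :=
            abs_mul _ _
        _ ≤ S ^ 2 * (2 * Kg * s * v / (γ / 4 * s ^ 2)) := by
            refine mul_le_mul hφmsq h1 (abs_nonneg _) (sq_nonneg S)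
        _ = A2 * S ^ 2 * v⁻¹ := by
            rw [hA2def, ← hv2]
            field_simp
            ring
    have hb3 : |φ (a - s) ^ 2 * ((V2 (a + s) - γ) * ((u (a - s) - c) - (u (a + s) - c))
        / ((u (a + s) - c) * (u (a - s) - c)))| ≤ A3 * S ^ 2 := by
      have h1 : |(V2 (a + s) - γ) * ((u (a - s) - c) - (u (a + s) - c))|
          ≤ L * s * (2 * L * s ^ 3) := by
        rw [abs_mul]
        refine mul_le_mul hrp hdd (abs_nonneg _) (mul_nonneg hLnn hspos.le)
      have h2 : γ / 4 * s ^ 2 * (γ / 4 * s ^ 2) ≤ (u (a + s) - c) * (u (a - s) - c) :=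
        mul_le_mul hgapp hgapm hγ4s.le (by linarith only [hdp])
      have h3 : |(V2 (a + s) - γ) * ((u (a - s) - c) - (u (a + s) - c))
          / ((u (a + s) - c) * (u (a - s) - c))|
          ≤ L * s * (2 * L * s ^ 3) / (γ / 4 * s ^ 2 * (γ / 4 * s ^ 2)) := by
        rw [abs_div, abs_of_pos (mul_pos hdp hdm)]
        refine div_le_div₀ ?_ h1 (mul_pos hγ4s hγ4s) h2
        exact mul_nonneg (mul_nonneg hLnn hspos.le)
          (by nlinarith only [hLnn, pow_pos hspos 3])
      have h4 : L * s * (2 * L * s ^ 3) / (γ / 4 * s ^ 2 * (γ / 4 * s ^ 2)) = A3 := by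
        rw [hA3def]
        field_simp
        ring
      calc |φ (a - s) ^ 2 * ((V2 (a + s) - γ) * ((u (a - s) - c) - (u (a + s) - c))
            / ((u (a + s) - c) * (u (a - s) - c)))|
          = |φ (a - s) ^ 2| * |(V2 (a + s) - γ) * ((u (a - s) - c) - (u (a + s) - c))
            / ((u (a + s) - c) * (u (a - s) - c))| := abs_mul _ _
        _ ≤ S ^ 2 * (L * s * (2 * L * s ^ 3) / (γ / 4 * s ^ 2 * (γ / 4 * s ^ 2))) := by
            refine mul_le_mul hφmsq h3 (abs_nonneg _) (sq_nonneg S)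
        _ = A3 * S ^ 2 := by rw [h4]; ring
    have hψs : ψ s = -(W * v⁻¹ + A3 * S ^ 2) := by
      rw [hψdef]
      simp only
      rw [Real.rpow_neg hspos.le, ← Real.sqrt_eq_rpow, ← hvdef]
    rw [hψs, hid]
    have l1 := le_trans (neg_le_neg hb1) (neg_abs_le _)
    have l2 := le_trans (neg_le_neg hb2) (neg_abs_le _)
    have l3 := le_trans (neg_le_neg hb3) (neg_abs_le _)
    have hWv : W * v⁻¹ = A1 * S * D * v⁻¹ + A2 * S ^ 2 * v⁻¹ := by rw [hWdef]; ring
    linarith only [l1, l2, l3, hWv]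
  -- value of the ψ-integral
  have hrpowval : ∫ s in (0:ℝ)..δ, s ^ (-(1/2) : ℝ) = 2 * t := by
    rw [integral_rpow (Or.inl (by norm_num))]
    have h0 : (0:ℝ) ^ ((-(1/2) : ℝ) + 1) = 0 := Real.zero_rpow (by norm_num)
    rw [h0, show (-(1/2) : ℝ) + 1 = 1/2 by norm_num, sub_zero]
    rw [show δ ^ (1/2 : ℝ) = Real.sqrt δ from (Real.sqrt_eq_rpow δ).symm, ← htdef]
    ring
  have hψval : ∫ s in (0:ℝ)..δ, ψ s = -(W * (2 * t) + A3 * S ^ 2 * δ) := by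
    simp only [hψdef]
    rw [intervalIntegral.integral_neg,
      intervalIntegral.integral_add (hrpowii.const_mul W) intervalIntegrable_const,
      intervalIntegral.integral_const_mul, hrpowval, intervalIntegral.integral_const,
      smul_eq_mul, sub_zero]
    ring
  have hmono : ∫ s in (0:ℝ)..δ, ψ s ≤ ∫ s in (0:ℝ)..δ, (F (a + s) + F (a - s)) := by
    refine intervalIntegral.integral_mono_ae_restrict hδpos.le hψii hGii ?_
    have h1 : ∀ᵐ (s : ℝ) ∂(volume.restrict (Set.Icc (0:ℝ) δ)), s ∈ Set.Icc (0:ℝ) δ :=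
      ae_restrict_mem measurableSet_Icc
    have hv0 : ∀ᵐ (s : ℝ) ∂(volume : Measure ℝ), s ≠ 0 := by
      refine (MeasureTheory.ae_iff).2 ?_
      simp only [ne_eq, not_not, Set.setOf_eq_eq_singleton, measure_singleton]
    have h2 : ∀ᵐ (s : ℝ) ∂(volume.restrict (Set.Icc (0:ℝ) δ)), s ≠ 0 :=
      ae_restrict_of_ae hv0
    filter_upwards [h1, h2] with s hsmem hs0
    exact hclaim s ⟨lt_of_le_of_ne hsmem.1 (Ne.symm hs0), hsmem.2⟩
  -- lower bound for the energy
  have hElow : P2 - (W * (2 * t) + A3 * S ^ 2 * δ)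
      ≤ ∫ y in I, ((φ' y) ^ 2 + ((D2 y₁ y₂ u y - β) / (u y - c)) * (φ y) ^ 2) := by
    rw [hsplit]
    have hchain : -(W * (2 * t) + A3 * S ^ 2 * δ)
        ≤ ∫ y in I, (D2 y₁ y₂ u y - β) / (u y - c) * φ y ^ 2 := by
      calc -(W * (2 * t) + A3 * S ^ 2 * δ) = ∫ s in (0:ℝ)..δ, ψ s := hψval.symm
        _ ≤ ∫ s in (0:ℝ)..δ, (F (a + s) + F (a - s)) := hmono
        _ = ∫ y in I, F y := hrefl.symm
        _ ≤ _ := hQgeF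
    linarith only [hchain]
  -- final arithmetic
  have hfinal : -((K2 / t + 1) * N2) ≤ P2 - (W * (2 * t) + A3 * S ^ 2 * δ) := by
    have hY : W * (2 * t) = 2 * t * (A1 * S * D) + 2 * t * A2 * S ^ 2 := by
      rw [hWdef]; ring
    have h1 : 2 * t * (A1 * S * D) ≤ P2 / 2 + 2 * t ^ 2 * A1 ^ 2 * S ^ 2 := by
      nlinarith only [sq_nonneg (D - 2 * t * A1 * S), hD2]
    have hS2nn : 0 ≤ S ^ 2 := sq_nonneg S
    have hcoef : (2 * t ^ 2 * A1 ^ 2 + 2 * t * A2 + A3 * t ^ 2) * S ^ 2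
        ≤ t * K2 * S ^ 2 := by
      have hc : 2 * t ^ 2 * A1 ^ 2 + 2 * t * A2 + A3 * t ^ 2 ≤ t * K2 := by
        rw [hK2def]
        have htt : t ^ 2 ≤ t := by nlinarith only [htpos.le, htle1]
        linarith only [mul_le_mul_of_nonneg_right htt (sq_nonneg A1),
          mul_le_mul_of_nonneg_right htt hA3nn, htt]
      exact mul_le_mul_of_nonneg_right hc hS2nn
    have hKtS : t * K2 * S ^ 2 = K2 / t * N2 + 4 * K2 * t ^ 3 * P2 := by
      rw [hS2, ← ht2]
      field_simp
    have habsb : 4 * K2 * t ^ 3 * P2 ≤ P2 / 2 := by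
      have h3 : t ^ 3 ≤ δ := by nlinarith only [ht2, htle1, htpos.le]
      have h5 : δ ≤ 1 / (8 * (K2 + 1)) := hδle.trans hδ₀5
      have h6 : δ * (8 * (K2 + 1)) ≤ 1 := (le_div_iff₀ (by positivity)).1 h5
      have h4 : 4 * K2 * t ^ 3 ≤ 1 / 2 := by
        nlinarith only [mul_le_mul_of_nonneg_left h3 hK2nn, h6, hδpos.le, hK2nn]
      linarith only [mul_le_mul_of_nonneg_right h4 hP2nn]
    have hKN : 0 ≤ K2 / t * N2 := mul_nonneg (div_nonneg hK2nn htpos.le) hN2nn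
    have hδt : A3 * S ^ 2 * δ = A3 * t ^ 2 * S ^ 2 := by rw [← ht2]; ring
    rw [hY, hδt]
    linarith only [h1, hcoef, hKtS, habsb, hKN, hN2nn]
  linarith only [hfinal, hElow]
end
end

section
/- Let y₁ < y₂, let u : [y₁,y₂] → ℝ be twice continuously differentiable with u(y₁) = u_min := min_{[y₁,y₂]} u and u'(y₁) ≠ 0, and fix γ ∈ (0, 1/2]. Then there exist constants C > 0 and δ ∈ (0, y₂−y₁) such that for every δ₁ ∈ (0,δ], setting z = y₁+δ₁, for every real c with 0 < u_min − c < 1 and every twice continuously differentiable φ : [y₁,z] → ℝ with F := φ'', writing |f|_{L∞(z)} := sup_{y∈[y₁,z]} |f(y)|, the following four inequalities hold: (1) |φ|_{L∞(z)} ≤ C(δ₁^γ |(u−c)^{2−γ}F|_{L∞(z)} + |φ(z)| + δ₁^γ |φ'(z)|); (2) |(u−c)^{1−γ}φ|_{L∞(z)} + δ₁^γ |(u−c)^{2−2γ}φ'|_{L∞(z)} ≤ C(δ₁^γ |(u−c)^{3−2γ}F|_{L∞(z)} + |φ(z)| + δ₁^γ |φ'(z)|); (3) |(u−c)^{γ−1}φ|_{L∞(z)}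 ≤ C(|(u−c)^{γ+1}F|_{L∞(z)} + (u_min−c)^{γ−1}|φ(y₁)| + |φ(z)| + |φ'(z)|); (4) |(u−c)^{−1}φ|_{L∞(z)} ≤ C(δ₁^γ |(u−c)^{1−γ}F|_{L∞(z)} + (u_min−c)^{−1}|φ(y₁)| + |φ'(z)|). -/
open Set intervalIntegral

noncomputable section

/-- `|f|_{L∞(z)} = sup_{y ∈ [y₁,z]} |f(y)|`. -/
def supAbs (y₁ z : ℝ) (f : ℝ → ℝ) : ℝ := sSup ((fun y => |f y|) '' Set.Icc y₁ z)

lemma supAbs_le {y₁ z B : ℝ} {f : ℝ → ℝ} (hB : 0 ≤ B)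
    (h : ∀ y ∈ Set.Icc y₁ z, |f y| ≤ B) : supAbs y₁ z f ≤ B :=
  Real.sSup_le (by rintro x ⟨y, hy, rfl⟩; exact h y hy) hB

lemma le_supAbs {y₁ z : ℝ} {f : ℝ → ℝ} (hf : ContinuousOn f (Set.Icc y₁ z))
    {y : ℝ} (hy : y ∈ Set.Icc y₁ z) : |f y| ≤ supAbs y₁ z f :=
  le_csSup (isCompact_Icc.bddAbove_image hf.abs) ⟨y, hy, rfl⟩

lemma supAbs_nonneg (y₁ z : ℝ) (f : ℝ → ℝ) : 0 ≤ supAbs y₁ z f :=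
  Real.sSup_nonneg (by rintro x ⟨y, hy, rfl⟩; exact abs_nonneg _)

lemma ftc_icc {f f' : ℝ → ℝ} {a b : ℝ} (hab : a ≤ b)
    (hd : ∀ x ∈ Set.Icc a b, HasDerivWithinAt f (f' x) (Set.Icc a b) x)
    (hc : ContinuousOn f' (Set.Icc a b)) :
    ∫ t in a..b, f' t = f b - f a := by
  refine intervalIntegral.integral_eq_sub_of_hasDeriv_right_of_le hab
    (fun x hx => (hd x hx).continuousWithinAt) (fun x hx => ?_)
    (hc.intervalIntegrable_of_Icc hab)
  refine (hd x (Ioo_subset_Icc_self hx)).mono_of_mem_nhdsWithin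
    (Filter.mem_of_superset (Ioc_mem_nhdsGT_of_mem ⟨le_refl x, hx.2⟩) ?_)
  exact fun t ht => ⟨hx.1.le.trans ht.1.le, ht.2⟩

lemma combo3 {a₁ a₂ a₃ E X Y Z : ℝ} (h₁ : a₁ ≤ E) (h₂ : a₂ ≤ E) (h₃ : a₃ ≤ E)
    (hX : 0 ≤ X) (hY : 0 ≤ Y) (hZ : 0 ≤ Z) :
    a₁ * X + a₂ * Y + a₃ * Z ≤ E * (X + Y + Z) := by nlinarith

lemma combo4 {a₁ a₂ a₃ a₄ E X Y Z W : ℝ} (h₁ : a₁ ≤ E) (h₂ : a₂ ≤ E) (h₃ : a₃ ≤ E)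
    (h₄ : a₄ ≤ E) (hX : 0 ≤ X) (hY : 0 ≤ Y) (hZ : 0 ≤ Z) (hW : 0 ≤ W) :
    a₁ * X + a₂ * Y + a₃ * Z + a₄ * W ≤ E * (X + Y + Z + W) := by nlinarith

/-- Exact integral of a linear function raised to a real power. -/
lemma int_wl (y₁ w₁ k ν a b : ℝ) (hk : 0 < k) (hw₁ : 0 < w₁) (hν : ν + 1 ≠ 0)
    (ha : y₁ ≤ a) (hab : a ≤ b) :
    ∫ t in a..b, (w₁ + k * (t - y₁)) ^ ν
      = ((w₁ + k * (b - y₁)) ^ (ν + 1) - (w₁ + k * (a - y₁)) ^ (ν + 1)) / (k * (ν + 1)) := by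
  have huIcc : Set.uIcc a b = Set.Icc a b := Set.uIcc_of_le hab
  have hwlpos' : ∀ t ∈ Set.uIcc a b, 0 < w₁ + k * (t - y₁) := by
    intro t ht; rw [huIcc] at ht
    have := ht.1; nlinarith
  have hderiv : ∀ t ∈ Set.uIcc a b,
      HasDerivAt (fun s => (w₁ + k * (s - y₁)) ^ (ν + 1) / (k * (ν + 1)))
        ((w₁ + k * (t - y₁)) ^ ν) t := by
    intro t ht
    have h1 : HasDerivAt (fun s => w₁ + k * (s - y₁)) k t := by
      simpa using (((hasDerivAt_id t).sub_const y₁).const_mul k).const_add w₁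
    have h2 := h1.rpow_const (p := ν + 1) (Or.inl (hwlpos' t ht).ne')
    have h3 := h2.div_const (k * (ν + 1))
    have hk' : k * (ν + 1) ≠ 0 := mul_ne_zero hk.ne' hν
    have heq : k * (ν + 1) * (w₁ + k * (t - y₁)) ^ (ν + 1 - 1) / (k * (ν + 1))
        = (w₁ + k * (t - y₁)) ^ ν := by
      rw [add_sub_cancel_right]
      exact mul_div_cancel_left₀ _ hk'
    rwa [heq] at h3
  have hint : IntervalIntegrable (fun t => (w₁ + k * (t - y₁)) ^ ν)
      MeasureTheory.volume a b := by
    apply ContinuousOn.intervalIntegrable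
    apply ContinuousOn.rpow_const
    · apply Continuous.continuousOn
      exact continuous_const.add (continuous_const.mul (continuous_id.sub continuous_const))
    · intro t ht; exact Or.inl (hwlpos' t ht).ne'
  have h := intervalIntegral.integral_eq_sub_of_hasDerivAt hderiv hint
  rw [h, div_sub_div_same]

/-- Integral bound for exponents with `ν + 1 < 0`. -/
lemma int_neg (y₁ z c k ν a b : ℝ) (u : ℝ → ℝ) (hkpos : 0 < k) (hc0 : 0 < u y₁ - c)
    (huc : ContinuousOn u (Set.Icc y₁ z))
    (hwlow : ∀ y ∈ Set.Icc y₁ z, u y₁ - c + k * (y - y₁) ≤ u y - c)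
    (hwup : ∀ y ∈ Set.Icc y₁ z, u y - c ≤ u y₁ - c + 3 * k * (y - y₁))
    (hwpos : ∀ y ∈ Set.Icc y₁ z, 0 < u y - c)
    (hν : ν + 1 < 0) (ha : a ∈ Set.Icc y₁ z) (hb : b ∈ Set.Icc y₁ z) (hab : a ≤ b) :
    ∫ t in a..b, (u t - c) ^ ν
      ≤ (3:ℝ) ^ (-(ν + 1)) / (k * (-(ν + 1))) * (u a - c) ^ (ν + 1) := by
  have hIcc : Set.Icc a b ⊆ Set.Icc y₁ z := Set.Icc_subset_Icc ha.1 hb.2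
  have hwlpos : ∀ t, y₁ ≤ t → 0 < u y₁ - c + k * (t - y₁) := by
    intro t ht; nlinarith
  have hint1 : IntervalIntegrable (fun t => (u t - c) ^ ν) MeasureTheory.volume a b := by
    apply ContinuousOn.intervalIntegrable_of_Icc hab
    apply ContinuousOn.rpow_const (((huc.mono hIcc).sub continuousOn_const))
    intro t ht; exact Or.inl (hwpos t (hIcc ht)).ne'
  have hint2 : IntervalIntegrable (fun t => (u y₁ - c + k * (t - y₁)) ^ ν)
      MeasureTheory.volume a b := by
    apply ContinuousOn.intervalIntegrable_of_Icc hab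
    apply ContinuousOn.rpow_const
    · apply Continuous.continuousOn
      exact continuous_const.add (continuous_const.mul (continuous_id.sub continuous_const))
    · intro t ht; exact Or.inl (hwlpos t (le_trans ha.1 ht.1)).ne'
  have hmono : ∫ t in a..b, (u t - c) ^ ν
      ≤ ∫ t in a..b, (u y₁ - c + k * (t - y₁)) ^ ν := by
    apply intervalIntegral.integral_mono_on hab hint1 hint2
    intro t ht
    exact Real.rpow_le_rpow_of_nonpos (hwlpos t (le_trans ha.1 ht.1))
      (hwlow t (hIcc ht)) (by linarith)
  rw [int_wl y₁ (u y₁ - c) k ν a b hkpos hc0 (by linarith) ha.1 hab] at hmono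
  have hkν : 0 < k * (-(ν + 1)) := mul_pos hkpos (by linarith)
  have hwlb : (0:ℝ) ≤ (u y₁ - c + k * (b - y₁)) ^ (ν + 1) :=
    (Real.rpow_pos_of_pos (hwlpos b (le_trans ha.1 hab)) _).le
  have step3 : ((u y₁ - c + k * (b - y₁)) ^ (ν + 1) - (u y₁ - c + k * (a - y₁)) ^ (ν + 1))
        / (k * (ν + 1))
      ≤ (u y₁ - c + k * (a - y₁)) ^ (ν + 1) / (k * (-(ν + 1))) := by
    have heq : ((u y₁ - c + k * (b - y₁)) ^ (ν + 1) - (u y₁ - c + k * (a - y₁)) ^ (ν + 1))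
          / (k * (ν + 1))
        = ((u y₁ - c + k * (a - y₁)) ^ (ν + 1) - (u y₁ - c + k * (b - y₁)) ^ (ν + 1))
          / (k * (-(ν + 1))) := by
      rw [show k * (ν + 1) = -(k * -(ν + 1)) by ring, div_neg, ← neg_div, neg_sub]
    rw [heq]
    exact div_le_div_of_nonneg_right (by linarith) hkν.le
  have step4 : (u y₁ - c + k * (a - y₁)) ^ (ν + 1)
      ≤ (3:ℝ) ^ (-(ν + 1)) * (u a - c) ^ (ν + 1) := by
    have h3a : (u a - c) / 3 ≤ u y₁ - c + k * (a - y₁) := by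
      have h := hwup a ha
      have := ha.1
      nlinarith
    have hpos3 : (0:ℝ) < (u a - c) / 3 := by linarith [hwpos a ha]
    have hp : (u y₁ - c + k * (a - y₁)) ^ (ν + 1) ≤ ((u a - c) / 3) ^ (ν + 1) :=
      Real.rpow_le_rpow_of_nonpos hpos3 h3a (by linarith)
    have hdiv : ((u a - c) / 3) ^ (ν + 1) = (u a - c) ^ (ν + 1) / (3:ℝ) ^ (ν + 1) :=
      Real.div_rpow (hwpos a ha).le (by norm_num) _
    have hneg : (3:ℝ) ^ (-(ν + 1)) = ((3:ℝ) ^ (ν + 1))⁻¹ :=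
      Real.rpow_neg (by norm_num) _
    rw [hneg, inv_mul_eq_div, ← hdiv]
    exact hp
  calc ∫ t in a..b, (u t - c) ^ ν
      ≤ (u y₁ - c + k * (a - y₁)) ^ (ν + 1) / (k * (-(ν + 1))) := hmono.trans step3
    _ ≤ (3:ℝ) ^ (-(ν + 1)) * (u a - c) ^ (ν + 1) / (k * (-(ν + 1))) :=
        div_le_div_of_nonneg_right step4 hkν.le
    _ = (3:ℝ) ^ (-(ν + 1)) / (k * (-(ν + 1))) * (u a - c) ^ (ν + 1) := by ring

/-- Integral bound for exponents in `(-1, 0]`. -/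
lemma int_pos (y₁ z c k ν a b : ℝ) (u : ℝ → ℝ) (hkpos : 0 < k) (hc0 : 0 < u y₁ - c)
    (huc : ContinuousOn u (Set.Icc y₁ z))
    (hwlow : ∀ y ∈ Set.Icc y₁ z, u y₁ - c + k * (y - y₁) ≤ u y - c)
    (hwpos : ∀ y ∈ Set.Icc y₁ z, 0 < u y - c)
    (hν : ν ≤ 0) (hν1 : 0 < ν + 1)
    (ha : a ∈ Set.Icc y₁ z) (hb : b ∈ Set.Icc y₁ z) (hab : a ≤ b) :
    ∫ t in a..b, (u t - c) ^ ν ≤ (u b - c) ^ (ν + 1) / (k * (ν + 1)) := by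
  have hIcc : Set.Icc a b ⊆ Set.Icc y₁ z := Set.Icc_subset_Icc ha.1 hb.2
  have hwlpos : ∀ t, y₁ ≤ t → 0 < u y₁ - c + k * (t - y₁) := by
    intro t ht; nlinarith
  have hint1 : IntervalIntegrable (fun t => (u t - c) ^ ν) MeasureTheory.volume a b := by
    apply ContinuousOn.intervalIntegrable_of_Icc hab
    apply ContinuousOn.rpow_const (((huc.mono hIcc).sub continuousOn_const))
    intro t ht; exact Or.inl (hwpos t (hIcc ht)).ne'
  have hint2 : IntervalIntegrable (fun t => (u y₁ - c + k * (t - y₁)) ^ ν)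
      MeasureTheory.volume a b := by
    apply ContinuousOn.intervalIntegrable_of_Icc hab
    apply ContinuousOn.rpow_const
    · apply Continuous.continuousOn
      exact continuous_const.add (continuous_const.mul (continuous_id.sub continuous_const))
    · intro t ht; exact Or.inl (hwlpos t (le_trans ha.1 ht.1)).ne'
  have hmono : ∫ t in a..b, (u t - c) ^ ν
      ≤ ∫ t in a..b, (u y₁ - c + k * (t - y₁)) ^ ν := by
    apply intervalIntegral.integral_mono_on hab hint1 hint2
    intro t ht
    exact Real.rpow_le_rpow_of_nonpos (hwlpos t (le_trans ha.1 ht.1))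
      (hwlow t (hIcc ht)) hν
  rw [int_wl y₁ (u y₁ - c) k ν a b hkpos hc0 hν1.ne' ha.1 hab] at hmono
  have hkν : 0 < k * (ν + 1) := mul_pos hkpos hν1
  have hwla : (0:ℝ) ≤ (u y₁ - c + k * (a - y₁)) ^ (ν + 1) :=
    (Real.rpow_pos_of_pos (hwlpos a ha.1) _).le
  have hwlb : (u y₁ - c + k * (b - y₁)) ^ (ν + 1) ≤ (u b - c) ^ (ν + 1) :=
    Real.rpow_le_rpow (hwlpos b (le_trans ha.1 hab)).le (hwlow b hb) hν1.le
  calc ∫ t in a..b, (u t - c) ^ ν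
      ≤ ((u y₁ - c + k * (b - y₁)) ^ (ν + 1) - (u y₁ - c + k * (a - y₁)) ^ (ν + 1))
          / (k * (ν + 1)) := hmono
    _ ≤ (u y₁ - c + k * (b - y₁)) ^ (ν + 1) / (k * (ν + 1)) :=
        div_le_div_of_nonneg_right (by linarith) hkν.le
    _ ≤ (u b - c) ^ (ν + 1) / (k * (ν + 1)) := div_le_div_of_nonneg_right hwlb hkν.le

/-- The `δ₁ ^ γ` integral bound for the exponent `γ - 1`. -/
lemma int_gamma (y₁ z δ₁ c k γ a b : ℝ) (u : ℝ → ℝ) (hkpos : 0 < k) (hc0 : 0 < u y₁ - c)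
    (hγ0 : 0 < γ) (hγ1 : γ ≤ 1) (hδ₁0 : 0 < δ₁) (hzdef : z = y₁ + δ₁)
    (huc : ContinuousOn u (Set.Icc y₁ z))
    (hwlow : ∀ y ∈ Set.Icc y₁ z, u y₁ - c + k * (y - y₁) ≤ u y - c)
    (hwpos : ∀ y ∈ Set.Icc y₁ z, 0 < u y - c)
    (ha : a ∈ Set.Icc y₁ z) (hb : b ∈ Set.Icc y₁ z) (hab : a ≤ b) :
    ∫ t in a..b, (u t - c) ^ (γ - 1) ≤ (max 1 ((1 + k) ^ γ / (k * γ))) * δ₁ ^ γ := by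
  have hIcc : Set.Icc a b ⊆ Set.Icc y₁ z := Set.Icc_subset_Icc ha.1 hb.2
  have hδ₁γ : (0:ℝ) ≤ δ₁ ^ γ := (Real.rpow_pos_of_pos hδ₁0 _).le
  have hwlpos : ∀ t, y₁ ≤ t → 0 < u y₁ - c + k * (t - y₁) := by
    intro t ht; nlinarith
  have hint1 : IntervalIntegrable (fun t => (u t - c) ^ (γ - 1)) MeasureTheory.volume a b := by
    apply ContinuousOn.intervalIntegrable_of_Icc hab
    apply ContinuousOn.rpow_const (((huc.mono hIcc).sub continuousOn_const))
    intro t ht; exact Or.inl (hwpos t (hIcc ht)).ne'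
  rcases le_or_gt (u y₁ - c) δ₁ with hcase | hcase
  · have hint2 : IntervalIntegrable (fun t => (u y₁ - c + k * (t - y₁)) ^ (γ - 1))
        MeasureTheory.volume a b := by
      apply ContinuousOn.intervalIntegrable_of_Icc hab
      apply ContinuousOn.rpow_const
      · apply Continuous.continuousOn
        exact continuous_const.add (continuous_const.mul (continuous_id.sub continuous_const))
      · intro t ht; exact Or.inl (hwlpos t (le_trans ha.1 ht.1)).ne'
    have hmono : ∫ t in a..b, (u t - c) ^ (γ - 1)
        ≤ ∫ t in a..b, (u y₁ - c + k * (t - y₁)) ^ (γ - 1) := by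
      apply intervalIntegral.integral_mono_on hab hint1 hint2
      intro t ht
      exact Real.rpow_le_rpow_of_nonpos (hwlpos t (le_trans ha.1 ht.1))
        (hwlow t (hIcc ht)) (by linarith)
    have hex := int_wl y₁ (u y₁ - c) k (γ - 1) a b hkpos hc0
      (by intro h; rw [sub_add_cancel] at h; exact hγ0.ne' h) ha.1 hab
    rw [sub_add_cancel] at hex
    rw [hex] at hmono
    have hkγ : 0 < k * γ := mul_pos hkpos hγ0
    have hwlaγ : (0:ℝ) ≤ (u y₁ - c + k * (a - y₁)) ^ γ :=
      (Real.rpow_pos_of_pos (hwlpos a ha.1) _).le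
    have hwlbγ : (u y₁ - c + k * (b - y₁)) ^ γ ≤ ((1 + k) * δ₁) ^ γ := by
      apply Real.rpow_le_rpow (hwlpos b (le_trans ha.1 hab)).le ?_ hγ0.le
      have hbz : b - y₁ ≤ δ₁ := by
        have := hb.2; rw [hzdef] at this; linarith
      nlinarith [hc0, hkpos]
    have hmul : ((1 + k) * δ₁) ^ γ = (1 + k) ^ γ * δ₁ ^ γ :=
      Real.mul_rpow (by linarith) hδ₁0.le
    calc ∫ t in a..b, (u t - c) ^ (γ - 1)
        ≤ ((u y₁ - c + k * (b - y₁)) ^ γ - (u y₁ - c + k * (a - y₁)) ^ γ) / (k * γ) := hmono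
      _ ≤ (u y₁ - c + k * (b - y₁)) ^ γ / (k * γ) :=
          div_le_div_of_nonneg_right (by linarith) hkγ.le
      _ ≤ ((1 + k) * δ₁) ^ γ / (k * γ) := div_le_div_of_nonneg_right hwlbγ hkγ.le
      _ = ((1 + k) ^ γ / (k * γ)) * δ₁ ^ γ := by rw [hmul]; ring
      _ ≤ (max 1 ((1 + k) ^ γ / (k * γ))) * δ₁ ^ γ :=
          mul_le_mul_of_nonneg_right (le_max_right _ _) hδ₁γ
  · have hpt : ∀ t ∈ Set.Icc a b, (u t - c) ^ (γ - 1) ≤ δ₁ ^ (γ - 1) := by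
      intro t ht
      have h1 := hwlow t (hIcc ht)
      have h2 : δ₁ ≤ u t - c := by nlinarith [(hIcc ht).1, hkpos]
      exact Real.rpow_le_rpow_of_nonpos hδ₁0 h2 (by linarith)
    have h := intervalIntegral.integral_mono_on hab hint1
      (_root_.intervalIntegrable_const (c := δ₁ ^ (γ - 1))) hpt
    rw [intervalIntegral.integral_const, smul_eq_mul] at h
    have hba : b - a ≤ δ₁ := by
      have h1 := ha.1; have h2 := hb.2; rw [hzdef] at h2; linarith
    have hδpow : (0:ℝ) ≤ δ₁ ^ (γ - 1) := (Real.rpow_pos_of_pos hδ₁0 _).le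
    calc ∫ t in a..b, (u t - c) ^ (γ - 1) ≤ (b - a) * δ₁ ^ (γ - 1) := h
      _ ≤ δ₁ * δ₁ ^ (γ - 1) := mul_le_mul_of_nonneg_right hba hδpow
      _ = δ₁ ^ γ := by
          rw [show γ = 1 + (γ - 1) by ring, Real.rpow_add hδ₁0, Real.rpow_one]
          rw [show 1 + (γ - 1) - 1 = γ - 1 by ring]
      _ ≤ (max 1 ((1 + k) ^ γ / (k * γ))) * δ₁ ^ γ := by
          nth_rewrite 1 [← one_mul (δ₁ ^ γ)]
          exact mul_le_mul_of_nonneg_right (le_max_left _ _)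
            (Real.rpow_pos_of_pos hδ₁0 _).le

/-- Bound on `φ'` in terms of a pointwise bound on `F = φ''`. -/
lemma phiD_bound (y₁ z : ℝ) (φ' F G : ℝ → ℝ)
    (hφ2 : ∀ y ∈ Set.Icc y₁ z, HasDerivWithinAt φ' (F y) (Set.Icc y₁ z) y)
    (hFc : ContinuousOn F (Set.Icc y₁ z)) (hGc : ContinuousOn G (Set.Icc y₁ z))
    (hGF : ∀ t ∈ Set.Icc y₁ z, |F t| ≤ G t) :
    ∀ t ∈ Set.Icc y₁ z, |φ' t| ≤ |φ' z| + ∫ s in t..z, G s := by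
  intro t ht
  have hIcc : Set.Icc t z ⊆ Set.Icc y₁ z := Set.Icc_subset_Icc ht.1 (le_refl _)
  have hrep : ∫ s in t..z, F s = φ' z - φ' t :=
    ftc_icc ht.2 (fun x hx => (hφ2 x (hIcc hx)).mono hIcc) (hFc.mono hIcc)
  have h1 : |φ' t| ≤ |φ' z| + |∫ s in t..z, F s| := by
    rw [hrep]
    have h2 := abs_sub_comm (φ' t) (φ' z)
    linarith [abs_sub_abs_le_abs_sub (φ' t) (φ' z), abs_nonneg (φ' t - φ' z)]
  have h2 : |∫ s in t..z, F s| ≤ ∫ s in t..z, |F s| :=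
    intervalIntegral.abs_integral_le_integral_abs ht.2
  have h3 : ∫ s in t..z, |F s| ≤ ∫ s in t..z, G s := by
    apply intervalIntegral.integral_mono_on ht.2
      ((hFc.mono hIcc).abs.intervalIntegrable_of_Icc ht.2)
      ((hGc.mono hIcc).intervalIntegrable_of_Icc ht.2)
    intro s hs; exact hGF s (hIcc hs)
  linarith

/-- Representation of `φ` from the right endpoint. -/
lemma phi_rep_right (y₁ z : ℝ) (φ φ' : ℝ → ℝ)
    (hφ1 : ∀ y ∈ Set.Icc y₁ z, HasDerivWithinAt φ (φ' y) (Set.Icc y₁ z) y)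
    (hφ'c : ContinuousOn φ' (Set.Icc y₁ z)) :
    ∀ y ∈ Set.Icc y₁ z, |φ y| ≤ |φ z| + ∫ t in y..z, |φ' t| := by
  intro y hyy
  have hIcc : Set.Icc y z ⊆ Set.Icc y₁ z := Set.Icc_subset_Icc hyy.1 (le_refl _)
  have hrep : ∫ t in y..z, φ' t = φ z - φ y :=
    ftc_icc hyy.2 (fun x hx => (hφ1 x (hIcc hx)).mono hIcc) (hφ'c.mono hIcc)
  have h1 : |φ y| ≤ |φ z| + |∫ t in y..z, φ' t| := by
    rw [hrep]
    have h2 := abs_sub_comm (φ y) (φ z)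
    linarith [abs_sub_abs_le_abs_sub (φ y) (φ z), abs_nonneg (φ y - φ z)]
  have h2 : |∫ t in y..z, φ' t| ≤ ∫ t in y..z, |φ' t| :=
    intervalIntegral.abs_integral_le_integral_abs hyy.2
  linarith

/-- Representation of `φ` from the left endpoint. -/
lemma phi_rep_left (y₁ z : ℝ) (φ φ' : ℝ → ℝ)
    (hφ1 : ∀ y ∈ Set.Icc y₁ z, HasDerivWithinAt φ (φ' y) (Set.Icc y₁ z) y)
    (hφ'c : ContinuousOn φ' (Set.Icc y₁ z)) :
    ∀ y ∈ Set.Icc y₁ z, |φ y| ≤ |φ y₁| + ∫ t in y₁..y, |φ' t| := by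
  intro y hyy
  have hIcc : Set.Icc y₁ y ⊆ Set.Icc y₁ z := Set.Icc_subset_Icc (le_refl _) hyy.2
  have hrep : ∫ t in y₁..y, φ' t = φ y - φ y₁ :=
    ftc_icc hyy.1 (fun x hx => (hφ1 x (hIcc hx)).mono hIcc) (hφ'c.mono hIcc)
  have h1 : |φ y| ≤ |φ y₁| + |∫ t in y₁..y, φ' t| := by
    rw [hrep]
    linarith [abs_sub_abs_le_abs_sub (φ y) (φ y₁), abs_nonneg (φ y - φ y₁)]
  have h2 : |∫ t in y₁..y, φ' t| ≤ ∫ t in y₁..y, |φ' t| :=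
    intervalIntegral.abs_integral_le_integral_abs hyy.1
  linarith

/-- Pointwise bound on `F` via the weighted sup norm. -/
lemma F_weighted (y₁ z c e : ℝ) (u F : ℝ → ℝ)
    (hwpos : ∀ y ∈ Set.Icc y₁ z, 0 < u y - c)
    (huc : ContinuousOn u (Set.Icc y₁ z)) (hFc : ContinuousOn F (Set.Icc y₁ z)) :
    ∀ t ∈ Set.Icc y₁ z,
      |F t| ≤ supAbs y₁ z (fun s => (u s - c) ^ e * F s) * (u t - c) ^ (-e) := by
  intro t ht
  have hpos := hwpos t ht
  have hwρ : ContinuousOn (fun s => (u s - c) ^ e) (Set.Icc y₁ z) :=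
    (huc.sub continuousOn_const).rpow_const (fun s hs => Or.inl (hwpos s hs).ne')
  have h := le_supAbs (f := fun s => (u s - c) ^ e * F s) (hwρ.mul hFc) ht
  rw [abs_mul, abs_of_pos (Real.rpow_pos_of_pos hpos _)] at h
  have hrw : |F t| = (u t - c) ^ (-e) * ((u t - c) ^ e * |F t|) := by
    rw [← mul_assoc, ← Real.rpow_add hpos, neg_add_cancel, Real.rpow_zero, one_mul]
  rw [hrw, mul_comm (supAbs y₁ z fun s => (u s - c) ^ e * F s) _]
  exact mul_le_mul_of_nonneg_left h (Real.rpow_pos_of_pos hpos _).le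

set_option maxHeartbeats 1000000 in
/-- Estimate (1). -/
lemma est_one (y₁ z δ δ₁ c k γ cL1 c₁ : ℝ) (u φ φ' F : ℝ → ℝ)
    (hγ0 : 0 < γ) (hγ : γ ≤ 1 / 2) (hkpos : 0 < k) (hδpos : 0 < δ)
    (hδ₁0 : 0 < δ₁) (hδ₁δ : δ₁ ≤ δ) (hzdef : z = y₁ + δ₁)
    (hcL1pos : 0 < cL1)
    (hc₁def : c₁ = (3:ℝ) ^ ((1:ℝ) - γ) / (k * (1 - γ)))
    (huc : ContinuousOn u (Set.Icc y₁ z))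
    (hwpos : ∀ y ∈ Set.Icc y₁ z, 0 < u y - c)
    (hφ1 : ∀ y ∈ Set.Icc y₁ z, HasDerivWithinAt φ (φ' y) (Set.Icc y₁ z) y)
    (hφ2 : ∀ y ∈ Set.Icc y₁ z, HasDerivWithinAt φ' (F y) (Set.Icc y₁ z) y)
    (hFc : ContinuousOn F (Set.Icc y₁ z))
    (hIneg : ∀ ν : ℝ, ν + 1 < 0 → ∀ a b, a ∈ Set.Icc y₁ z → b ∈ Set.Icc y₁ z → a ≤ b →
      ∫ t in a..b, (u t - c) ^ ν
        ≤ (3:ℝ) ^ (-(ν + 1)) / (k * (-(ν + 1))) * (u a - c) ^ (ν + 1))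
    (hIγ : ∀ a b, a ∈ Set.Icc y₁ z → b ∈ Set.Icc y₁ z → a ≤ b →
      ∫ t in a..b, (u t - c) ^ (γ - 1) ≤ cL1 * δ₁ ^ γ) :
    supAbs y₁ z φ ≤ (max 1 (max (δ ^ ((1:ℝ) - γ)) (c₁ * cL1))) *
      (δ₁ ^ γ * supAbs y₁ z (fun y => (u y - c) ^ ((2:ℝ) - γ) * F y)
        + |φ z| + δ₁ ^ γ * |φ' z|) := by
  have hzle : y₁ ≤ z := by rw [hzdef]; linarith
  have hzmemI : z ∈ Set.Icc y₁ z := ⟨hzle, le_refl _⟩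
  have hδ₁γ : (0:ℝ) < δ₁ ^ γ := Real.rpow_pos_of_pos hδ₁0 _
  have hφ'c : ContinuousOn φ' (Set.Icc y₁ z) := fun x hx => (hφ2 x hx).continuousWithinAt
  have hwρ : ∀ ν : ℝ, ContinuousOn (fun t => (u t - c) ^ ν) (Set.Icc y₁ z) :=
    fun ν => (huc.sub continuousOn_const).rpow_const (fun t ht => Or.inl (hwpos t ht).ne')
  have hc₁pos : 0 < c₁ := by
    rw [hc₁def]
    exact div_pos (Real.rpow_pos_of_pos three_pos _) (mul_pos hkpos (by linarith))
  set M₁ := supAbs y₁ z (fun y => (u y - c) ^ ((2:ℝ) - γ) * F y) with hM₁def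
  have hM₁0 : 0 ≤ M₁ := supAbs_nonneg _ _ _
  have hF1 : ∀ t ∈ Set.Icc y₁ z, |F t| ≤ M₁ * (u t - c) ^ (γ - 2) := by
    intro t ht
    have h := F_weighted y₁ z c (2 - γ) u F hwpos huc hFc t ht
    rw [show -(2 - γ) = γ - 2 by ring] at h
    exact h
  have hG1c : ContinuousOn (fun t => M₁ * (u t - c) ^ (γ - 2)) (Set.Icc y₁ z) :=
    continuousOn_const.mul (hwρ (γ - 2))
  have hφ'1 : ∀ t ∈ Set.Icc y₁ z, |φ' t| ≤ |φ' z| + M₁ * c₁ * (u t - c) ^ (γ - 1) := by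
    intro t ht
    have h := phiD_bound y₁ z φ' F _ hφ2 hFc hG1c hF1 t ht
    rw [intervalIntegral.integral_const_mul] at h
    have hI := hIneg (γ - 2) (by linarith) t z ht hzmemI ht.2
    rw [show γ - 2 + 1 = γ - 1 by ring] at hI
    rw [show -(γ - 1) = 1 - γ by ring] at hI
    rw [← hc₁def] at hI
    calc |φ' t| ≤ |φ' z| + M₁ * ∫ s in t..z, (u s - c) ^ (γ - 2) := h
      _ ≤ |φ' z| + M₁ * (c₁ * (u t - c) ^ (γ - 1)) :=
          add_le_add_right (mul_le_mul_of_nonneg_left hI hM₁0) _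
      _ = |φ' z| + M₁ * c₁ * (u t - c) ^ (γ - 1) := by ring
  have hbd : ∀ y ∈ Set.Icc y₁ z, |φ y| ≤ |φ z| + δ₁ * |φ' z| + M₁ * c₁ * (cL1 * δ₁ ^ γ) := by
    intro y hyy
    have h1 := phi_rep_right y₁ z φ φ' hφ1 hφ'c y hyy
    have hIcc : Set.Icc y z ⊆ Set.Icc y₁ z := Set.Icc_subset_Icc hyy.1 (le_refl _)
    have hg : ContinuousOn (fun t => M₁ * c₁ * (u t - c) ^ (γ - 1)) (Set.Icc y z) :=
      continuousOn_const.mul ((hwρ (γ - 1)).mono hIcc)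
    have h2 : ∫ t in y..z, |φ' t| ≤
        ∫ t in y..z, (|φ' z| + M₁ * c₁ * (u t - c) ^ (γ - 1)) := by
      apply intervalIntegral.integral_mono_on hyy.2
        ((hφ'c.mono hIcc).abs.intervalIntegrable_of_Icc hyy.2)
        ((continuousOn_const.add hg).intervalIntegrable_of_Icc hyy.2)
      intro t ht; exact hφ'1 t (hIcc ht)
    rw [intervalIntegral.integral_add _root_.intervalIntegrable_const
        (hg.intervalIntegrable_of_Icc hyy.2),
      intervalIntegral.integral_const, smul_eq_mul,
      intervalIntegral.integral_const_mul] at h2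
    have h3 := hIγ y z hyy hzmemI hyy.2
    have hzy : z - y ≤ δ₁ := by rw [hzdef]; linarith [hyy.1]
    have hM₁c₁ : 0 ≤ M₁ * c₁ := mul_nonneg hM₁0 hc₁pos.le
    have h4 : (z - y) * |φ' z| ≤ δ₁ * |φ' z| := mul_le_mul_of_nonneg_right hzy (abs_nonneg _)
    have h5 : M₁ * c₁ * (∫ t in y..z, (u t - c) ^ (γ - 1)) ≤ M₁ * c₁ * (cL1 * δ₁ ^ γ) :=
      mul_le_mul_of_nonneg_left h3 hM₁c₁
    linarith
  have hδ₁split : δ₁ ≤ δ ^ ((1:ℝ) - γ) * δ₁ ^ γ := by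
    have h1 : δ₁ = δ₁ ^ ((1:ℝ) - γ) * δ₁ ^ γ := by
      rw [← Real.rpow_add hδ₁0, show (1:ℝ) - γ + γ = 1 by ring, Real.rpow_one]
    calc δ₁ = δ₁ ^ ((1:ℝ) - γ) * δ₁ ^ γ := h1
      _ ≤ δ ^ ((1:ℝ) - γ) * δ₁ ^ γ := mul_le_mul_of_nonneg_right
          (Real.rpow_le_rpow hδ₁0.le hδ₁δ (by linarith)) hδ₁γ.le
  have hparen : 0 ≤ δ₁ ^ γ * M₁ + |φ z| + δ₁ ^ γ * |φ' z| := by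
    have h6 := mul_nonneg hδ₁γ.le hM₁0
    have h7 := mul_nonneg hδ₁γ.le (abs_nonneg (φ' z))
    linarith [abs_nonneg (φ z)]
  have hE : (0:ℝ) ≤ max 1 (max (δ ^ ((1:ℝ) - γ)) (c₁ * cL1)) :=
    le_trans zero_le_one (le_max_left _ _)
  apply supAbs_le (mul_nonneg hE hparen)
  intro y hyy
  calc |φ y| ≤ |φ z| + δ₁ * |φ' z| + M₁ * c₁ * (cL1 * δ₁ ^ γ) := hbd y hyy
    _ ≤ |φ z| + δ ^ ((1:ℝ) - γ) * (δ₁ ^ γ * |φ' z|) + (c₁ * cL1) * (δ₁ ^ γ * M₁) := by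
        have h6 : δ₁ * |φ' z| ≤ δ ^ ((1:ℝ) - γ) * (δ₁ ^ γ * |φ' z|) := by
          rw [← mul_assoc]
          exact mul_le_mul_of_nonneg_right hδ₁split (abs_nonneg _)
        have h7 : M₁ * c₁ * (cL1 * δ₁ ^ γ) = (c₁ * cL1) * (δ₁ ^ γ * M₁) := by ring
        linarith [h7.le]
    _ = (c₁ * cL1) * (δ₁ ^ γ * M₁) + 1 * |φ z| + δ ^ ((1:ℝ) - γ) * (δ₁ ^ γ * |φ' z|) := by
        ring
    _ ≤ _ := by
        apply combo3
        · exact le_max_of_le_right (le_max_right _ _)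
        · exact le_max_left _ _
        · exact le_max_of_le_right (le_max_left _ _)
        · exact mul_nonneg hδ₁γ.le hM₁0
        · exact abs_nonneg _
        · exact mul_nonneg hδ₁γ.le (abs_nonneg _)

set_option maxHeartbeats 1000000 in
/-- Estimate (2). -/
lemma est_two (y₁ z δ δ₁ c k γ cL1 c₂ W : ℝ) (u φ φ' F : ℝ → ℝ)
    (hγ0 : 0 < γ) (hγ : γ ≤ 1 / 2) (hkpos : 0 < k) (hδpos : 0 < δ)
    (hδ₁0 : 0 < δ₁) (hδ₁δ : δ₁ ≤ δ) (hzdef : z = y₁ + δ₁)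
    (hcL1pos : 0 < cL1)
    (hc₂def : c₂ = (3:ℝ) ^ ((2:ℝ) - 2 * γ) / (k * (2 - 2 * γ)))
    (hW0 : 0 < W) (hwW : ∀ y ∈ Set.Icc y₁ z, u y - c ≤ W)
    (hwmono : ∀ a ∈ Set.Icc y₁ z, ∀ b ∈ Set.Icc y₁ z, a ≤ b → u a - c ≤ u b - c)
    (huc : ContinuousOn u (Set.Icc y₁ z))
    (hwpos : ∀ y ∈ Set.Icc y₁ z, 0 < u y - c)
    (hφ1 : ∀ y ∈ Set.Icc y₁ z, HasDerivWithinAt φ (φ' y) (Set.Icc y₁ z) y)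
    (hφ2 : ∀ y ∈ Set.Icc y₁ z, HasDerivWithinAt φ' (F y) (Set.Icc y₁ z) y)
    (hFc : ContinuousOn F (Set.Icc y₁ z))
    (hIneg : ∀ ν : ℝ, ν + 1 < 0 → ∀ a b, a ∈ Set.Icc y₁ z → b ∈ Set.Icc y₁ z → a ≤ b →
      ∫ t in a..b, (u t - c) ^ ν
        ≤ (3:ℝ) ^ (-(ν + 1)) / (k * (-(ν + 1))) * (u a - c) ^ (ν + 1))
    (hIγ : ∀ a b, a ∈ Set.Icc y₁ z → b ∈ Set.Icc y₁ z → a ≤ b →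
      ∫ t in a..b, (u t - c) ^ (γ - 1) ≤ cL1 * δ₁ ^ γ) :
    supAbs y₁ z (fun y => (u y - c) ^ ((1:ℝ) - γ) * φ y)
      + δ₁ ^ γ * supAbs y₁ z (fun y => (u y - c) ^ ((2:ℝ) - 2 * γ) * φ' y)
      ≤ ((c₂ * cL1 + c₂) + W ^ ((1:ℝ) - γ) + (W ^ ((1:ℝ) - γ) * δ ^ ((1:ℝ) - γ)
          + W ^ ((2:ℝ) - 2 * γ)))
        * (δ₁ ^ γ * supAbs y₁ z (fun y => (u y - c) ^ ((3:ℝ) - 2 * γ) * F y)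
          + |φ z| + δ₁ ^ γ * |φ' z|) := by
  have hzle : y₁ ≤ z := by rw [hzdef]; linarith
  have hzmemI : z ∈ Set.Icc y₁ z := ⟨hzle, le_refl _⟩
  have hδ₁γ : (0:ℝ) < δ₁ ^ γ := Real.rpow_pos_of_pos hδ₁0 _
  have hφ'c : ContinuousOn φ' (Set.Icc y₁ z) := fun x hx => (hφ2 x hx).continuousWithinAt
  have hwρ : ∀ ν : ℝ, ContinuousOn (fun t => (u t - c) ^ ν) (Set.Icc y₁ z) :=
    fun ν => (huc.sub continuousOn_const).rpow_const (fun t ht => Or.inl (hwpos t ht).ne')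
  have hc₂pos : 0 < c₂ := by
    rw [hc₂def]
    exact div_pos (Real.rpow_pos_of_pos three_pos _) (mul_pos hkpos (by linarith))
  set M₂ := supAbs y₁ z (fun y => (u y - c) ^ ((3:ℝ) - 2 * γ) * F y) with hM₂def
  have hM₂0 : 0 ≤ M₂ := supAbs_nonneg _ _ _
  have hδ₁split : δ₁ ≤ δ ^ ((1:ℝ) - γ) * δ₁ ^ γ := by
    have h1 : δ₁ = δ₁ ^ ((1:ℝ) - γ) * δ₁ ^ γ := by
      rw [← Real.rpow_add hδ₁0, show (1:ℝ) - γ + γ = 1 by ring, Real.rpow_one]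
    calc δ₁ = δ₁ ^ ((1:ℝ) - γ) * δ₁ ^ γ := h1
      _ ≤ δ ^ ((1:ℝ) - γ) * δ₁ ^ γ := mul_le_mul_of_nonneg_right
          (Real.rpow_le_rpow hδ₁0.le hδ₁δ (by linarith)) hδ₁γ.le
  have hF2 : ∀ t ∈ Set.Icc y₁ z, |F t| ≤ M₂ * (u t - c) ^ (2 * γ - 3) := by
    intro t ht
    have h := F_weighted y₁ z c (3 - 2 * γ) u F hwpos huc hFc t ht
    rw [show -(3 - 2 * γ) = 2 * γ - 3 by ring] at h
    exact h
  have hG2c : ContinuousOn (fun t => M₂ * (u t - c) ^ (2 * γ - 3)) (Set.Icc y₁ z) :=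
    continuousOn_const.mul (hwρ (2 * γ - 3))
  have hφ'2 : ∀ t ∈ Set.Icc y₁ z, |φ' t| ≤ |φ' z| + M₂ * c₂ * (u t - c) ^ (2 * γ - 2) := by
    intro t ht
    have h := phiD_bound y₁ z φ' F _ hφ2 hFc hG2c hF2 t ht
    rw [intervalIntegral.integral_const_mul] at h
    have hI := hIneg (2 * γ - 3) (by linarith) t z ht hzmemI ht.2
    rw [show 2 * γ - 3 + 1 = 2 * γ - 2 by ring] at hI
    rw [show -(2 * γ - 2) = 2 - 2 * γ by ring] at hI
    rw [← hc₂def] at hI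
    calc |φ' t| ≤ |φ' z| + M₂ * ∫ s in t..z, (u s - c) ^ (2 * γ - 3) := h
      _ ≤ |φ' z| + M₂ * (c₂ * (u t - c) ^ (2 * γ - 2)) :=
          add_le_add_right (mul_le_mul_of_nonneg_left hI hM₂0) _
      _ = |φ' z| + M₂ * c₂ * (u t - c) ^ (2 * γ - 2) := by ring
  -- part B
  have hSB : supAbs y₁ z (fun y => (u y - c) ^ ((2:ℝ) - 2 * γ) * φ' y)
      ≤ W ^ ((2:ℝ) - 2 * γ) * |φ' z| + M₂ * c₂ := by
    have hBnn : 0 ≤ W ^ ((2:ℝ) - 2 * γ) * |φ' z| + M₂ * c₂ := by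
      have h1 : 0 ≤ W ^ ((2:ℝ) - 2 * γ) * |φ' z| :=
        mul_nonneg (Real.rpow_pos_of_pos hW0 _).le (abs_nonneg _)
      nlinarith [mul_nonneg hM₂0 hc₂pos.le]
    apply supAbs_le hBnn
    intro y hyy
    have hpos := hwpos y hyy
    have hw22 : (0:ℝ) < (u y - c) ^ ((2:ℝ) - 2 * γ) := Real.rpow_pos_of_pos hpos _
    have habs : |(u y - c) ^ ((2:ℝ) - 2 * γ) * φ' y|
        = (u y - c) ^ ((2:ℝ) - 2 * γ) * |φ' y| := by
      rw [abs_mul, abs_of_pos hw22]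
    rw [habs]
    have hone : (u y - c) ^ ((2:ℝ) - 2 * γ) * (u y - c) ^ (2 * γ - 2) = 1 := by
      rw [← Real.rpow_add hpos, show (2:ℝ) - 2 * γ + (2 * γ - 2) = 0 by ring, Real.rpow_zero]
    have hWle : (u y - c) ^ ((2:ℝ) - 2 * γ) ≤ W ^ ((2:ℝ) - 2 * γ) :=
      Real.rpow_le_rpow hpos.le (hwW y hyy) (by linarith)
    calc (u y - c) ^ ((2:ℝ) - 2 * γ) * |φ' y|
        ≤ (u y - c) ^ ((2:ℝ) - 2 * γ) * (|φ' z| + M₂ * c₂ * (u y - c) ^ (2 * γ - 2)) :=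
          mul_le_mul_of_nonneg_left (hφ'2 y hyy) hw22.le
      _ = (u y - c) ^ ((2:ℝ) - 2 * γ) * |φ' z|
          + M₂ * c₂ * ((u y - c) ^ ((2:ℝ) - 2 * γ) * (u y - c) ^ (2 * γ - 2)) := by ring
      _ = (u y - c) ^ ((2:ℝ) - 2 * γ) * |φ' z| + M₂ * c₂ := by rw [hone, mul_one]
      _ ≤ W ^ ((2:ℝ) - 2 * γ) * |φ' z| + M₂ * c₂ := by
          have := mul_le_mul_of_nonneg_right hWle (abs_nonneg (φ' z))
          linarith
  -- part A
  have hIA : ∀ y ∈ Set.Icc y₁ z, ∫ t in y..z, (u t - c) ^ (2 * γ - 2)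
      ≤ (u y - c) ^ (γ - 1) * (cL1 * δ₁ ^ γ) := by
    intro y hyy
    have hIcc : Set.Icc y z ⊆ Set.Icc y₁ z := Set.Icc_subset_Icc hyy.1 (le_refl _)
    have hposy := hwpos y hyy
    have hpt : ∀ t ∈ Set.Icc y z, (u t - c) ^ (2 * γ - 2)
        ≤ (u y - c) ^ (γ - 1) * (u t - c) ^ (γ - 1) := by
      intro t ht
      have hpost := hwpos t (hIcc ht)
      have hsplit : (u t - c) ^ (2 * γ - 2) = (u t - c) ^ (γ - 1) * (u t - c) ^ (γ - 1) := by
        rw [← Real.rpow_add hpost, show γ - 1 + (γ - 1) = 2 * γ - 2 by ring]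
      rw [hsplit]
      apply mul_le_mul_of_nonneg_right ?_ (Real.rpow_pos_of_pos hpost _).le
      exact Real.rpow_le_rpow_of_nonpos hposy (hwmono y hyy t (hIcc ht) ht.1) (by linarith)
    have hint1 : IntervalIntegrable (fun t => (u t - c) ^ (2 * γ - 2))
        MeasureTheory.volume y z := ((hwρ (2 * γ - 2)).mono hIcc).intervalIntegrable_of_Icc hyy.2
    have hint2 : IntervalIntegrable (fun t => (u y - c) ^ (γ - 1) * (u t - c) ^ (γ - 1))
        MeasureTheory.volume y z :=
      (continuousOn_const.mul ((hwρ (γ - 1)).mono hIcc)).intervalIntegrable_of_Icc hyy.2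
    have h1 := intervalIntegral.integral_mono_on hyy.2 hint1 hint2 hpt
    rw [intervalIntegral.integral_const_mul] at h1
    refine h1.trans ?_
    exact mul_le_mul_of_nonneg_left (hIγ y z hyy hzmemI hyy.2)
      (Real.rpow_pos_of_pos hposy _).le
  have hbdA : ∀ y ∈ Set.Icc y₁ z, |φ y| ≤ |φ z| + δ₁ * |φ' z|
      + M₂ * c₂ * ((u y - c) ^ (γ - 1) * (cL1 * δ₁ ^ γ)) := by
    intro y hyy
    have h1 := phi_rep_right y₁ z φ φ' hφ1 hφ'c y hyy
    have hIcc : Set.Icc y z ⊆ Set.Icc y₁ z := Set.Icc_subset_Icc hyy.1 (le_refl _)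
    have hg : ContinuousOn (fun t => M₂ * c₂ * (u t - c) ^ (2 * γ - 2)) (Set.Icc y z) :=
      continuousOn_const.mul ((hwρ (2 * γ - 2)).mono hIcc)
    have h2 : ∫ t in y..z, |φ' t| ≤
        ∫ t in y..z, (|φ' z| + M₂ * c₂ * (u t - c) ^ (2 * γ - 2)) := by
      apply intervalIntegral.integral_mono_on hyy.2
        ((hφ'c.mono hIcc).abs.intervalIntegrable_of_Icc hyy.2)
        ((continuousOn_const.add hg).intervalIntegrable_of_Icc hyy.2)
      intro t ht; exact hφ'2 t (hIcc ht)
    rw [intervalIntegral.integral_add _root_.intervalIntegrable_const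
        (hg.intervalIntegrable_of_Icc hyy.2),
      intervalIntegral.integral_const, smul_eq_mul,
      intervalIntegral.integral_const_mul] at h2
    have h3 := hIA y hyy
    have hzy : z - y ≤ δ₁ := by rw [hzdef]; linarith [hyy.1]
    have h4 : (z - y) * |φ' z| ≤ δ₁ * |φ' z| := mul_le_mul_of_nonneg_right hzy (abs_nonneg _)
    have h5 : M₂ * c₂ * (∫ t in y..z, (u t - c) ^ (2 * γ - 2)) ≤
        M₂ * c₂ * ((u y - c) ^ (γ - 1) * (cL1 * δ₁ ^ γ)) :=
      mul_le_mul_of_nonneg_left h3 (mul_nonneg hM₂0 hc₂pos.le)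
    linarith
  have hSA : supAbs y₁ z (fun y => (u y - c) ^ ((1:ℝ) - γ) * φ y)
      ≤ W ^ ((1:ℝ) - γ) * |φ z| + (W ^ ((1:ℝ) - γ) * δ ^ ((1:ℝ) - γ)) * (δ₁ ^ γ * |φ' z|)
        + (c₂ * cL1) * (δ₁ ^ γ * M₂) := by
    have hAnn : 0 ≤ W ^ ((1:ℝ) - γ) * |φ z|
        + (W ^ ((1:ℝ) - γ) * δ ^ ((1:ℝ) - γ)) * (δ₁ ^ γ * |φ' z|)
        + (c₂ * cL1) * (δ₁ ^ γ * M₂) := by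
      have hW1 : (0:ℝ) ≤ W ^ ((1:ℝ) - γ) := (Real.rpow_pos_of_pos hW0 _).le
      have hδ1 : (0:ℝ) ≤ δ ^ ((1:ℝ) - γ) := (Real.rpow_pos_of_pos hδpos _).le
      have h1 := mul_nonneg hW1 (abs_nonneg (φ z))
      have h2 := mul_nonneg (mul_nonneg hW1 hδ1) (mul_nonneg hδ₁γ.le (abs_nonneg (φ' z)))
      have h3 := mul_nonneg (mul_nonneg hc₂pos.le hcL1pos.le) (mul_nonneg hδ₁γ.le hM₂0)
      linarith
    apply supAbs_le hAnn
    intro y hyy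
    have hpos := hwpos y hyy
    have hw1γ : (0:ℝ) < (u y - c) ^ ((1:ℝ) - γ) := Real.rpow_pos_of_pos hpos _
    have habs : |(u y - c) ^ ((1:ℝ) - γ) * φ y| = (u y - c) ^ ((1:ℝ) - γ) * |φ y| := by
      rw [abs_mul, abs_of_pos hw1γ]
    rw [habs]
    have hone : (u y - c) ^ ((1:ℝ) - γ) * (u y - c) ^ (γ - 1) = 1 := by
      rw [← Real.rpow_add hpos, show (1:ℝ) - γ + (γ - 1) = 0 by ring, Real.rpow_zero]
    have hWle : (u y - c) ^ ((1:ℝ) - γ) ≤ W ^ ((1:ℝ) - γ) :=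
      Real.rpow_le_rpow hpos.le (hwW y hyy) (by linarith)
    have hzφ : (0:ℝ) ≤ |φ z| + δ₁ * |φ' z| := by
      have := mul_nonneg hδ₁0.le (abs_nonneg (φ' z))
      linarith [abs_nonneg (φ z)]
    calc (u y - c) ^ ((1:ℝ) - γ) * |φ y|
        ≤ (u y - c) ^ ((1:ℝ) - γ) * (|φ z| + δ₁ * |φ' z|
            + M₂ * c₂ * ((u y - c) ^ (γ - 1) * (cL1 * δ₁ ^ γ))) :=
          mul_le_mul_of_nonneg_left (hbdA y hyy) hw1γ.le
      _ = (u y - c) ^ ((1:ℝ) - γ) * (|φ z| + δ₁ * |φ' z|)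
            + (M₂ * c₂ * (cL1 * δ₁ ^ γ)) *
              ((u y - c) ^ ((1:ℝ) - γ) * (u y - c) ^ (γ - 1)) := by ring
      _ = (u y - c) ^ ((1:ℝ) - γ) * (|φ z| + δ₁ * |φ' z|) + M₂ * c₂ * (cL1 * δ₁ ^ γ) := by
            rw [hone, mul_one]
      _ ≤ W ^ ((1:ℝ) - γ) * (|φ z| + δ₁ * |φ' z|) + M₂ * c₂ * (cL1 * δ₁ ^ γ) := by
            have := mul_le_mul_of_nonneg_right hWle hzφ
            linarith
      _ ≤ W ^ ((1:ℝ) - γ) * (|φ z| + (δ ^ ((1:ℝ) - γ) * δ₁ ^ γ) * |φ' z|)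
            + M₂ * c₂ * (cL1 * δ₁ ^ γ) := by
            have hW1 : (0:ℝ) ≤ W ^ ((1:ℝ) - γ) := (Real.rpow_pos_of_pos hW0 _).le
            have h6 : δ₁ * |φ' z| ≤ (δ ^ ((1:ℝ) - γ) * δ₁ ^ γ) * |φ' z| :=
              mul_le_mul_of_nonneg_right hδ₁split (abs_nonneg _)
            have h7 := mul_le_mul_of_nonneg_left
              (add_le_add_left h6 (|φ z|)) hW1
            linarith
      _ = W ^ ((1:ℝ) - γ) * |φ z| + (W ^ ((1:ℝ) - γ) * δ ^ ((1:ℝ) - γ)) * (δ₁ ^ γ * |φ' z|)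
            + (c₂ * cL1) * (δ₁ ^ γ * M₂) := by ring
  -- combine
  have hsum := add_le_add hSA (mul_le_mul_of_nonneg_left hSB hδ₁γ.le)
  refine hsum.trans ?_
  have hW1 : (0:ℝ) ≤ W ^ ((1:ℝ) - γ) := (Real.rpow_pos_of_pos hW0 _).le
  have hW2 : (0:ℝ) ≤ W ^ ((2:ℝ) - 2 * γ) := (Real.rpow_pos_of_pos hW0 _).le
  have hδ1 : (0:ℝ) ≤ δ ^ ((1:ℝ) - γ) := (Real.rpow_pos_of_pos hδpos _).le
  have heq : W ^ ((1:ℝ) - γ) * |φ z| + (W ^ ((1:ℝ) - γ) * δ ^ ((1:ℝ) - γ)) * (δ₁ ^ γ * |φ' z|)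
        + (c₂ * cL1) * (δ₁ ^ γ * M₂)
      + δ₁ ^ γ * (W ^ ((2:ℝ) - 2 * γ) * |φ' z| + M₂ * c₂)
      = (c₂ * cL1 + c₂) * (δ₁ ^ γ * M₂) + W ^ ((1:ℝ) - γ) * |φ z|
        + (W ^ ((1:ℝ) - γ) * δ ^ ((1:ℝ) - γ) + W ^ ((2:ℝ) - 2 * γ)) * (δ₁ ^ γ * |φ' z|) := by
    ring
  rw [heq]
  apply combo3
  · nlinarith [mul_nonneg hW1 hδ1, mul_nonneg hc₂pos.le hcL1pos.le, hc₂pos.le]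
  · nlinarith [mul_nonneg hc₂pos.le hcL1pos.le, hc₂pos.le, mul_nonneg hW1 hδ1]
  · nlinarith [mul_nonneg hc₂pos.le hcL1pos.le, hc₂pos.le]
  · exact mul_nonneg hδ₁γ.le hM₂0
  · exact abs_nonneg _
  · exact mul_nonneg hδ₁γ.le (abs_nonneg _)

set_option maxHeartbeats 1000000 in
/-- Estimate (3). -/
lemma est_three (y₁ z δ δ₁ c k γ c₃ W : ℝ) (u φ φ' F : ℝ → ℝ)
    (hγ0 : 0 < γ) (hγ : γ ≤ 1 / 2) (hkpos : 0 < k) (hδpos : 0 < δ)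
    (hδ₁0 : 0 < δ₁) (hδ₁δ : δ₁ ≤ δ) (hzdef : z = y₁ + δ₁) (hc0 : 0 < u y₁ - c)
    (hc₃def : c₃ = (3:ℝ) ^ γ / (k * γ))
    (hW0 : 0 < W) (hwW : ∀ y ∈ Set.Icc y₁ z, u y - c ≤ W)
    (hwlow : ∀ y ∈ Set.Icc y₁ z, u y₁ - c + k * (y - y₁) ≤ u y - c)
    (huc : ContinuousOn u (Set.Icc y₁ z))
    (hwpos : ∀ y ∈ Set.Icc y₁ z, 0 < u y - c)
    (hφ1 : ∀ y ∈ Set.Icc y₁ z, HasDerivWithinAt φ (φ' y) (Set.Icc y₁ z) y)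
    (hφ2 : ∀ y ∈ Set.Icc y₁ z, HasDerivWithinAt φ' (F y) (Set.Icc y₁ z) y)
    (hFc : ContinuousOn F (Set.Icc y₁ z))
    (hIneg : ∀ ν : ℝ, ν + 1 < 0 → ∀ a b, a ∈ Set.Icc y₁ z → b ∈ Set.Icc y₁ z → a ≤ b →
      ∫ t in a..b, (u t - c) ^ ν
        ≤ (3:ℝ) ^ (-(ν + 1)) / (k * (-(ν + 1))) * (u a - c) ^ (ν + 1))
    (hIpos : ∀ ν : ℝ, ν ≤ 0 → 0 < ν + 1 → ∀ a b, a ∈ Set.Icc y₁ z → b ∈ Set.Icc y₁ z →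
      a ≤ b → ∫ t in a..b, (u t - c) ^ ν ≤ (u b - c) ^ (ν + 1) / (k * (ν + 1))) :
    supAbs y₁ z (fun y => (u y - c) ^ (γ - 1) * φ y)
      ≤ (c₃ / (k * (1 - γ)) + 1 + W ^ γ / k) *
        (supAbs y₁ z (fun y => (u y - c) ^ (γ + 1) * F y)
          + (u y₁ - c) ^ (γ - 1) * |φ y₁| + |φ z| + |φ' z|) := by
  have hzle : y₁ ≤ z := by rw [hzdef]; linarith
  have hzmemI : z ∈ Set.Icc y₁ z := ⟨hzle, le_refl _⟩
  have hy₁memI : y₁ ∈ Set.Icc y₁ z := ⟨le_refl _, hzle⟩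
  have hφ'c : ContinuousOn φ' (Set.Icc y₁ z) := fun x hx => (hφ2 x hx).continuousWithinAt
  have hwρ : ∀ ν : ℝ, ContinuousOn (fun t => (u t - c) ^ ν) (Set.Icc y₁ z) :=
    fun ν => (huc.sub continuousOn_const).rpow_const (fun t ht => Or.inl (hwpos t ht).ne')
  have hc₃pos : 0 < c₃ := by
    rw [hc₃def]
    exact div_pos (Real.rpow_pos_of_pos three_pos _) (mul_pos hkpos hγ0)
  set M₃ := supAbs y₁ z (fun y => (u y - c) ^ (γ + 1) * F y) with hM₃def
  have hM₃0 : 0 ≤ M₃ := supAbs_nonneg _ _ _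
  have hF3 : ∀ t ∈ Set.Icc y₁ z, |F t| ≤ M₃ * (u t - c) ^ (-γ - 1) := by
    intro t ht
    have h := F_weighted y₁ z c (γ + 1) u F hwpos huc hFc t ht
    rw [show -(γ + 1) = -γ - 1 by ring] at h
    exact h
  have hG3c : ContinuousOn (fun t => M₃ * (u t - c) ^ (-γ - 1)) (Set.Icc y₁ z) :=
    continuousOn_const.mul (hwρ (-γ - 1))
  have hφ'3 : ∀ t ∈ Set.Icc y₁ z, |φ' t| ≤ |φ' z| + M₃ * c₃ * (u t - c) ^ (-γ) := by
    intro t ht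
    have h := phiD_bound y₁ z φ' F _ hφ2 hFc hG3c hF3 t ht
    rw [intervalIntegral.integral_const_mul] at h
    have hI := hIneg (-γ - 1) (by linarith) t z ht hzmemI ht.2
    rw [show -γ - 1 + 1 = -γ by ring] at hI
    rw [show -(-γ) = γ by ring] at hI
    rw [← hc₃def] at hI
    calc |φ' t| ≤ |φ' z| + M₃ * ∫ s in t..z, (u s - c) ^ (-γ - 1) := h
      _ ≤ |φ' z| + M₃ * (c₃ * (u t - c) ^ (-γ)) :=
          add_le_add_right (mul_le_mul_of_nonneg_left hI hM₃0) _
      _ = |φ' z| + M₃ * c₃ * (u t - c) ^ (-γ) := by ring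
  have hbd : ∀ y ∈ Set.Icc y₁ z, |φ y| ≤ |φ y₁| + (y - y₁) * |φ' z|
      + M₃ * c₃ * ((u y - c) ^ (1 - γ) / (k * (1 - γ))) := by
    intro y hyy
    have h1 := phi_rep_left y₁ z φ φ' hφ1 hφ'c y hyy
    have hIcc : Set.Icc y₁ y ⊆ Set.Icc y₁ z := Set.Icc_subset_Icc (le_refl _) hyy.2
    have hg : ContinuousOn (fun t => M₃ * c₃ * (u t - c) ^ (-γ)) (Set.Icc y₁ y) :=
      continuousOn_const.mul ((hwρ (-γ)).mono hIcc)
    have h2 : ∫ t in y₁..y, |φ' t| ≤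
        ∫ t in y₁..y, (|φ' z| + M₃ * c₃ * (u t - c) ^ (-γ)) := by
      apply intervalIntegral.integral_mono_on hyy.1
        ((hφ'c.mono hIcc).abs.intervalIntegrable_of_Icc hyy.1)
        ((continuousOn_const.add hg).intervalIntegrable_of_Icc hyy.1)
      intro t ht; exact hφ'3 t (hIcc ht)
    rw [intervalIntegral.integral_add _root_.intervalIntegrable_const
        (hg.intervalIntegrable_of_Icc hyy.1),
      intervalIntegral.integral_const, smul_eq_mul,
      intervalIntegral.integral_const_mul] at h2
    have h3 := hIpos (-γ) (by linarith) (by linarith) y₁ y hy₁memI hyy hyy.1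
    rw [show -γ + 1 = 1 - γ by ring] at h3
    have hM₃c₃ : 0 ≤ M₃ * c₃ := mul_nonneg hM₃0 hc₃pos.le
    have h5 : M₃ * c₃ * (∫ t in y₁..y, (u t - c) ^ (-γ)) ≤
        M₃ * c₃ * ((u y - c) ^ (1 - γ) / (k * (1 - γ))) :=
      mul_le_mul_of_nonneg_left h3 hM₃c₃
    linarith
  have hparen : 0 ≤ M₃ + (u y₁ - c) ^ (γ - 1) * |φ y₁| + |φ z| + |φ' z| := by
    have h1 : 0 ≤ (u y₁ - c) ^ (γ - 1) * |φ y₁| :=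
      mul_nonneg (Real.rpow_pos_of_pos hc0 _).le (abs_nonneg _)
    linarith [abs_nonneg (φ z), abs_nonneg (φ' z), hM₃0]
  have hE : (0:ℝ) ≤ c₃ / (k * (1 - γ)) + 1 + W ^ γ / k := by
    have h1 : 0 ≤ c₃ / (k * (1 - γ)) := div_nonneg hc₃pos.le (by nlinarith)
    have h2 : 0 ≤ W ^ γ / k := div_nonneg (Real.rpow_pos_of_pos hW0 _).le hkpos.le
    linarith
  apply supAbs_le (mul_nonneg hE hparen)
  intro y hyy
  have hpos := hwpos y hyy
  have hργ : (0:ℝ) < (u y - c) ^ (γ - 1) := Real.rpow_pos_of_pos hpos _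
  have habs : |(u y - c) ^ (γ - 1) * φ y| = (u y - c) ^ (γ - 1) * |φ y| := by
    rw [abs_mul, abs_of_pos hργ]
  rw [habs]
  have hb := hbd y hyy
  have hT1 : (u y - c) ^ (γ - 1) ≤ (u y₁ - c) ^ (γ - 1) := by
    apply Real.rpow_le_rpow_of_nonpos hc0 ?_ (by linarith)
    have h := hwlow y hyy
    nlinarith [hyy.1, hkpos]
  have hywk : y - y₁ ≤ (u y - c) * (1 / k) := by
    rw [mul_one_div, le_div_iff₀ hkpos]
    have h := hwlow y hyy
    nlinarith [hc0]
  have hT2 : (u y - c) ^ (γ - 1) * (y - y₁) ≤ W ^ γ / k := by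
    have h1 : (u y - c) ^ (γ - 1) * (y - y₁) ≤ (u y - c) ^ (γ - 1) * ((u y - c) * (1 / k)) :=
      mul_le_mul_of_nonneg_left hywk hργ.le
    have h2 : (u y - c) ^ (γ - 1) * ((u y - c) * (1 / k)) = (u y - c) ^ γ * (1 / k) := by
      rw [← mul_assoc]
      congr 1
      nth_rewrite 2 [← Real.rpow_one (u y - c)]
      rw [← Real.rpow_add hpos, sub_add_cancel]
    have h3 : (u y - c) ^ γ ≤ W ^ γ := Real.rpow_le_rpow hpos.le (hwW y hyy) hγ0.le
    calc (u y - c) ^ (γ - 1) * (y - y₁) ≤ (u y - c) ^ γ * (1 / k) := by rw [← h2]; exact h1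
      _ ≤ W ^ γ * (1 / k) := mul_le_mul_of_nonneg_right h3 (by positivity)
      _ = W ^ γ / k := by rw [mul_one_div]
  have hT3 : (u y - c) ^ (γ - 1) * (u y - c) ^ (1 - γ) = 1 := by
    rw [← Real.rpow_add hpos, show γ - 1 + (1 - γ) = 0 by ring, Real.rpow_zero]
  calc (u y - c) ^ (γ - 1) * |φ y|
      ≤ (u y - c) ^ (γ - 1) * (|φ y₁| + (y - y₁) * |φ' z|
          + M₃ * c₃ * ((u y - c) ^ (1 - γ) / (k * (1 - γ)))) :=
        mul_le_mul_of_nonneg_left hb hργ.le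
    _ = (u y - c) ^ (γ - 1) * |φ y₁| + ((u y - c) ^ (γ - 1) * (y - y₁)) * |φ' z|
          + (M₃ * (c₃ / (k * (1 - γ)))) * ((u y - c) ^ (γ - 1) * (u y - c) ^ (1 - γ)) := by
        ring
    _ = (u y - c) ^ (γ - 1) * |φ y₁| + ((u y - c) ^ (γ - 1) * (y - y₁)) * |φ' z|
          + (c₃ / (k * (1 - γ))) * M₃ := by rw [hT3]; ring
    _ ≤ (u y₁ - c) ^ (γ - 1) * |φ y₁| + (W ^ γ / k) * |φ' z| + (c₃ / (k * (1 - γ))) * M₃ := by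
        have h1 := mul_le_mul_of_nonneg_right hT1 (abs_nonneg (φ y₁))
        have h2 := mul_le_mul_of_nonneg_right hT2 (abs_nonneg (φ' z))
        linarith
    _ = (c₃ / (k * (1 - γ))) * M₃ + 1 * ((u y₁ - c) ^ (γ - 1) * |φ y₁|)
          + 0 * |φ z| + (W ^ γ / k) * |φ' z| := by ring
    _ ≤ _ := by
        have h1 : 0 ≤ c₃ / (k * (1 - γ)) := div_nonneg hc₃pos.le (by nlinarith)
        have h2 : 0 ≤ W ^ γ / k := div_nonneg (Real.rpow_pos_of_pos hW0 _).le hkpos.le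
        apply combo4
        · linarith
        · linarith
        · linarith
        · linarith
        · exact hM₃0
        · exact mul_nonneg (Real.rpow_pos_of_pos hc0 _).le (abs_nonneg _)
        · exact abs_nonneg _
        · exact abs_nonneg _

set_option maxHeartbeats 1000000 in
/-- Estimate (4). -/
lemma est_four (y₁ z δ δ₁ c k γ cL1 : ℝ) (u φ φ' F : ℝ → ℝ)
    (hγ0 : 0 < γ) (hγ : γ ≤ 1 / 2) (hkpos : 0 < k) (hδpos : 0 < δ)
    (hδ₁0 : 0 < δ₁) (hδ₁δ : δ₁ ≤ δ) (hzdef : z = y₁ + δ₁) (hc0 : 0 < u y₁ - c)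
    (hcL1pos : 0 < cL1)
    (hwlow : ∀ y ∈ Set.Icc y₁ z, u y₁ - c + k * (y - y₁) ≤ u y - c)
    (huc : ContinuousOn u (Set.Icc y₁ z))
    (hwpos : ∀ y ∈ Set.Icc y₁ z, 0 < u y - c)
    (hφ1 : ∀ y ∈ Set.Icc y₁ z, HasDerivWithinAt φ (φ' y) (Set.Icc y₁ z) y)
    (hφ2 : ∀ y ∈ Set.Icc y₁ z, HasDerivWithinAt φ' (F y) (Set.Icc y₁ z) y)
    (hFc : ContinuousOn F (Set.Icc y₁ z))
    (hIγ : ∀ a b, a ∈ Set.Icc y₁ z → b ∈ Set.Icc y₁ z → a ≤ b →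
      ∫ t in a..b, (u t - c) ^ (γ - 1) ≤ cL1 * δ₁ ^ γ) :
    supAbs y₁ z (fun y => (u y - c)⁻¹ * φ y) ≤
      (cL1 / k + 1 + 1 / k) *
        (δ₁ ^ γ * supAbs y₁ z (fun y => (u y - c) ^ ((1:ℝ) - γ) * F y)
          + (u y₁ - c)⁻¹ * |φ y₁| + |φ' z|) := by
  have hzle : y₁ ≤ z := by rw [hzdef]; linarith
  have hzmemI : z ∈ Set.Icc y₁ z := ⟨hzle, le_refl _⟩
  have hδ₁γ : (0:ℝ) < δ₁ ^ γ := Real.rpow_pos_of_pos hδ₁0 _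
  have hφ'c : ContinuousOn φ' (Set.Icc y₁ z) := fun x hx => (hφ2 x hx).continuousWithinAt
  have hwρ : ∀ ν : ℝ, ContinuousOn (fun t => (u t - c) ^ ν) (Set.Icc y₁ z) :=
    fun ν => (huc.sub continuousOn_const).rpow_const (fun t ht => Or.inl (hwpos t ht).ne')
  set M₄ := supAbs y₁ z (fun y => (u y - c) ^ ((1:ℝ) - γ) * F y) with hM₄def
  have hM₄0 : 0 ≤ M₄ := supAbs_nonneg _ _ _
  have hF4 : ∀ t ∈ Set.Icc y₁ z, |F t| ≤ M₄ * (u t - c) ^ (γ - 1) := by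
    intro t ht
    have h := F_weighted y₁ z c (1 - γ) u F hwpos huc hFc t ht
    rw [show -(1 - γ) = γ - 1 by ring] at h
    exact h
  have hG4c : ContinuousOn (fun t => M₄ * (u t - c) ^ (γ - 1)) (Set.Icc y₁ z) :=
    continuousOn_const.mul (hwρ (γ - 1))
  have hφ'4 : ∀ t ∈ Set.Icc y₁ z, |φ' t| ≤ |φ' z| + M₄ * (cL1 * δ₁ ^ γ) := by
    intro t ht
    have h := phiD_bound y₁ z φ' F _ hφ2 hFc hG4c hF4 t ht
    rw [intervalIntegral.integral_const_mul] at h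
    refine h.trans (add_le_add_right ?_ _)
    exact mul_le_mul_of_nonneg_left (hIγ t z ht hzmemI ht.2) hM₄0
  have hbd : ∀ y ∈ Set.Icc y₁ z, |φ y| ≤ |φ y₁| + (y - y₁) * (|φ' z| + M₄ * (cL1 * δ₁ ^ γ)) := by
    intro y hyy
    have h1 := phi_rep_left y₁ z φ φ' hφ1 hφ'c y hyy
    have hIcc : Set.Icc y₁ y ⊆ Set.Icc y₁ z := Set.Icc_subset_Icc (le_refl _) hyy.2
    have h2 : ∫ t in y₁..y, |φ' t| ≤ ∫ t in y₁..y, (|φ' z| + M₄ * (cL1 * δ₁ ^ γ)) := by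
      apply intervalIntegral.integral_mono_on hyy.1
        ((hφ'c.mono hIcc).abs.intervalIntegrable_of_Icc hyy.1)
        (_root_.intervalIntegrable_const)
      intro t ht; exact hφ'4 t (hIcc ht)
    rw [intervalIntegral.integral_const, smul_eq_mul] at h2
    linarith
  have hparen : 0 ≤ δ₁ ^ γ * M₄ + (u y₁ - c)⁻¹ * |φ y₁| + |φ' z| := by
    have h1 : 0 ≤ δ₁ ^ γ * M₄ := mul_nonneg hδ₁γ.le hM₄0
    have h2 : 0 ≤ (u y₁ - c)⁻¹ * |φ y₁| := mul_nonneg (inv_pos.2 hc0).le (abs_nonneg _)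
    linarith [abs_nonneg (φ' z)]
  have hE4 : (0:ℝ) ≤ cL1 / k + 1 + 1 / k := by
    have := div_nonneg hcL1pos.le hkpos.le
    have := one_div_pos.2 hkpos
    linarith
  apply supAbs_le (mul_nonneg hE4 hparen)
  intro y hyy
  have hpos := hwpos y hyy
  have hb := hbd y hyy
  have habs : |(u y - c)⁻¹ * φ y| = (u y - c)⁻¹ * |φ y| := by
    rw [abs_mul, abs_of_pos (inv_pos.2 hpos)]
  rw [habs]
  have hinv : (u y - c)⁻¹ ≤ (u y₁ - c)⁻¹ := by
    have hwge : u y₁ - c ≤ u y - c := by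
      have h := hwlow y hyy
      nlinarith [hyy.1, hkpos]
    have h := one_div_le_one_div_of_le hc0 hwge
    rw [one_div, one_div] at h
    exact h
  have hky : k * (y - y₁) ≤ u y - c := by
    have h := hwlow y hyy
    linarith
  have hyy₁ : 0 ≤ y - y₁ := by linarith [hyy.1]
  have hinvk : (u y - c)⁻¹ * (y - y₁) ≤ 1 / k := by
    have h1 : y - y₁ ≤ (u y - c) * (1 / k) := by
      rw [mul_one_div, le_div_iff₀ hkpos]; linarith
    calc (u y - c)⁻¹ * (y - y₁) ≤ (u y - c)⁻¹ * ((u y - c) * (1 / k)) :=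
          mul_le_mul_of_nonneg_left h1 (inv_pos.2 hpos).le
      _ = 1 / k := by field_simp
  calc (u y - c)⁻¹ * |φ y|
      ≤ (u y - c)⁻¹ * (|φ y₁| + (y - y₁) * (|φ' z| + M₄ * (cL1 * δ₁ ^ γ))) :=
        mul_le_mul_of_nonneg_left hb (inv_pos.2 hpos).le
    _ = (u y - c)⁻¹ * |φ y₁| + ((u y - c)⁻¹ * (y - y₁)) * (|φ' z| + M₄ * (cL1 * δ₁ ^ γ)) := by
        ring
    _ ≤ (u y₁ - c)⁻¹ * |φ y₁| + (1 / k) * (|φ' z| + M₄ * (cL1 * δ₁ ^ γ)) := by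
        apply add_le_add
        · exact mul_le_mul_of_nonneg_right hinv (abs_nonneg _)
        · apply mul_le_mul_of_nonneg_right hinvk
          have h1 : 0 ≤ M₄ * (cL1 * δ₁ ^ γ) :=
            mul_nonneg hM₄0 (mul_nonneg hcL1pos.le hδ₁γ.le)
          linarith [abs_nonneg (φ' z)]
    _ = (cL1 / k) * (δ₁ ^ γ * M₄) + 1 * ((u y₁ - c)⁻¹ * |φ y₁|) + (1 / k) * |φ' z| := by
        ring
    _ ≤ (cL1 / k + 1 + 1 / k) * (δ₁ ^ γ * M₄ + (u y₁ - c)⁻¹ * |φ y₁| + |φ' z|) := by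
        have ha1 : 0 ≤ cL1 / k := div_nonneg hcL1pos.le hkpos.le
        have ha2 : (0:ℝ) < 1 / k := one_div_pos.2 hkpos
        apply combo3
        · linarith
        · linarith
        · linarith
        · exact mul_nonneg hδ₁γ.le hM₄0
        · exact mul_nonneg (inv_pos.2 hc0).le (abs_nonneg _)
        · exact abs_nonneg _

set_option maxHeartbeats 1000000 in
/-- **Lemma 4.3**: let `u ∈ C²([y₁,y₂])` with `u(y₁) = u_min` and `u'(y₁) ≠ 0`, and fix
`γ ∈ (0,1/2]`.  There are constants `C > 0` and `δ ∈ (0, y₂−y₁)` such that for every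
`δ₁ ∈ (0,δ]`, `z = y₁+δ₁`, every `c` with `0 < u_min − c < 1` and every `φ ∈ C²([y₁,z])`
with `φ'' = F`, the four weighted sup-norm estimates (1)–(4) hold. -/
theorem endpoint_sup_estimates
    (y₁ y₂ : ℝ) (hy : y₁ < y₂) (u u' u'' : ℝ → ℝ)
    (hu1 : ∀ y ∈ Set.Icc y₁ y₂, HasDerivWithinAt u (u' y) (Set.Icc y₁ y₂) y)
    (hu2 : ∀ y ∈ Set.Icc y₁ y₂, HasDerivWithinAt u' (u'' y) (Set.Icc y₁ y₂) y)
    (hu2c : ContinuousOn u'' (Set.Icc y₁ y₂))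
    (humin : ∀ y ∈ Set.Icc y₁ y₂, u y₁ ≤ u y)
    (hu'0 : u' y₁ ≠ 0)
    (γ : ℝ) (hγ0 : 0 < γ) (hγ : γ ≤ 1 / 2) :
    ∃ C : ℝ, 0 < C ∧ ∃ δ ∈ Set.Ioo (0 : ℝ) (y₂ - y₁), ∀ δ₁ ∈ Set.Ioc (0 : ℝ) δ,
      ∀ c : ℝ, 0 < u y₁ - c → u y₁ - c < 1 →
      ∀ φ φ' F : ℝ → ℝ,
        (∀ y ∈ Set.Icc y₁ (y₁ + δ₁),
          HasDerivWithinAt φ (φ' y) (Set.Icc y₁ (y₁ + δ₁)) y) →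
        (∀ y ∈ Set.Icc y₁ (y₁ + δ₁),
          HasDerivWithinAt φ' (F y) (Set.Icc y₁ (y₁ + δ₁)) y) →
        ContinuousOn F (Set.Icc y₁ (y₁ + δ₁)) →
        (supAbs y₁ (y₁ + δ₁) φ
            ≤ C * (δ₁ ^ γ * supAbs y₁ (y₁ + δ₁) (fun y => (u y - c) ^ ((2 : ℝ) - γ) * F y)
                + |φ (y₁ + δ₁)| + δ₁ ^ γ * |φ' (y₁ + δ₁)|)) ∧
        (supAbs y₁ (y₁ + δ₁) (fun y => (u y - c) ^ ((1 : ℝ) - γ) * φ y)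
            + δ₁ ^ γ * supAbs y₁ (y₁ + δ₁) (fun y => (u y - c) ^ ((2 : ℝ) - 2 * γ) * φ' y)
            ≤ C * (δ₁ ^ γ * supAbs y₁ (y₁ + δ₁)
                    (fun y => (u y - c) ^ ((3 : ℝ) - 2 * γ) * F y)
                + |φ (y₁ + δ₁)| + δ₁ ^ γ * |φ' (y₁ + δ₁)|)) ∧
        (supAbs y₁ (y₁ + δ₁) (fun y => (u y - c) ^ (γ - 1) * φ y)
            ≤ C * (supAbs y₁ (y₁ + δ₁) (fun y => (u y - c) ^ (γ + 1) * F y)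
                + (u y₁ - c) ^ (γ - 1) * |φ y₁|
                + |φ (y₁ + δ₁)| + |φ' (y₁ + δ₁)|)) ∧
        (supAbs y₁ (y₁ + δ₁) (fun y => (u y - c)⁻¹ * φ y)
            ≤ C * (δ₁ ^ γ * supAbs y₁ (y₁ + δ₁) (fun y => (u y - c) ^ ((1 : ℝ) - γ) * F y)
                + (u y₁ - c)⁻¹ * |φ y₁| + |φ' (y₁ + δ₁)|)) := by
  -- continuity of u and u'
  have hu'c : ContinuousOn u' (Set.Icc y₁ y₂) := fun x hx => (hu2 x hx).continuousWithinAt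
  have huc : ContinuousOn u (Set.Icc y₁ y₂) := fun x hx => (hu1 x hx).continuousWithinAt
  -- u' y₁ > 0
  have hk0 : 0 < u' y₁ := by
    have h0 : 0 ≤ u' y₁ := by
      have hslope : Filter.Tendsto (slope u y₁) (nhdsWithin y₁ (Set.Ioc y₁ y₂))
          (nhds (u' y₁)) := by
        have h := (hasDerivWithinAt_iff_tendsto_slope).1 (hu1 y₁ ⟨le_refl _, hy.le⟩)
        exact h.mono_left (nhdsWithin_mono _ (fun t ht => ⟨⟨ht.1.le, ht.2⟩, ne_of_gt ht.1⟩))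
      haveI hne : (nhdsWithin y₁ (Set.Ioc y₁ y₂)).NeBot := by
        rw [← mem_closure_iff_nhdsWithin_neBot, closure_Ioc hy.ne]
        exact ⟨le_refl _, hy.le⟩
      refine ge_of_tendsto hslope ?_
      filter_upwards [self_mem_nhdsWithin] with t ht
      rw [slope_def_field]
      exact div_nonneg (sub_nonneg.2 (humin t ⟨ht.1.le, ht.2⟩)) (sub_nonneg.2 ht.1.le)
    exact lt_of_le_of_ne h0 (Ne.symm hu'0)
  set k := u' y₁ / 2 with hkdef
  have hkpos : 0 < k := half_pos hk0
  have hcw : ContinuousWithinAt u' (Set.Icc y₁ y₂) y₁ := hu'c y₁ ⟨le_refl _, hy.le⟩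
  rw [Metric.continuousWithinAt_iff] at hcw
  obtain ⟨δ₀, hδ₀, hδ₀'⟩ := hcw k hkpos
  set δ := min (δ₀ / 2) ((y₂ - y₁) / 2) with hδdef
  have hδpos : 0 < δ := lt_min (half_pos hδ₀) (half_pos (sub_pos.2 hy))
  have hδlt : δ < y₂ - y₁ := lt_of_le_of_lt (min_le_right _ _) (half_lt_self (sub_pos.2 hy))
  have hsub : Set.Icc y₁ (y₁ + δ) ⊆ Set.Icc y₁ y₂ := Set.Icc_subset_Icc_right (by linarith)
  have hu'bd : ∀ y ∈ Set.Icc y₁ (y₁ + δ), k ≤ u' y ∧ u' y ≤ 3 * k := by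
    intro y hyy
    have h1 : dist y y₁ < δ₀ := by
      rw [Real.dist_eq, abs_of_nonneg (by linarith [hyy.1])]
      have h2 := hyy.2
      have h3 : δ ≤ δ₀ / 2 := min_le_left _ _
      linarith
    have h2 := hδ₀' (hsub hyy) h1
    rw [Real.dist_eq] at h2
    have h3 := abs_lt.1 h2
    have h4 : u' y₁ = 2 * k := by rw [hkdef]; ring
    exact ⟨by linarith [h3.1], by linarith [h3.2]⟩
  have hincr : ∀ a b, y₁ ≤ a → a ≤ b → b ≤ y₁ + δ →
      k * (b - a) ≤ u b - u a ∧ u b - u a ≤ 3 * k * (b - a) := by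
    intro a b ha hab hb
    have hsub2 : Set.Icc a b ⊆ Set.Icc y₁ (y₁ + δ) := Set.Icc_subset_Icc ha hb
    have hmem : ∀ t ∈ Set.Icc a b, t ∈ Set.Icc y₁ y₂ := fun t ht => hsub (hsub2 ht)
    have hftc : ∫ t in a..b, u' t = u b - u a :=
      ftc_icc hab (fun x hx => (hu1 x (hmem x hx)).mono (fun t ht => hmem t ht))
        (hu'c.mono hmem)
    have hint : IntervalIntegrable u' MeasureTheory.volume a b :=
      (hu'c.mono hmem).intervalIntegrable_of_Icc hab
    constructor
    · have h := intervalIntegral.integral_mono_on hab (_root_.intervalIntegrable_const (c := k))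
        hint (fun x hx => (hu'bd x (hsub2 hx)).1)
      rw [intervalIntegral.integral_const, smul_eq_mul] at h
      rw [← hftc]; linarith
    · have h := intervalIntegral.integral_mono_on hab hint
        (_root_.intervalIntegrable_const (c := 3 * k)) (fun x hx => (hu'bd x (hsub2 hx)).2)
      rw [intervalIntegral.integral_const, smul_eq_mul] at h
      rw [← hftc]; linarith
  -- the constants
  obtain ⟨cL1, hcL1def⟩ : ∃ x : ℝ, x = max 1 ((1 + k) ^ γ / (k * γ)) := ⟨_, rfl⟩
  have hcL1pos : (0:ℝ) < cL1 := by rw [hcL1def]; exact lt_of_lt_of_le one_pos (le_max_left _ _)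
  obtain ⟨W, hWdef⟩ : ∃ x : ℝ, x = 1 + 3 * k * δ := ⟨_, rfl⟩
  have hW0 : (0:ℝ) < W := by rw [hWdef]; nlinarith
  obtain ⟨c₁, hc₁def⟩ : ∃ x : ℝ, x = (3:ℝ) ^ ((1:ℝ) - γ) / (k * (1 - γ)) := ⟨_, rfl⟩
  have hc₁pos : 0 < c₁ := by
    rw [hc₁def]
    exact div_pos (Real.rpow_pos_of_pos three_pos _) (mul_pos hkpos (by linarith))
  obtain ⟨c₂, hc₂def⟩ : ∃ x : ℝ, x = (3:ℝ) ^ ((2:ℝ) - 2 * γ) / (k * (2 - 2 * γ)) := ⟨_, rfl⟩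
  have hc₂pos : 0 < c₂ := by
    rw [hc₂def]
    exact div_pos (Real.rpow_pos_of_pos three_pos _) (mul_pos hkpos (by linarith))
  obtain ⟨c₃, hc₃def⟩ : ∃ x : ℝ, x = (3:ℝ) ^ γ / (k * γ) := ⟨_, rfl⟩
  have hc₃pos : 0 < c₃ := by
    rw [hc₃def]
    exact div_pos (Real.rpow_pos_of_pos three_pos _) (mul_pos hkpos hγ0)
  obtain ⟨E₁, hE₁def⟩ : ∃ x : ℝ, x = max 1 (max (δ ^ ((1:ℝ) - γ)) (c₁ * cL1)) := ⟨_, rfl⟩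
  obtain ⟨E₂, hE₂def⟩ : ∃ x : ℝ, x = (c₂ * cL1 + c₂) + W ^ ((1:ℝ) - γ)
      + (W ^ ((1:ℝ) - γ) * δ ^ ((1:ℝ) - γ) + W ^ ((2:ℝ) - 2 * γ)) := ⟨_, rfl⟩
  obtain ⟨E₃, hE₃def⟩ : ∃ x : ℝ, x = c₃ / (k * (1 - γ)) + 1 + W ^ γ / k := ⟨_, rfl⟩
  obtain ⟨E₄, hE₄def⟩ : ∃ x : ℝ, x = cL1 / k + 1 + 1 / k := ⟨_, rfl⟩
  have hE₁1 : 1 ≤ E₁ := by rw [hE₁def]; exact le_max_left _ _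
  have hE₂0 : 0 ≤ E₂ := by
    rw [hE₂def]
    have h1 := mul_nonneg hc₂pos.le hcL1pos.le
    have h2 : (0:ℝ) ≤ W ^ ((1:ℝ) - γ) := (Real.rpow_pos_of_pos hW0 _).le
    have h3 : (0:ℝ) ≤ W ^ ((2:ℝ) - 2 * γ) := (Real.rpow_pos_of_pos hW0 _).le
    have h4 : (0:ℝ) ≤ δ ^ ((1:ℝ) - γ) := (Real.rpow_pos_of_pos hδpos _).le
    nlinarith [mul_nonneg h2 h4, hc₂pos.le]
  have hE₃0 : 0 ≤ E₃ := by
    rw [hE₃def]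
    have h1 : 0 ≤ c₃ / (k * (1 - γ)) := div_nonneg hc₃pos.le (by nlinarith)
    have h2 : 0 ≤ W ^ γ / k := div_nonneg (Real.rpow_pos_of_pos hW0 _).le hkpos.le
    linarith
  have hE₄0 : 0 ≤ E₄ := by
    rw [hE₄def]
    have h1 := div_nonneg hcL1pos.le hkpos.le
    have h2 := one_div_pos.2 hkpos
    linarith
  refine ⟨E₁ + E₂ + E₃ + E₄, by linarith, δ, ⟨hδpos, hδlt⟩, ?_⟩
  intro δ₁ hδ₁ c hc0 hc1 φ φ' F hφ1 hφ2 hFc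
  obtain ⟨hδ₁0, hδ₁δ⟩ := hδ₁
  -- basic facts about u on [y₁, y₁+δ₁]
  have hsubδ : Set.Icc y₁ (y₁ + δ₁) ⊆ Set.Icc y₁ y₂ :=
    Set.Icc_subset_Icc_right (by linarith)
  have huc_z : ContinuousOn u (Set.Icc y₁ (y₁ + δ₁)) := huc.mono hsubδ
  have hzmem : ∀ y ∈ Set.Icc y₁ (y₁ + δ₁), y₁ ≤ y ∧ y ≤ y₁ + δ := by
    intro y hyy; exact ⟨hyy.1, by linarith [hyy.2]⟩
  have hwlow : ∀ y ∈ Set.Icc y₁ (y₁ + δ₁), u y₁ - c + k * (y - y₁) ≤ u y - c := by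
    intro y hyy
    have h := (hincr y₁ y (le_refl _) (hzmem y hyy).1 (hzmem y hyy).2).1
    linarith
  have hwup : ∀ y ∈ Set.Icc y₁ (y₁ + δ₁), u y - c ≤ u y₁ - c + 3 * k * (y - y₁) := by
    intro y hyy
    have h := (hincr y₁ y (le_refl _) (hzmem y hyy).1 (hzmem y hyy).2).2
    linarith
  have hwpos : ∀ y ∈ Set.Icc y₁ (y₁ + δ₁), 0 < u y - c := by
    intro y hyy
    have h := hwlow y hyy
    nlinarith [hyy.1]
  have hwmono : ∀ a ∈ Set.Icc y₁ (y₁ + δ₁), ∀ b ∈ Set.Icc y₁ (y₁ + δ₁), a ≤ b →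
      u a - c ≤ u b - c := by
    intro a ha b hb hab
    have h := (hincr a b ha.1 hab (hzmem b hb).2).1
    nlinarith
  have hwW : ∀ y ∈ Set.Icc y₁ (y₁ + δ₁), u y - c ≤ W := by
    intro y hyy
    have h1 := hwup y hyy
    have h2 := (hzmem y hyy).2
    have h3 := hyy.1
    rw [hWdef]
    nlinarith
  -- integral bounds
  have hIneg' : ∀ ν : ℝ, ν + 1 < 0 → ∀ a b, a ∈ Set.Icc y₁ (y₁ + δ₁) →
      b ∈ Set.Icc y₁ (y₁ + δ₁) → a ≤ b →
      ∫ t in a..b, (u t - c) ^ ν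
        ≤ (3:ℝ) ^ (-(ν + 1)) / (k * (-(ν + 1))) * (u a - c) ^ (ν + 1) :=
    fun ν hν a b ha hb hab =>
      int_neg y₁ (y₁ + δ₁) c k ν a b u hkpos hc0 huc_z hwlow hwup hwpos hν ha hb hab
  have hIpos' : ∀ ν : ℝ, ν ≤ 0 → 0 < ν + 1 → ∀ a b, a ∈ Set.Icc y₁ (y₁ + δ₁) →
      b ∈ Set.Icc y₁ (y₁ + δ₁) → a ≤ b →
      ∫ t in a..b, (u t - c) ^ ν ≤ (u b - c) ^ (ν + 1) / (k * (ν + 1)) :=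
    fun ν hν hν1 a b ha hb hab =>
      int_pos y₁ (y₁ + δ₁) c k ν a b u hkpos hc0 huc_z hwlow hwpos hν hν1 ha hb hab
  have hIγ' : ∀ a b, a ∈ Set.Icc y₁ (y₁ + δ₁) → b ∈ Set.Icc y₁ (y₁ + δ₁) → a ≤ b →
      ∫ t in a..b, (u t - c) ^ (γ - 1) ≤ cL1 * δ₁ ^ γ := by
    intro a b ha hb hab
    rw [hcL1def]
    exact int_gamma y₁ (y₁ + δ₁) δ₁ c k γ a b u hkpos hc0 hγ0 (by linarith) hδ₁0 rfl
      huc_z hwlow hwpos ha hb hab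
  -- nonnegativity of right-hand sides
  have hδ₁γ : (0:ℝ) < δ₁ ^ γ := Real.rpow_pos_of_pos hδ₁0 _
  have hp1 : 0 ≤ δ₁ ^ γ * supAbs y₁ (y₁ + δ₁) (fun y => (u y - c) ^ ((2:ℝ) - γ) * F y)
      + |φ (y₁ + δ₁)| + δ₁ ^ γ * |φ' (y₁ + δ₁)| := by
    have h1 := mul_nonneg hδ₁γ.le
      (supAbs_nonneg y₁ (y₁ + δ₁) (fun y => (u y - c) ^ ((2:ℝ) - γ) * F y))
    have h2 := mul_nonneg hδ₁γ.le (abs_nonneg (φ' (y₁ + δ₁)))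
    linarith [abs_nonneg (φ (y₁ + δ₁))]
  have hp2 : 0 ≤ δ₁ ^ γ * supAbs y₁ (y₁ + δ₁) (fun y => (u y - c) ^ ((3:ℝ) - 2 * γ) * F y)
      + |φ (y₁ + δ₁)| + δ₁ ^ γ * |φ' (y₁ + δ₁)| := by
    have h1 := mul_nonneg hδ₁γ.le
      (supAbs_nonneg y₁ (y₁ + δ₁) (fun y => (u y - c) ^ ((3:ℝ) - 2 * γ) * F y))
    have h2 := mul_nonneg hδ₁γ.le (abs_nonneg (φ' (y₁ + δ₁)))
    linarith [abs_nonneg (φ (y₁ + δ₁))]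
  have hp3 : 0 ≤ supAbs y₁ (y₁ + δ₁) (fun y => (u y - c) ^ (γ + 1) * F y)
      + (u y₁ - c) ^ (γ - 1) * |φ y₁| + |φ (y₁ + δ₁)| + |φ' (y₁ + δ₁)| := by
    have h1 := supAbs_nonneg y₁ (y₁ + δ₁) (fun y => (u y - c) ^ (γ + 1) * F y)
    have h2 : 0 ≤ (u y₁ - c) ^ (γ - 1) * |φ y₁| :=
      mul_nonneg (Real.rpow_pos_of_pos hc0 _).le (abs_nonneg _)
    linarith [abs_nonneg (φ (y₁ + δ₁)), abs_nonneg (φ' (y₁ + δ₁))]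
  have hp4 : 0 ≤ δ₁ ^ γ * supAbs y₁ (y₁ + δ₁) (fun y => (u y - c) ^ ((1:ℝ) - γ) * F y)
      + (u y₁ - c)⁻¹ * |φ y₁| + |φ' (y₁ + δ₁)| := by
    have h1 := mul_nonneg hδ₁γ.le
      (supAbs_nonneg y₁ (y₁ + δ₁) (fun y => (u y - c) ^ ((1:ℝ) - γ) * F y))
    have h2 : 0 ≤ (u y₁ - c)⁻¹ * |φ y₁| := mul_nonneg (inv_pos.2 hc0).le (abs_nonneg _)
    linarith [abs_nonneg (φ' (y₁ + δ₁))]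
  refine ⟨?_, ?_, ?_, ?_⟩
  · have h := est_one y₁ (y₁ + δ₁) δ δ₁ c k γ cL1 c₁ u φ φ' F hγ0 hγ hkpos hδpos
      hδ₁0 hδ₁δ rfl hcL1pos hc₁def huc_z hwpos hφ1 hφ2 hFc hIneg' hIγ'
    refine h.trans (mul_le_mul_of_nonneg_right ?_ hp1)
    rw [← hE₁def]; linarith
  · have h := est_two y₁ (y₁ + δ₁) δ δ₁ c k γ cL1 c₂ W u φ φ' F hγ0 hγ hkpos hδpos
      hδ₁0 hδ₁δ rfl hcL1pos hc₂def hW0 hwW hwmono huc_z hwpos hφ1 hφ2 hFc hIneg' hIγ'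
    refine h.trans (mul_le_mul_of_nonneg_right ?_ hp2)
    rw [← hE₂def]; linarith
  · have h := est_three y₁ (y₁ + δ₁) δ δ₁ c k γ c₃ W u φ φ' F hγ0 hγ hkpos hδpos
      hδ₁0 hδ₁δ rfl hc0 hc₃def hW0 hwW hwlow huc_z hwpos hφ1 hφ2 hFc hIneg' hIpos'
    refine h.trans (mul_le_mul_of_nonneg_right ?_ hp3)
    rw [← hE₃def]; linarith
  · have h := est_four y₁ (y₁ + δ₁) δ δ₁ c k γ cL1 u φ φ' F hγ0 hγ hkpos hδpos
      hδ₁0 hδ₁δ rfl hc0 hcL1pos hwlow huc_z hwpos hφ1 hφ2 hFc hIγ'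
    refine h.trans (mul_le_mul_of_nonneg_right ?_ hp4)
    rw [← hE₄def]; linarith
end
end
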